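/- arXiv:1702.06666 — 4 statements merged into one kernel-verified Lean document; each statement's English description precedes it below -/
import Mathlib

section
/- The binomial-Eulerian polynomial Ã_n(t) := 1 + t · Σ_{m=1}^{n} C(n,m) A_m(t) is palindromic of degree n, i.e., its coefficient of t^j equals its coefficient of t^{n-j} for all 0 ≤ j ≤ n. -/
open Finset Polynomial

open scoped Classical

noncomputable section

/-- The value of `σ` at 0-based position `i`, as a natural number (0-based values). -/
def pv (n : ℕ) (σ : Equiv.Perm (Fin n)) (i : ℕ) : ℕ :=
  if h : i < n then (σ ⟨i, h⟩ : ℕ) else 0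

/-- Descent set of `σ` in 0-based positions: `i` with `σ(i) > σ(i+1)`. -/
def desSet (n : ℕ) (σ : Equiv.Perm (Fin n)) : Finset ℕ :=
  (Finset.range (n - 1)).filter fun i => pv n σ (i + 1) < pv n σ i

def desNum (n : ℕ) (σ : Equiv.Perm (Fin n)) : ℕ := (desSet n σ).card

/-- Major index: the sum of the (1-based) descent positions. -/
def majNum (n : ℕ) (σ : Equiv.Perm (Fin n)) : ℕ := ∑ i ∈ desSet n σ, (i + 1)

/-- Excedance number. -/
def excNum (n : ℕ) (σ : Equiv.Perm (Fin n)) : ℕ :=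
  ((Finset.range n).filter fun i => i < pv n σ i).card

/-- Inversion number. -/
def invNum (n : ℕ) (σ : Equiv.Perm (Fin n)) : ℕ :=
  (((Finset.range n) ×ˢ (Finset.range n)).filter fun p =>
    p.1 < p.2 ∧ pv n σ p.2 < pv n σ p.1).card

/-- `σ` has a double descent: `σ(i) > σ(i+1) > σ(i+2)` for some valid `i`. -/
def HasDoubleDescent (n : ℕ) (σ : Equiv.Perm (Fin n)) : Prop :=
  ∃ i, i + 2 < n ∧ pv n σ (i + 2) < pv n σ (i + 1) ∧ pv n σ (i + 1) < pv n σ i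

/-- `σ` has a final descent: `σ(n-1) > σ(n)` (1-based). -/
def HasFinalDescent (n : ℕ) (σ : Equiv.Perm (Fin n)) : Prop :=
  2 ≤ n ∧ pv n σ (n - 1) < pv n σ (n - 2)

/-- `σ` has an initial descent: `σ(1) > σ(2)` (1-based). -/
def HasInitialDescent (n : ℕ) (σ : Equiv.Perm (Fin n)) : Prop :=
  2 ≤ n ∧ pv n σ 1 < pv n σ 0

/-- The Eulerian polynomial `A_n(t) = ∑_{σ ∈ S_n} t^{des σ}`. -/
def eulerPoly (n : ℕ) : Polynomial ℤ :=
  ∑ σ : Equiv.Perm (Fin n), X ^ desNum n σ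

/-- The binomial-Eulerian polynomial `Ã_n(t) = 1 + t ∑_{m=1}^n C(n,m) A_m(t)`. -/
def binEulerPoly (n : ℕ) : Polynomial ℤ :=
  1 + X * ∑ m ∈ Finset.Icc 1 n, (n.choose m : Polynomial ℤ) * eulerPoly m


lemma pv_lt (n : ℕ) (σ : Equiv.Perm (Fin n)) {i : ℕ} (h : i < n) : pv n σ i < n := by
  simp only [pv, dif_pos h]
  exact (σ ⟨i, h⟩).isLt

lemma pv_inj (n : ℕ) (σ : Equiv.Perm (Fin n)) {i j : ℕ} (hi : i < n) (hj : j < n)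
    (h : pv n σ i = pv n σ j) : i = j := by
  simp only [pv, dif_pos hi, dif_pos hj] at h
  have := σ.injective (Fin.val_injective h)
  simpa [Fin.ext_iff] using this

lemma desSet_subset (n : ℕ) (σ : Equiv.Perm (Fin n)) : desSet n σ ⊆ Finset.range (n - 1) :=
  Finset.filter_subset _ _

lemma mem_desSet {n : ℕ} {σ : Equiv.Perm (Fin n)} {i : ℕ} :
    i ∈ desSet n σ ↔ i < n - 1 ∧ pv n σ (i + 1) < pv n σ i := by
  simp [desSet]

lemma desNum_le (n : ℕ) (σ : Equiv.Perm (Fin n)) : desNum n σ ≤ n - 1 := by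
  have := Finset.card_le_card (desSet_subset n σ)
  simpa [desNum] using this

lemma natDegree_eulerPoly_le (n : ℕ) : (eulerPoly n).natDegree ≤ n - 1 := by
  apply Polynomial.natDegree_sum_le_of_forall_le
  intro σ _
  exact (Polynomial.natDegree_X_pow_le _).trans (desNum_le n σ)

lemma eulerPoly_zero : eulerPoly 0 = 1 := by
  rw [eulerPoly]
  rw [Finset.sum_congr rfl (fun σ _ => by
    have : desNum 0 σ = 0 := Nat.le_zero.mp (desNum_le 0 σ)
    rw [this, pow_zero])]
  rw [Finset.sum_const]
  simp [Finset.card_univ, Fintype.card_perm]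

lemma eulerPoly_one : eulerPoly 1 = 1 := by
  rw [eulerPoly]
  rw [Finset.sum_congr rfl (fun σ _ => by
    have : desNum 1 σ = 0 := Nat.le_zero.mp (desNum_le 1 σ)
    rw [this, pow_zero])]
  rw [Finset.sum_const]
  simp [Finset.card_univ, Fintype.card_perm]


lemma pv_mul_revPerm (n : ℕ) (σ : Equiv.Perm (Fin n)) {i : ℕ} (h : i < n) :
    pv n (σ * Fin.revPerm) i = pv n σ (n - 1 - i) := by
  have h2 : n - 1 - i < n := by omega
  simp only [pv, dif_pos h, dif_pos h2]
  congr 1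
  show σ (Fin.revPerm ⟨i, h⟩) = _
  congr 1
  simp [Fin.ext_iff, Fin.rev]
  omega

lemma desSet_mul_revPerm (n : ℕ) (σ : Equiv.Perm (Fin n)) :
    desSet n (σ * Fin.revPerm) =
      ((Finset.range (n - 1)).filter (fun i => pv n σ i < pv n σ (i + 1))).image
        (fun i => n - 2 - i) := by
  ext i
  simp only [mem_desSet, Finset.mem_image, Finset.mem_filter, Finset.mem_range]
  constructor
  · rintro ⟨hi, hd⟩
    rw [pv_mul_revPerm n σ (by omega), pv_mul_revPerm n σ (by omega)] at hd
    refine ⟨n - 2 - i, ⟨by omega, ?_⟩, by omega⟩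
    have e1 : n - 1 - (i+1) = n - 2 - i := by omega
    have e2 : n - 1 - i = (n - 2 - i) + 1 := by omega
    rw [e1, e2] at hd
    exact hd
  · rintro ⟨j, ⟨hj, ha⟩, rfl⟩
    refine ⟨by omega, ?_⟩
    rw [pv_mul_revPerm n σ (by omega), pv_mul_revPerm n σ (by omega)]
    have e1 : n - 1 - (n - 2 - j + 1) = j := by omega
    have e2 : n - 1 - (n - 2 - j) = j + 1 := by omega
    rw [e1, e2]
    exact ha

lemma desNum_mul_revPerm (n : ℕ) (σ : Equiv.Perm (Fin n)) :
    desNum n (σ * Fin.revPerm) = n - 1 - desNum n σ := by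
  rw [desNum, desSet_mul_revPerm]
  rw [Finset.card_image_of_injOn (fun a ha b hb hab => by
    simp only [Finset.mem_coe, Finset.mem_filter, Finset.mem_range] at ha hb
    omega)]
  have hsplit : (Finset.range (n - 1)).filter (fun i => pv n σ i < pv n σ (i + 1)) =
      Finset.range (n - 1) \ desSet n σ := by
    ext i
    simp only [Finset.mem_filter, Finset.mem_range, Finset.mem_sdiff, mem_desSet]
    constructor
    · rintro ⟨hi, ha⟩
      exact ⟨hi, fun ⟨_, hd⟩ => absurd (lt_trans ha hd) (lt_irrefl _)⟩
    · rintro ⟨hi, hnd⟩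
      refine ⟨hi, ?_⟩
      rcases lt_trichotomy (pv n σ i) (pv n σ (i+1)) with h | h | h
      · exact h
      · exact absurd (pv_inj n σ (by omega) (by omega) h) (by omega)
      · exact absurd ⟨hi, h⟩ hnd
  rw [hsplit, Finset.card_sdiff_of_subset (desSet_subset n σ), Finset.card_range]
  rfl

lemma reflect_eulerPoly (m : ℕ) (hm : 1 ≤ m) :
    Polynomial.reflect m (eulerPoly m) = X * eulerPoly m := by
  have hrefl : ∀ (s : Finset (Equiv.Perm (Fin m))),
      Polynomial.reflect m (∑ σ ∈ s, (X : Polynomial ℤ) ^ desNum m σ) =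
        ∑ σ ∈ s, (X : Polynomial ℤ) ^ (m - desNum m σ) := by
    intro s
    induction s using Finset.induction_on with
    | empty => simp
    | insert _ _ h ih =>
      rw [Finset.sum_insert h, Finset.sum_insert h, Polynomial.reflect_add,
        Polynomial.reflect_monomial, ih, Polynomial.revAt_le ((desNum_le m _).trans (by omega))]
  rw [eulerPoly, hrefl]
  rw [← Equiv.sum_comp (Equiv.mulRight (Fin.revPerm : Equiv.Perm (Fin m)))
    (fun σ => (X : Polynomial ℤ) ^ (m - desNum m σ))]
  rw [Finset.mul_sum]
  apply Finset.sum_congr rfl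
  intro σ _
  have h1 : desNum m (Equiv.mulRight Fin.revPerm σ) = m - 1 - desNum m σ := by
    exact desNum_mul_revPerm m σ
  rw [h1]
  have h2 : desNum m σ ≤ m - 1 := desNum_le m σ
  have : m - (m - 1 - desNum m σ) = desNum m σ + 1 := by omega
  rw [this, pow_succ, mul_comm]
/-! ### Insertion of the maximal value -/

def insFun (n : ℕ) (σ : Equiv.Perm (Fin n)) (p : Fin (n + 1)) : Fin (n + 1) → Fin (n + 1) :=
  fun i =>
    if h : (i : ℕ) < (p : ℕ) then
      (σ ⟨i, by have := p.isLt; omega⟩).castSucc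
    else if h2 : (i : ℕ) = (p : ℕ) then Fin.last n
    else (σ ⟨(i : ℕ) - 1, by have := i.isLt; omega⟩).castSucc

lemma insFun_inj (n : ℕ) (σ : Equiv.Perm (Fin n)) (p : Fin (n + 1)) :
    Function.Injective (insFun n σ p) := by
  intro a b hab
  have hv := congrArg Fin.val hab
  unfold insFun at hv
  split_ifs at hv with h1 h2 h3 h4 h5 h6 <;>
    simp only [Fin.coe_castSucc, Fin.val_last] at hv
  · have h8 : (a : ℕ) = (b : ℕ) := by have h9 := σ.injective (Fin.val_injective hv); rw [Fin.mk.injEq] at h9; exact h9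
    exact Fin.ext h8
  · exact absurd hv (Nat.ne_of_lt (Fin.is_lt _))
  · have h8 : (a : ℕ) = (b : ℕ) - 1 := by have h9 := σ.injective (Fin.val_injective hv); rw [Fin.mk.injEq] at h9; exact h9
    exact Fin.ext (by omega)
  · exact absurd hv.symm (Nat.ne_of_lt (Fin.is_lt _))
  · exact Fin.ext (by omega)
  · exact absurd hv.symm (Nat.ne_of_lt (Fin.is_lt _))
  · have h8 : (a : ℕ) - 1 = (b : ℕ) := by have h9 := σ.injective (Fin.val_injective hv); rw [Fin.mk.injEq] at h9; exact h9
    exact Fin.ext (by omega)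
  · exact absurd hv (Nat.ne_of_lt (Fin.is_lt _))
  · have h8 : (a : ℕ) - 1 = (b : ℕ) - 1 := by have h9 := σ.injective (Fin.val_injective hv); rw [Fin.mk.injEq] at h9; exact h9
    exact Fin.ext (by omega)

def insPerm (n : ℕ) (σ : Equiv.Perm (Fin n)) (p : Fin (n + 1)) : Equiv.Perm (Fin (n + 1)) :=
  Equiv.ofBijective _ (Finite.injective_iff_bijective.mp (insFun_inj n σ p))

lemma insPerm_apply (n : ℕ) (σ : Equiv.Perm (Fin n)) (p : Fin (n + 1)) (i : Fin (n + 1)) :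
    insPerm n σ p i = insFun n σ p i := rfl

lemma pv_insPerm_lt (n : ℕ) (σ : Equiv.Perm (Fin n)) (p : Fin (n + 1)) {i : ℕ}
    (h : i < (p : ℕ)) : pv (n + 1) (insPerm n σ p) i = pv n σ i := by
  have hi : i < n + 1 := by have := p.isLt; omega
  have hin : i < n := by have := p.isLt; omega
  simp only [pv, dif_pos hi, dif_pos hin]
  rw [insPerm_apply]
  unfold insFun
  rw [dif_pos (show ((⟨i, hi⟩ : Fin (n+1)) : ℕ) < (p : ℕ) from h)]
  simp

lemma pv_insPerm_eq (n : ℕ) (σ : Equiv.Perm (Fin n)) (p : Fin (n + 1)) :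
    pv (n + 1) (insPerm n σ p) (p : ℕ) = n := by
  have hi : (p : ℕ) < n + 1 := p.isLt
  simp only [pv, dif_pos hi]
  rw [insPerm_apply]
  unfold insFun
  rw [dif_neg (show ¬((⟨(p : ℕ), hi⟩ : Fin (n+1)) : ℕ) < (p : ℕ) from lt_irrefl _),
    dif_pos (show ((⟨(p : ℕ), hi⟩ : Fin (n+1)) : ℕ) = (p : ℕ) from rfl)]
  simp

lemma pv_insPerm_gt (n : ℕ) (σ : Equiv.Perm (Fin n)) (p : Fin (n + 1)) {i : ℕ}
    (h : (p : ℕ) < i) (hi : i ≤ n) : pv (n + 1) (insPerm n σ p) i = pv n σ (i - 1) := by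
  have hi1 : i < n + 1 := by omega
  have hi2 : i - 1 < n := by omega
  simp only [pv, dif_pos hi1, dif_pos hi2]
  rw [insPerm_apply]
  unfold insFun
  rw [dif_neg (show ¬((⟨i, hi1⟩ : Fin (n+1)) : ℕ) < (p : ℕ) by simp; omega),
    dif_neg (show ¬((⟨i, hi1⟩ : Fin (n+1)) : ℕ) = (p : ℕ) by simp; omega)]
  simp
lemma pv_val (n : ℕ) (σ : Equiv.Perm (Fin n)) (j : Fin n) : pv n σ (j : ℕ) = σ j := by
  simp [pv, j.isLt]

lemma desSet_insPerm (n : ℕ) (σ : Equiv.Perm (Fin n)) (p : Fin (n + 1)) :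
    desSet (n + 1) (insPerm n σ p) =
      ((desSet n σ).filter (fun i => i + 1 < (p : ℕ))) ∪
        (((desSet n σ).filter (fun i => (p : ℕ) ≤ i)).image (· + 1)) ∪
        ((Finset.range n).filter (fun i => i = (p : ℕ))) := by
  have hp : (p : ℕ) ≤ n := by have := p.isLt; omega
  ext i
  simp only [mem_desSet, Finset.mem_union, Finset.mem_filter, Finset.mem_image,
    Finset.mem_range, Nat.add_sub_cancel]
  constructor
  · rintro ⟨hi, hd⟩
    rcases Nat.lt_trichotomy (i + 1) (p : ℕ) with hc | hc | hc
    · left; left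
      rw [pv_insPerm_lt n σ p (by omega), pv_insPerm_lt n σ p (by omega)] at hd
      exact ⟨⟨by omega, hd⟩, hc⟩
    · exfalso
      rw [pv_insPerm_lt n σ p (show i < (p : ℕ) by omega)] at hd
      rw [hc, pv_insPerm_eq n σ p] at hd
      exact absurd (lt_trans (pv_lt n σ (show i < n by omega)) hd) (lt_irrefl _)
    · rcases Nat.lt_or_ge (p : ℕ) i with hc2 | hc2
      · left; right
        rw [pv_insPerm_gt n σ p (by omega) (by omega),
          pv_insPerm_gt n σ p (by omega) (by omega)] at hd
        refine ⟨i - 1, ⟨⟨by omega, ?_⟩, by omega⟩, by omega⟩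
        have : i - 1 + 1 = i := by omega
        rw [this]
        simpa using hd
      · right
        have : i = (p : ℕ) := by omega
        exact ⟨hi, this⟩
  · intro h
    rcases h with (⟨⟨hi, hd⟩, hc⟩ | ⟨j, ⟨⟨hj, hdj⟩, hpj⟩, rfl⟩) | ⟨hi, rfl⟩
    · refine ⟨by omega, ?_⟩
      rw [pv_insPerm_lt n σ p (by omega), pv_insPerm_lt n σ p (by omega)]
      exact hd
    · refine ⟨by omega, ?_⟩
      rw [pv_insPerm_gt n σ p (by omega) (by omega),
        pv_insPerm_gt n σ p (by omega) (by omega)]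
      have e1 : j + 1 - 1 = j := by omega
      have e2 : j + 1 + 1 - 1 = j + 1 := by omega
      rw [e1, e2]
      exact hdj
    · refine ⟨hi, ?_⟩
      rw [pv_insPerm_gt n σ p (by omega) (by omega), pv_insPerm_eq n σ p]
      have : (p : ℕ) + 1 - 1 = (p : ℕ) := by omega
      rw [this]
      exact pv_lt n σ hi

lemma desNum_insPerm (n : ℕ) (σ : Equiv.Perm (Fin n)) (p : Fin (n + 1)) :
    desNum (n + 1) (insPerm n σ p) =
      if (p : ℕ) = n ∨ (1 ≤ (p : ℕ) ∧ ((p : ℕ) - 1) ∈ desSet n σ) then desNum n σ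
      else desNum n σ + 1 := by
  have hp : (p : ℕ) ≤ n := by have := p.isLt; omega
  rw [desNum, desSet_insPerm]
  have hd1 : Disjoint ((desSet n σ).filter (fun i => i + 1 < (p : ℕ)))
      (((desSet n σ).filter (fun i => (p : ℕ) ≤ i)).image (· + 1)) := by
    rw [Finset.disjoint_left]
    rintro a ha hb
    simp only [Finset.mem_filter, Finset.mem_image] at ha hb
    obtain ⟨j, ⟨_, hj⟩, rfl⟩ := hb
    omega
  have hd2 : Disjoint (((desSet n σ).filter (fun i => i + 1 < (p : ℕ))) ∪
      (((desSet n σ).filter (fun i => (p : ℕ) ≤ i)).image (· + 1)))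
      ((Finset.range n).filter (fun i => i = (p : ℕ))) := by
    rw [Finset.disjoint_left]
    rintro a ha hb
    simp only [Finset.mem_union, Finset.mem_filter, Finset.mem_image, Finset.mem_range] at ha hb
    obtain ⟨_, rfl⟩ := hb
    rcases ha with ⟨_, h⟩ | ⟨j, ⟨_, hj⟩, hj2⟩ <;> omega
  rw [Finset.card_union_of_disjoint hd2, Finset.card_union_of_disjoint hd1]
  rw [Finset.card_image_of_injective _ (add_left_injective 1)]
  have key : ((desSet n σ).filter (fun i => i + 1 < (p : ℕ))).card +
      ((desSet n σ).filter (fun i => (p : ℕ) ≤ i)).card =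
      desNum n σ - (if 1 ≤ (p : ℕ) ∧ ((p : ℕ) - 1) ∈ desSet n σ then 1 else 0) := by
    rw [← Finset.card_union_of_disjoint (by
      rw [Finset.disjoint_left]
      rintro a ha hb
      simp only [Finset.mem_filter] at ha hb
      omega)]
    rw [← Finset.filter_or]
    by_cases hmid : 1 ≤ (p : ℕ) ∧ ((p : ℕ) - 1) ∈ desSet n σ
    · rw [if_pos hmid]
      have : (desSet n σ).filter (fun i => i + 1 < (p : ℕ) ∨ (p : ℕ) ≤ i) =
          (desSet n σ).erase ((p : ℕ) - 1) := by
        ext a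
        simp only [Finset.mem_filter, Finset.mem_erase]
        constructor
        · rintro ⟨ha, hc⟩; exact ⟨by omega, ha⟩
        · rintro ⟨hne, ha⟩; exact ⟨ha, by omega⟩
      rw [this, Finset.card_erase_of_mem hmid.2]
      rfl
    · rw [if_neg hmid, Nat.sub_zero]
      congr 1
      apply Finset.filter_true_of_mem
      intro a ha
      have ha2 := mem_desSet.mp ha
      by_contra hcon
      exact hmid ⟨by omega, by
        have : (p : ℕ) - 1 = a := by omega
        rwa [this]⟩
  have hc : ((Finset.range n).filter (fun i => i = (p : ℕ))).card =
      if (p : ℕ) < n then 1 else 0 := by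
    by_cases hpn : (p : ℕ) < n
    · rw [if_pos hpn]
      rw [show (Finset.range n).filter (fun i => i = (p : ℕ)) = {(p : ℕ)} by
        ext a; simp only [Finset.mem_filter, Finset.mem_range, Finset.mem_singleton]; omega]
      rfl
    · rw [if_neg hpn]
      rw [show (Finset.range n).filter (fun i => i = (p : ℕ)) = ∅ by
        ext a; simp only [Finset.mem_filter, Finset.mem_range, Finset.notMem_empty, iff_false]
        omega]
      rfl
  rw [key, hc]
  have hdle : ((p:ℕ) - 1) ∈ desSet n σ → ((p:ℕ) - 1) < n - 1 := fun h => (mem_desSet.mp h).1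
  by_cases h1 : 1 ≤ (p : ℕ) ∧ ((p : ℕ) - 1) ∈ desSet n σ
  · have hlt : (p : ℕ) < n := by have := hdle h1.2; omega
    have hcard : 1 ≤ desNum n σ := Finset.card_pos.mpr ⟨_, h1.2⟩
    rw [if_pos h1, if_pos hlt, if_pos (Or.inr h1)]
    omega
  · rw [if_neg h1]
    by_cases h2 : (p : ℕ) = n
    · rw [if_neg (by omega), if_pos (Or.inl h2)]
      omega
    · rw [if_pos (by omega), if_neg (by
        rintro (hc | hc)
        · exact h2 hc
        · exact h1 hc)]
      omega
lemma insPerm_injective (n : ℕ) :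
    Function.Injective (fun x : Equiv.Perm (Fin n) × Fin (n + 1) => insPerm n x.1 x.2) := by
  rintro ⟨σ, p⟩ ⟨σ', p'⟩ h
  simp only at h
  have hpp : p = p' := by
    have h1 : pv (n + 1) (insPerm n σ p) (p : ℕ) = n := pv_insPerm_eq n σ p
    have h2 : pv (n + 1) (insPerm n σ p) (p' : ℕ) = n := by
      rw [h]; exact pv_insPerm_eq n σ' p'
    have := pv_inj (n + 1) (insPerm n σ p) p.isLt p'.isLt (h1.trans h2.symm)
    exact Fin.ext this
  subst hpp
  have hσ : σ = σ' := by
    apply Equiv.ext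
    intro j
    apply Fin.ext
    rcases Nat.lt_or_ge (j : ℕ) (p : ℕ) with hc | hc
    · have e1 : pv (n + 1) (insPerm n σ p) (j : ℕ) = pv n σ (j : ℕ) :=
        pv_insPerm_lt n σ p hc
      have e2 : pv (n + 1) (insPerm n σ' p) (j : ℕ) = pv n σ' (j : ℕ) :=
        pv_insPerm_lt n σ' p hc
      rw [h] at e1
      have := e1.symm.trans e2
      rwa [pv_val, pv_val] at this
    · have hj : (j : ℕ) + 1 ≤ n := j.isLt
      have e1 : pv (n + 1) (insPerm n σ p) ((j : ℕ) + 1) = pv n σ ((j : ℕ) + 1 - 1) :=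
        pv_insPerm_gt n σ p (by omega) hj
      have e2 : pv (n + 1) (insPerm n σ' p) ((j : ℕ) + 1) = pv n σ' ((j : ℕ) + 1 - 1) :=
        pv_insPerm_gt n σ' p (by omega) hj
      rw [h] at e1
      have := e1.symm.trans e2
      simp only [Nat.add_sub_cancel] at this
      rwa [pv_val, pv_val] at this
  rw [hσ]

lemma insPerm_bijective (n : ℕ) :
    Function.Bijective (fun x : Equiv.Perm (Fin n) × Fin (n + 1) => insPerm n x.1 x.2) := by
  rw [Fintype.bijective_iff_injective_and_card]
  refine ⟨insPerm_injective n, ?_⟩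
  simp [Fintype.card_perm, Nat.factorial_succ, mul_comm]

lemma eulerPoly_succ (n : ℕ) :
    eulerPoly (n + 1) = (1 + (n : Polynomial ℤ) * X) * eulerPoly n
      + X * (1 - X) * Polynomial.derivative (eulerPoly n) := by
  have key : eulerPoly (n + 1) =
      ∑ x : Equiv.Perm (Fin n) × Fin (n + 1), (X : Polynomial ℤ) ^ desNum (n + 1) (insPerm n x.1 x.2) :=
    (Fintype.sum_bijective _ (insPerm_bijective n) _ _ (fun x => rfl)).symm
  rw [key, Fintype.sum_prod_type]
  have hσ : ∀ σ : Equiv.Perm (Fin n),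
      (∑ p : Fin (n + 1), (X : Polynomial ℤ) ^ desNum (n + 1) (insPerm n σ p)) =
        (desNum n σ + 1) • (X : Polynomial ℤ) ^ desNum n σ
          + (n - desNum n σ) • (X : Polynomial ℤ) ^ (desNum n σ + 1) := by
    intro σ
    set d := desNum n σ with hd
    have hsum : (∑ p : Fin (n + 1), (X : Polynomial ℤ) ^ desNum (n + 1) (insPerm n σ p)) =
        ∑ i ∈ Finset.range (n + 1), (if i = n ∨ (1 ≤ i ∧ (i - 1) ∈ desSet n σ)
          then (X : Polynomial ℤ) ^ d else X ^ (d + 1)) := by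
      rw [← Fin.sum_univ_eq_sum_range]
      apply Finset.sum_congr rfl
      intro p _
      rw [desNum_insPerm n σ p]
      split_ifs with h1 h2 h3 <;> first | rfl | (exact absurd h1 h2) | (exact absurd h3 h1)
    rw [hsum, Finset.sum_ite, Finset.sum_const, Finset.sum_const]
    have hfil : (Finset.range (n + 1)).filter
        (fun i => i = n ∨ (1 ≤ i ∧ (i - 1) ∈ desSet n σ)) =
        insert n ((desSet n σ).image (· + 1)) := by
      ext i
      simp only [Finset.mem_filter, Finset.mem_range, Finset.mem_insert, Finset.mem_image]
      constructor
      · rintro ⟨hi, (rfl | ⟨h1, h2⟩)⟩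
        · exact Or.inl rfl
        · exact Or.inr ⟨i - 1, h2, by omega⟩
      · rintro (rfl | ⟨j, hj, rfl⟩)
        · exact ⟨by omega, Or.inl rfl⟩
        · have := (mem_desSet.mp hj).1
          exact ⟨by omega, Or.inr ⟨by omega, by simpa using hj⟩⟩
    have hcard1 : ((Finset.range (n + 1)).filter
        (fun i => i = n ∨ (1 ≤ i ∧ (i - 1) ∈ desSet n σ))).card = d + 1 := by
      rw [hfil, Finset.card_insert_of_notMem (by
        simp only [Finset.mem_image]
        rintro ⟨j, hj, hj2⟩
        have := (mem_desSet.mp hj).1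
        omega)]
      rw [Finset.card_image_of_injective _ (add_left_injective 1)]
      rfl
    have hcard2 : ((Finset.range (n + 1)).filter
        (fun i => ¬(i = n ∨ (1 ≤ i ∧ (i - 1) ∈ desSet n σ)))).card = n - d := by
      have := Finset.card_filter_add_card_filter_not (s := Finset.range (n + 1))
        (p := fun i => i = n ∨ (1 ≤ i ∧ (i - 1) ∈ desSet n σ))
      rw [hcard1, Finset.card_range] at this
      have hdn : d ≤ n - 1 := desNum_le n σ
      omega
    rw [hcard1, hcard2]
  rw [Finset.sum_congr rfl (fun σ _ => hσ σ)]
  rw [eulerPoly, Finset.mul_sum, map_sum, Finset.mul_sum, ← Finset.sum_add_distrib]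
  apply Finset.sum_congr rfl
  intro σ _
  have hdn : desNum n σ ≤ n - 1 := desNum_le n σ
  rw [Polynomial.derivative_X_pow]
  set d := desNum n σ with hd
  rcases Nat.eq_zero_or_pos d with h0 | hpos
  · rw [h0]
    push_cast
    ring_nf
    simp [pow_zero]
  · have hdn' : d ≤ n := by omega
    have hcast : ((n - d : ℕ) : Polynomial ℤ) = (n : Polynomial ℤ) - (d : Polynomial ℤ) := by
      push_cast [Nat.cast_sub hdn']
      ring
    rw [nsmul_eq_mul, nsmul_eq_mul, hcast]
    have hX : (X : Polynomial ℤ) ^ (d - 1) * X = X ^ d := by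
      rw [← pow_succ]
      congr 1
      omega
    push_cast
    have : (Polynomial.C (d : ℤ)) = (d : Polynomial ℤ) := by simp
    rw [this]
    ring_nf
    rw [← hX]
    ring
def Fp (n : ℕ) : Polynomial ℤ :=
  ∑ m ∈ Finset.range (n + 1), (n.choose m : Polynomial ℤ) * (X - 1) ^ (n - m) * eulerPoly m

def Gp (n : ℕ) : Polynomial ℤ :=
  ∑ m ∈ Finset.range (n + 1), (n.choose m : Polynomial ℤ) * (X - 1) ^ (n - m) * eulerPoly (m + 1)

lemma Fp_zero : Fp 0 = 1 := by
  simp [Fp, eulerPoly_zero]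

lemma Fp_one : Fp 1 = X := by
  rw [Fp, Finset.sum_range_succ, Finset.sum_range_one]
  simp [eulerPoly_zero, eulerPoly_one]

lemma eulerPoly_two : eulerPoly 2 = 1 + X := by
  have h := eulerPoly_succ 1
  rw [eulerPoly_one] at h
  simpa using h

lemma Gp_one : Gp 1 = 2 * X := by
  rw [Gp, Finset.sum_range_succ, Finset.sum_range_one]
  simp [eulerPoly_one, eulerPoly_two]
  ring

lemma PL1 (n : ℕ) : Fp (n + 1) = (X - 1) * Fp n + Gp n := by
  have hsplit : ∀ m ∈ Finset.range (n + 1),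
      ((n + 1).choose (m + 1) : Polynomial ℤ) * (X - 1) ^ (n + 1 - (m + 1)) * eulerPoly (m + 1)
        = (n.choose (m + 1) : Polynomial ℤ) * (X - 1) ^ (n - m) * eulerPoly (m + 1)
          + (n.choose m : Polynomial ℤ) * (X - 1) ^ (n - m) * eulerPoly (m + 1) := by
    intro m hm
    rw [Nat.choose_succ_succ]
    have he : n + 1 - (m + 1) = n - m := by omega
    rw [he]
    push_cast
    ring
  have key : Fp (n + 1) = (∑ m ∈ Finset.range (n + 1),
      (n.choose (m + 1) : Polynomial ℤ) * (X - 1) ^ (n - m) * eulerPoly (m + 1))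
      + Gp n + (X - 1) ^ (n + 1) := by
    rw [Fp, Finset.sum_range_succ']
    rw [Finset.sum_congr rfl hsplit, Finset.sum_add_distrib]
    have h0 : ((n + 1).choose 0 : Polynomial ℤ) * (X - 1) ^ (n + 1 - 0) * eulerPoly 0
        = (X - 1) ^ (n + 1) := by simp [eulerPoly_zero]
    rw [h0]
    have hS2 : (∑ m ∈ Finset.range (n + 1),
        (n.choose m : Polynomial ℤ) * (X - 1) ^ (n - m) * eulerPoly (m + 1)) = Gp n := rfl
    rw [hS2]
  have hfac : ∀ m ∈ Finset.range n,
      (X - 1) * ((n.choose (m + 1) : Polynomial ℤ) * (X - 1) ^ (n - (m + 1)) * eulerPoly (m + 1))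
        = (n.choose (m + 1) : Polynomial ℤ) * (X - 1) ^ (n - m) * eulerPoly (m + 1) := by
    intro m hm
    rw [Finset.mem_range] at hm
    have he : n - m = (n - (m + 1)) + 1 := by omega
    rw [he, pow_succ]
    ring
  have key2 : (X - 1) * Fp n = (∑ m ∈ Finset.range (n + 1),
      (n.choose (m + 1) : Polynomial ℤ) * (X - 1) ^ (n - m) * eulerPoly (m + 1))
      + (X - 1) ^ (n + 1) := by
    rw [Fp, Finset.mul_sum, Finset.sum_range_succ']
    rw [Finset.sum_congr rfl hfac]
    rw [Finset.sum_range_succ, Nat.choose_succ_self]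
    simp [eulerPoly_zero]
    ring
  rw [key, key2]
  ring
lemma sum_mG (k : ℕ) :
    (∑ m ∈ Finset.range (k + 2),
      (m : Polynomial ℤ) * ((k + 1).choose m : Polynomial ℤ) * (X - 1) ^ (k + 1 - m) * eulerPoly m)
      = ((k + 1 : ℕ) : Polynomial ℤ) * Gp k := by
  rw [Finset.sum_range_succ']
  have h0 : ((0 : ℕ) : Polynomial ℤ) * ((k + 1).choose 0 : Polynomial ℤ) * (X - 1) ^ (k + 1 - 0)
      * eulerPoly 0 = 0 := by simp
  have hterm : ∀ m ∈ Finset.range (k + 1),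
      ((m + 1 : ℕ) : Polynomial ℤ) * ((k + 1).choose (m + 1) : Polynomial ℤ)
          * (X - 1) ^ (k + 1 - (m + 1)) * eulerPoly (m + 1)
        = ((k + 1 : ℕ) : Polynomial ℤ)
          * ((k.choose m : Polynomial ℤ) * (X - 1) ^ (k - m) * eulerPoly (m + 1)) := by
    intro m hm
    have hnat : (k + 1) * k.choose m = (k + 1).choose (m + 1) * (m + 1) := Nat.add_one_mul_choose_eq k m
    have hcast : ((k + 1 : ℕ) : Polynomial ℤ) * (k.choose m : Polynomial ℤ)
        = ((k + 1).choose (m + 1) : Polynomial ℤ) * ((m + 1 : ℕ) : Polynomial ℤ) := by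
      rw [← Nat.cast_mul, ← Nat.cast_mul, hnat]
    have he : k + 1 - (m + 1) = k - m := by omega
    rw [he]
    calc ((m + 1 : ℕ) : Polynomial ℤ) * ((k + 1).choose (m + 1) : Polynomial ℤ)
          * (X - 1) ^ (k - m) * eulerPoly (m + 1)
        = (((k + 1).choose (m + 1) : Polynomial ℤ) * ((m + 1 : ℕ) : Polynomial ℤ))
          * ((X - 1) ^ (k - m) * eulerPoly (m + 1)) := by ring
      _ = (((k + 1 : ℕ) : Polynomial ℤ) * (k.choose m : Polynomial ℤ))
          * ((X - 1) ^ (k - m) * eulerPoly (m + 1)) := by rw [hcast]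
      _ = _ := by ring
  push_cast at hterm ⊢
  rw [Finset.sum_congr rfl hterm, ← Finset.mul_sum]
  simp [Gp]

lemma deriv_Fp (k : ℕ) :
    Polynomial.derivative (Fp (k + 1)) = ((k + 1 : ℕ) : Polynomial ℤ) * Fp k
      + ∑ m ∈ Finset.range (k + 2), ((k + 1).choose m : Polynomial ℤ) * (X - 1) ^ (k + 1 - m)
          * Polynomial.derivative (eulerPoly m) := by
  rw [Fp, map_sum]
  have hterm : ∀ m ∈ Finset.range (k + 2),
      Polynomial.derivative (((k + 1).choose m : Polynomial ℤ) * (X - 1) ^ (k + 1 - m) * eulerPoly m)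
        = ((k + 1 : ℕ) : Polynomial ℤ) * ((k.choose m : Polynomial ℤ) * (X - 1) ^ (k - m) * eulerPoly m)
          + ((k + 1).choose m : Polynomial ℤ) * (X - 1) ^ (k + 1 - m)
            * Polynomial.derivative (eulerPoly m) := by
    intro m hm
    rw [Polynomial.derivative_mul, Polynomial.derivative_mul]
    rw [Polynomial.derivative_natCast, Polynomial.derivative_pow]
    have hd1 : Polynomial.derivative (X - 1 : Polynomial ℤ) = 1 := by
      simp
    rw [hd1]
    have hnat : (k + 1).choose m * (k + 1 - m) = (k + 1) * k.choose m :=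
      (Nat.choose_mul_succ_eq k m).symm.trans (Nat.mul_comm _ _)
    have hcast : ((k + 1).choose m : Polynomial ℤ) * ((k + 1 - m : ℕ) : Polynomial ℤ)
        = ((k + 1 : ℕ) : Polynomial ℤ) * (k.choose m : Polynomial ℤ) := by
      rw [← Nat.cast_mul, ← Nat.cast_mul, hnat]
    have he : k + 1 - m - 1 = k - m := by omega
    rw [he]
    have hC : (Polynomial.C ((k + 1 - m : ℕ) : ℤ)) = ((k + 1 - m : ℕ) : Polynomial ℤ) := by
      simp
    rw [hC]
    linear_combination ((X - 1 : Polynomial ℤ) ^ (k - m) * eulerPoly m) * hcast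
  rw [Finset.sum_congr rfl hterm, Finset.sum_add_distrib, ← Finset.mul_sum]
  congr 1
  rw [Finset.sum_range_succ]
  have : (k.choose (k + 1) : Polynomial ℤ) = 0 := by
    rw [Nat.choose_succ_self]; simp
  rw [this]
  rw [Fp]
  ring
lemma PL2 (k : ℕ) :
    Gp (k + 1) = Fp (k + 1) + ((k + 1 : ℕ) : Polynomial ℤ) * X * Gp k
      + X * (1 - X) * (Polynomial.derivative (Fp (k + 1)) - ((k + 1 : ℕ) : Polynomial ℤ) * Fp k) := by
  have hterm : ∀ m ∈ Finset.range (k + 2),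
      ((k + 1).choose m : Polynomial ℤ) * (X - 1) ^ (k + 1 - m) * eulerPoly (m + 1)
        = ((k + 1).choose m : Polynomial ℤ) * (X - 1) ^ (k + 1 - m) * eulerPoly m
          + X * ((m : Polynomial ℤ) * ((k + 1).choose m : Polynomial ℤ) * (X - 1) ^ (k + 1 - m)
              * eulerPoly m)
          + X * (1 - X) * (((k + 1).choose m : Polynomial ℤ) * (X - 1) ^ (k + 1 - m)
              * Polynomial.derivative (eulerPoly m)) := by
    intro m hm
    rw [eulerPoly_succ m]
    push_cast
    ring
  rw [Gp, Finset.sum_congr rfl hterm, Finset.sum_add_distrib, Finset.sum_add_distrib]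
  rw [← Finset.mul_sum, ← Finset.mul_sum]
  rw [sum_mG]
  have hFp : (∑ m ∈ Finset.range (k + 2),
      ((k + 1).choose m : Polynomial ℤ) * (X - 1) ^ (k + 1 - m) * eulerPoly m) = Fp (k + 1) := rfl
  rw [hFp]
  have hder : (∑ m ∈ Finset.range (k + 2),
      ((k + 1).choose m : Polynomial ℤ) * (X - 1) ^ (k + 1 - m)
        * Polynomial.derivative (eulerPoly m))
      = Polynomial.derivative (Fp (k + 1)) - ((k + 1 : ℕ) : Polynomial ℤ) * Fp k := by
    rw [deriv_Fp]; ring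
  rw [hder]
  push_cast
  ring

lemma FG_eq (n : ℕ) (hn : 1 ≤ n) :
    Fp n = X * eulerPoly n ∧ Gp n = X * eulerPoly (n + 1) - X * (X - 1) * eulerPoly n := by
  induction n with
  | zero => omega
  | succ k ih =>
    rcases Nat.eq_zero_or_pos k with rfl | hk
    · exact ⟨by rw [Fp_one, eulerPoly_one]; ring,
        by rw [Gp_one, eulerPoly_two, eulerPoly_one]; ring⟩
    · obtain ⟨hF, hG⟩ := ih hk
      have hF1 : Fp (k + 1) = X * eulerPoly (k + 1) := by
        rw [PL1, hF, hG]; ring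
      refine ⟨hF1, ?_⟩
      rw [PL2, hF1, hG, hF]
      rw [Polynomial.derivative_mul, Polynomial.derivative_X]
      rw [eulerPoly_succ (k + 1)]
      push_cast
      ring
lemma Fp_uniform (j : ℕ) :
    Fp j = X * eulerPoly j + (1 - X) * (if j = 0 then 1 else 0) := by
  rcases Nat.eq_zero_or_pos j with rfl | hj
  · rw [Fp_zero, eulerPoly_zero, if_pos rfl]
    ring
  · rw [(FG_eq j hj).1, if_neg (by omega)]
    ring

lemma sum_choose_Fp (n : ℕ) :
    (∑ j ∈ Finset.range (n + 1), (n.choose j : Polynomial ℤ) * Fp j)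
      = (1 - X) + X * ∑ j ∈ Finset.range (n + 1), (n.choose j : Polynomial ℤ) * eulerPoly j := by
  have hterm : ∀ j ∈ Finset.range (n + 1),
      (n.choose j : Polynomial ℤ) * Fp j
        = X * ((n.choose j : Polynomial ℤ) * eulerPoly j)
          + (1 - X) * ((n.choose j : Polynomial ℤ) * (if j = 0 then 1 else 0)) := by
    intro j _
    rw [Fp_uniform j]
    ring
  rw [Finset.sum_congr rfl hterm, Finset.sum_add_distrib, ← Finset.mul_sum, ← Finset.mul_sum]
  have hone : (∑ j ∈ Finset.range (n + 1),
      (n.choose j : Polynomial ℤ) * (if j = 0 then 1 else 0)) = 1 := by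
    rw [Finset.sum_range_succ']
    simp
  rw [hone, mul_one, add_comm]

lemma binom_expand (r : ℕ) :
    (∑ i ∈ Finset.range (r + 1), (r.choose i : Polynomial ℤ) * (X - 1) ^ i) = X ^ r := by
  have h := add_pow (X - 1 : Polynomial ℤ) 1 r
  simp only [sub_add_cancel, one_pow, mul_one] at h
  rw [h]
  apply Finset.sum_congr rfl
  intro i _
  ring

lemma sum_choose_Fp' (n : ℕ) :
    (∑ j ∈ Finset.range (n + 1), (n.choose j : Polynomial ℤ) * Fp j)
      = ∑ m ∈ Finset.range (n + 1), (n.choose m : Polynomial ℤ) * X ^ (n - m) * eulerPoly m := by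
  have h1 : ∀ j ∈ Finset.range (n + 1), (n.choose j : Polynomial ℤ) * Fp j
      = ∑ m ∈ Finset.range (j + 1), (n.choose j : Polynomial ℤ)
          * ((j.choose m : Polynomial ℤ) * (X - 1) ^ (j - m) * eulerPoly m) := by
    intro j _
    rw [Fp, Finset.mul_sum]
  rw [Finset.sum_congr rfl h1]
  rw [Finset.sum_comm' (t' := Finset.range (n + 1)) (s' := fun m => Finset.Icc m n) (by
    intro j m
    simp only [Finset.mem_range, Finset.mem_Icc]
    omega)]
  apply Finset.sum_congr rfl
  intro m hm
  rw [Finset.mem_range] at hm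
  have h2 : (Finset.Icc m n) = Finset.Ico m (n + 1) := rfl
  rw [h2, Finset.sum_Ico_eq_sum_range]
  have h3 : ∀ i ∈ Finset.range (n + 1 - m),
      (n.choose (m + i) : Polynomial ℤ)
          * (((m + i).choose m : Polynomial ℤ) * (X - 1) ^ (m + i - m) * eulerPoly m)
        = ((n.choose m : Polynomial ℤ) * eulerPoly m)
            * (((n - m).choose i : Polynomial ℤ) * (X - 1) ^ i) := by
    intro i hi
    rw [Finset.mem_range] at hi
    have hc : n.choose (m + i) * (m + i).choose m = n.choose m * (n - m).choose i := by
      have := Nat.choose_mul (n := n) (k := m + i) (s := m) (by omega)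
      simpa using this
    have hcast : (n.choose (m + i) : Polynomial ℤ) * ((m + i).choose m : Polynomial ℤ)
        = (n.choose m : Polynomial ℤ) * ((n - m).choose i : Polynomial ℤ) := by
      rw [← Nat.cast_mul, ← Nat.cast_mul, hc]
    have he : m + i - m = i := by omega
    rw [he]
    linear_combination ((X - 1 : Polynomial ℤ) ^ i * eulerPoly m) * hcast
  rw [Finset.sum_congr rfl h3, ← Finset.mul_sum]
  have he2 : n + 1 - m = (n - m) + 1 := by omega
  rw [he2, binom_expand (n - m)]
  ring

lemma binEulerPoly_eq (n : ℕ) :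
    binEulerPoly n
      = (1 - X) + X * ∑ j ∈ Finset.range (n + 1), (n.choose j : Polynomial ℤ) * eulerPoly j := by
  rw [binEulerPoly]
  have h1 : (∑ m ∈ Finset.Icc 1 n, (n.choose m : Polynomial ℤ) * eulerPoly m)
      = ∑ j ∈ Finset.range n, (n.choose (j + 1) : Polynomial ℤ) * eulerPoly (j + 1) := by
    have : Finset.Icc 1 n = Finset.Ico 1 (n + 1) := rfl
    rw [this, Finset.sum_Ico_eq_sum_range]
    simp only [Nat.add_sub_cancel]
    apply Finset.sum_congr rfl
    intro j _
    rw [Nat.add_comm 1 j]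
  rw [h1, Finset.sum_range_succ']
  rw [eulerPoly_zero, Nat.choose_zero_right]
  push_cast
  ring

lemma binEuler_key (n : ℕ) :
    binEulerPoly n = ∑ m ∈ Finset.range (n + 1),
      (n.choose m : Polynomial ℤ) * X ^ (n - m) * eulerPoly m := by
  rw [binEulerPoly_eq, ← sum_choose_Fp, sum_choose_Fp']
lemma reflect_sum {α : Type*} (N : ℕ) (s : Finset α) (f : α → Polynomial ℤ) :
    Polynomial.reflect N (∑ a ∈ s, f a) = ∑ a ∈ s, Polynomial.reflect N (f a) := by
  induction s using Finset.induction_on with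
  | empty => simp
  | insert _ _ h ih => rw [Finset.sum_insert h, Finset.sum_insert h, Polynomial.reflect_add, ih]

lemma binEulerPoly_eq' (n : ℕ) :
    binEulerPoly n
      = 1 + X * ∑ j ∈ Finset.range n, (n.choose (j + 1) : Polynomial ℤ) * eulerPoly (j + 1) := by
  rw [binEulerPoly]
  congr 2
  have : Finset.Icc 1 n = Finset.Ico 1 (n + 1) := rfl
  rw [this, Finset.sum_Ico_eq_sum_range]
  simp only [Nat.add_sub_cancel]
  apply Finset.sum_congr rfl
  intro j _
  rw [Nat.add_comm 1 j]

lemma reflect_binEuler (n : ℕ) :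
    Polynomial.reflect n (binEulerPoly n) = binEulerPoly n := by
  conv_lhs => rw [binEuler_key]
  rw [reflect_sum]
  have hterm : ∀ m ∈ Finset.range (n + 1),
      Polynomial.reflect n ((n.choose m : Polynomial ℤ) * X ^ (n - m) * eulerPoly m)
        = (n.choose m : Polynomial ℤ) * (if m = 0 then 1 else X * eulerPoly m) := by
    intro m hm
    rw [Finset.mem_range] at hm
    have hassoc : (n.choose m : Polynomial ℤ) * X ^ (n - m) * eulerPoly m
        = Polynomial.C ((n.choose m : ℤ)) * (X ^ (n - m) * eulerPoly m) := by
      rw [mul_assoc, Polynomial.C_eq_natCast]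
    rw [hassoc, Polynomial.reflect_C_mul]
    have hmul := Polynomial.reflect_mul (X ^ (n - m) : Polynomial ℤ) (eulerPoly m)
      (Polynomial.natDegree_X_pow_le (n - m)) ((natDegree_eulerPoly_le m).trans (Nat.sub_le m 1))
    have hnm : (n - m) + m = n := by omega
    rw [hnm] at hmul
    rw [hmul]
    rw [Polynomial.reflect_monomial, Polynomial.revAt_le le_rfl, Nat.sub_self, pow_zero, one_mul]
    rcases Nat.eq_zero_or_pos m with rfl | hmpos
    · rw [eulerPoly_zero, if_pos rfl]
      simp [Polynomial.C_eq_natCast]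
    · rw [reflect_eulerPoly m hmpos, if_neg (by omega)]
      rw [Polynomial.C_eq_natCast]
  rw [Finset.sum_congr rfl hterm, Finset.sum_range_succ']
  rw [if_pos rfl, Nat.choose_zero_right, Nat.cast_one, mul_one]
  have hterm2 : ∀ j ∈ Finset.range n,
      (n.choose (j + 1) : Polynomial ℤ) * (if j + 1 = 0 then 1 else X * eulerPoly (j + 1))
        = X * ((n.choose (j + 1) : Polynomial ℤ) * eulerPoly (j + 1)) := by
    intro j _
    rw [if_neg (by omega)]
    ring
  rw [Finset.sum_congr rfl hterm2, ← Finset.mul_sum, binEulerPoly_eq' n, add_comm]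
theorem binEuler_palindromic (n j : ℕ) (hj : j ≤ n) :
    (binEulerPoly n).coeff j = (binEulerPoly n).coeff (n - j) := by
  conv_lhs => rw [← reflect_binEuler n]
  rw [Polynomial.coeff_reflect, Polynomial.revAt_le hj]
end
end

section
/- For all n ≥ 1, the Eulerian polynomial satisfies A_n(t) = Σ_{k=0}^{⌊(n-1)/2⌋} γ_{n,k} t^k (1+t)^{n-1-2k}, where γ_{n,k} is the number of permutations σ ∈ S_n with no double descents, no final descent, and exactly k descents. -/
open Finset Polynomial

open scoped Classical

noncomputable section

namespace EGP






/-- head with default 0 (the right boundary). -/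
def nxt : List ℕ → ℕ
  | [] => 0
  | a :: _ => a

/-- double-descent values of `l` with left boundary `p`, right boundary 0. -/
def ddF (p : ℕ) : List ℕ → Finset ℕ
  | [] => ∅
  | a :: t => (if nxt t < a ∧ a < p then {a} else ∅) ∪ ddF a t

/-- double-ascent values. -/
def daF (p : ℕ) : List ℕ → Finset ℕ
  | [] => ∅
  | a :: t => (if p < a ∧ a < nxt t then {a} else ∅) ∪ daF a t

/-- number of descents of the extended word `p :: l ++ [0]`. -/
def edes (p : ℕ) : List ℕ → ℕ
  | [] => if 0 < p then 1 else 0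
  | a :: t => (if a < p then 1 else 0) + edes a t

/-- insert `x` before the first entry smaller than `x`. -/
def ins (x : ℕ) : List ℕ → List ℕ
  | [] => [x]
  | b :: t => if b < x then x :: b :: t else b :: ins x t

/-- the rightward hop of the value `x`. -/
def hopR (x : ℕ) : List ℕ → List ℕ
  | [] => []
  | a :: t => if a = x then ins x t else a :: hopR x t

/-- `l` starts with a (possibly empty) run of entries `> x` followed by `x`. -/
def leadx (x : ℕ) : List ℕ → Prop
  | [] => False
  | b :: t => b = x ∨ (x < b ∧ leadx x t)

def go (x : ℕ) : List ℕ → List ℕ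
  | [] => []
  | a :: t => if a < x ∧ leadx x t then a :: x :: t.erase x else a :: go x t

/-- the leftward hop of the value `x`. -/
def hopL (x : ℕ) (l : List ℕ) : List ℕ :=
  if leadx x l then x :: l.erase x else go x l

lemma ddF_subset (p : ℕ) (l : List ℕ) : ddF p l ⊆ l.toFinset := by
  induction l generalizing p with
  | nil => simp [ddF]
  | cons a t ih =>
    intro y hy
    simp only [ddF, Finset.mem_union] at hy
    rcases hy with hy | hy
    · split at hy
      · simp at hy; simp [hy]
      · simp at hy
    · simp [ih a hy]

lemma daF_subset (p : ℕ) (l : List ℕ) : daF p l ⊆ l.toFinset := by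
  induction l generalizing p with
  | nil => simp [daF]
  | cons a t ih =>
    intro y hy
    simp only [daF, Finset.mem_union] at hy
    rcases hy with hy | hy
    · split at hy
      · simp at hy; simp [hy]
      · simp at hy
    · simp [ih a hy]

lemma disj_dd_da (p : ℕ) (l : List ℕ) (hl : l.Nodup) (x : ℕ) :
    x ∈ ddF p l → x ∈ daF p l → False := by
  induction l generalizing p with
  | nil => simp [ddF]
  | cons a t ih =>
    intro h1 h2
    simp only [ddF, daF, Finset.mem_union] at h1 h2
    have hat : a ∉ t := by simp [List.nodup_cons] at hl; exact hl.1
    have ht : t.Nodup := (List.nodup_cons.mp hl).2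
    rcases h1 with h1 | h1 <;> rcases h2 with h2 | h2
    · split at h1 <;> split at h2 <;> simp_all; omega
    · split at h1
      · simp at h1; have := List.mem_toFinset.mp (daF_subset _ t h2)
        rw [h1] at this; exact hat this
      · simp at h1
    · split at h2
      · simp at h2; have := List.mem_toFinset.mp (ddF_subset _ t h1)
        rw [h2] at this; exact hat this
      · simp at h2
    · exact ih a ht h1 h2


@[simp] lemma nxt_nil : nxt [] = 0 := rfl
@[simp] lemma nxt_cons (a : ℕ) (t : List ℕ) : nxt (a :: t) = a := rfl
lemma ddF_nil (p : ℕ) : ddF p [] = ∅ := rfl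
lemma ddF_cons (p a : ℕ) (t : List ℕ) :
    ddF p (a :: t) = (if nxt t < a ∧ a < p then {a} else ∅) ∪ ddF a t := rfl
lemma daF_nil (p : ℕ) : daF p [] = ∅ := rfl
lemma daF_cons (p a : ℕ) (t : List ℕ) :
    daF p (a :: t) = (if p < a ∧ a < nxt t then {a} else ∅) ∪ daF a t := rfl
lemma edes_nil (p : ℕ) : edes p [] = if 0 < p then 1 else 0 := rfl
lemma edes_cons (p a : ℕ) (t : List ℕ) :
    edes p (a :: t) = (if a < p then 1 else 0) + edes a t := rfl
lemma ins_nil (x : ℕ) : ins x [] = [x] := rfl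
lemma ins_cons (x b : ℕ) (t : List ℕ) :
    ins x (b :: t) = if b < x then x :: b :: t else b :: ins x t := rfl
lemma hopR_cons (x a : ℕ) (t : List ℕ) :
    hopR x (a :: t) = if a = x then ins x t else a :: hopR x t := rfl

lemma not_mem_ddF {x p : ℕ} {l : List ℕ} (h : x ∉ l) : x ∉ ddF p l :=
  fun hx => h (List.mem_toFinset.mp (ddF_subset p l hx))

lemma not_mem_daF {x p : ℕ} {l : List ℕ} (h : x ∉ l) : x ∉ daF p l :=
  fun hx => h (List.mem_toFinset.mp (daF_subset p l hx))

lemma erase_sing_union {a : ℕ} {X : Finset ℕ} (h : a ∉ X) : ({a} ∪ X).erase a = X := by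
  rw [Finset.erase_union_distrib, Finset.erase_singleton, Finset.erase_eq_of_notMem h]
  simp

lemma nxt_ins_lt {x b : ℕ} (h : x < b) (t : List ℕ) (hx : x ∉ t) :
    (nxt (ins x t) < b ↔ nxt t < b) ∧ (b < nxt (ins x t) ↔ b < nxt t) := by
  cases t with
  | nil => rw [ins_nil]; simp; omega
  | cons c t' =>
    have hcx : c ≠ x := by intro hh; exact hx (by simp [hh])
    rw [ins_cons]
    by_cases hc : c < x
    · rw [if_pos hc]; simp; omega
    · rw [if_neg hc]; cases t' <;> simp [ins]

lemma ins_lemma (x : ℕ) (hx0 : 0 < x) : ∀ (l : List ℕ) (q : ℕ), x < q → x ∉ l →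
    List.Perm (ins x l) (x :: l) ∧ ddF q (ins x l) = insert x (ddF q l) ∧
    daF q (ins x l) = daF q l ∧ edes q (ins x l) = edes q l + 1 := by
  intro l
  induction l with
  | nil =>
    intro q hq _
    refine ⟨List.Perm.refl _, ?_, ?_, ?_⟩
    · rw [ins_nil, ddF_cons, ddF_nil, ddF_nil]
      rw [if_pos (by simpa using ⟨hx0, hq⟩)]; simp
    · rw [ins_nil, daF_cons, daF_nil, daF_nil]
      rw [if_neg (by simp)]; simp
    · rw [ins_nil, edes_cons, edes_nil, edes_nil]
      simp [hq, hx0, show 0 < q by omega]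
  | cons b t ih =>
    intro q hq hx
    have hbx : b ≠ x := by intro hh; exact hx (by simp [hh])
    have hxt : x ∉ t := fun hh => hx (by simp [hh])
    by_cases hb : b < x
    · rw [ins_cons, if_pos hb]
      refine ⟨List.Perm.refl _, ?_, ?_, ?_⟩
      · simp only [ddF_cons, nxt_cons]
        simp only [(eq_true ⟨hb, hq⟩ : (b < x ∧ x < q) = True), ↓reduceIte]
        have : (nxt t < b ∧ b < x) = (nxt t < b ∧ b < q) := by
          apply propext; constructor <;> (rintro ⟨h1, h2⟩; exact ⟨h1, by omega⟩)
        simp only [this]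
        rw [Finset.insert_eq]
      · simp only [daF_cons, nxt_cons]
        simp only [eq_false (by omega : ¬ (q < x ∧ x < b)), eq_false (by omega : ¬ (x < b ∧ b < nxt t)),
          eq_false (by omega : ¬ (q < b ∧ b < nxt t)), ↓reduceIte]
        simp
      · simp only [edes_cons]
        rw [if_pos hq, if_pos hb, if_pos (by omega : b < q)]
        omega
    · have hb' : x < b := by omega
      obtain ⟨P, Hdd, Hda, He⟩ := ih b hb' hxt
      have hnxt := nxt_ins_lt hb' t hxt
      rw [ins_cons, if_neg hb]
      refine ⟨?_, ?_, ?_, ?_⟩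
      · exact (P.cons b).trans (List.Perm.swap x b t)
      · rw [ddF_cons, ddF_cons (p := q), Hdd]
        have : (nxt (ins x t) < b ∧ b < q) = (nxt t < b ∧ b < q) := by
          apply propext; constructor <;> (rintro ⟨h1, h2⟩; refine ⟨?_, h2⟩)
          · exact hnxt.1.mp h1
          · exact hnxt.1.mpr h1
        simp only [this, Finset.union_insert]
      · rw [daF_cons, daF_cons (p := q), Hda]
        have : (q < b ∧ b < nxt (ins x t)) = (q < b ∧ b < nxt t) := by
          apply propext; constructor <;> (rintro ⟨h1, h2⟩; refine ⟨h1, ?_⟩)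
          · exact hnxt.2.mp h2
          · exact hnxt.2.mpr h2
        simp only [this]
      · rw [edes_cons, edes_cons (p := q), He]
        omega

lemma mem_daF_cons {x p a : ℕ} {t : List ℕ} (hx : x ∈ daF p (a :: t)) :
    (x = a ∧ p < a ∧ a < nxt t) ∨ x ∈ daF a t := by
  rw [daF_cons] at hx
  rcases Finset.mem_union.mp hx with h | h
  · left; split at h
    · next hc => simp at h; exact ⟨h, hc⟩
    · simp at h
  · right; exact h

lemma hopR_nxt {x a : ℕ} {t : List ℕ} (hn : t.Nodup) (hx : x ∈ daF a t) :
    (nxt (hopR x t) < a ↔ nxt t < a) ∧ (a < nxt (hopR x t) ↔ a < nxt t) := by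
  cases t with
  | nil => simp [daF_nil] at hx
  | cons c t2 =>
    rw [hopR_cons]
    by_cases hc : c = x
    · subst hc
      have hct2 : c ∉ t2 := (List.nodup_cons.mp hn).1
      rcases mem_daF_cons hx with ⟨_, hac, hcn⟩ | h
      · cases t2 with
        | nil => simp at hcn
        | cons b t3 =>
          simp only [nxt_cons] at hcn
          rw [if_pos rfl, ins_cons, if_neg (by omega)]
          simp; omega
      · exact absurd h (not_mem_daF hct2)
    · rw [if_neg hc]; simp

lemma hopR_main (x : ℕ) : ∀ (l : List ℕ) (p : ℕ), l.Nodup → x ∈ daF p l →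
    List.Perm (hopR x l) l ∧ ddF p (hopR x l) = insert x (ddF p l) ∧
    daF p (hopR x l) = (daF p l).erase x ∧ edes p (hopR x l) = edes p l + 1 := by
  intro l
  induction l with
  | nil => intro p _ hx; simp [daF_nil] at hx
  | cons a t ih =>
    intro p hn hx
    have hat : a ∉ t := (List.nodup_cons.mp hn).1
    have htn : t.Nodup := (List.nodup_cons.mp hn).2
    by_cases ha : a = x
    · subst ha
      have hcond : p < a ∧ a < nxt t := by
        rcases mem_daF_cons hx with ⟨_, h⟩ | h
        · exact h
        · exact absurd h (not_mem_daF hat)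
      obtain ⟨hpa, han⟩ := hcond
      have ha0 : 0 < a := by omega
      cases t with
      | nil => simp at han
      | cons b t' =>
        simp only [nxt_cons] at han
        have hab' : ¬ b < a := by omega
        have hat' : a ∉ t' := fun hh => hat (by simp [hh])
        obtain ⟨P, Hdd, Hda, He⟩ := ins_lemma a ha0 t' b han hat'
        have hnxt := nxt_ins_lt han t' hat'
        rw [hopR_cons, if_pos rfl, ins_cons, if_neg hab']
        refine ⟨?_, ?_, ?_, ?_⟩
        · exact ((P.cons b).trans (List.Perm.swap a b t'))
        · rw [ddF_cons, Hdd, ddF_cons (p := p), ddF_cons (a := b)]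
          simp only [nxt_cons]
          simp only [eq_false (by omega : ¬ (nxt (ins a t') < b ∧ b < p)),
            eq_false (by omega : ¬ (b < a ∧ a < p)),
            eq_false (by omega : ¬ (nxt t' < b ∧ b < a)), ↓reduceIte]
          simp
        · rw [daF_cons, Hda, daF_cons (p := p), daF_cons (a := b)]
          rw [if_pos (by simpa using ⟨hpa, han⟩ : p < a ∧ a < nxt (b :: t'))]
          have hxe : (b < nxt (ins a t')) ↔ (b < nxt t') := hnxt.2
          have : (p < b ∧ b < nxt (ins a t')) = (a < b ∧ b < nxt t') := by
            apply propext; constructor <;> (rintro ⟨h1, h2⟩; refine ⟨by omega, ?_⟩)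
            · exact hxe.mp h2
            · exact hxe.mpr h2
          simp only [this]
          rw [erase_sing_union]
          intro hmem
          rcases Finset.mem_union.mp hmem with hmem | hmem
          · revert hmem; split
            · simp; omega
            · simp
          · exact not_mem_daF hat' hmem
        · rw [edes_cons, He, edes_cons (p := p), edes_cons (a := b)]
          rw [if_neg (by omega : ¬ b < p), if_neg (by omega : ¬ a < p),
            if_neg (by omega : ¬ b < a)]
          omega
    · have hx' : x ∈ daF a t := by
        rcases mem_daF_cons hx with ⟨h, _⟩ | h
        · exact absurd h.symm ha
        · exact h
      obtain ⟨P, Hdd, Hda, He⟩ := ih a htn hx'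
      have hnxt := hopR_nxt htn hx'
      rw [hopR_cons, if_neg ha]
      refine ⟨P.cons a, ?_, ?_, ?_⟩
      · rw [ddF_cons, Hdd, ddF_cons (p := p)]
        have : (nxt (hopR x t) < a ∧ a < p) = (nxt t < a ∧ a < p) := by
          apply propext; constructor <;> (rintro ⟨h1, h2⟩; refine ⟨?_, h2⟩)
          · exact hnxt.1.mp h1
          · exact hnxt.1.mpr h1
        simp only [this, Finset.union_insert]
      · rw [daF_cons, Hda, daF_cons (p := p)]
        have : (p < a ∧ a < nxt (hopR x t)) = (p < a ∧ a < nxt t) := by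
          apply propext; constructor <;> (rintro ⟨h1, h2⟩; refine ⟨h1, ?_⟩)
          · exact hnxt.2.mp h2
          · exact hnxt.2.mpr h2
        simp only [this, Finset.erase_union_distrib]
        have hnm : x ∉ (if p < a ∧ a < nxt t then ({a} : Finset ℕ) else ∅) := by
          split
          · simp; exact fun hh => ha hh.symm
          · simp
        rw [Finset.erase_eq_of_notMem hnm]
      · rw [edes_cons, He, edes_cons (p := p)]
        omega

/-- last element of `l`, default `p`. -/
def lastD (p : ℕ) : List ℕ → ℕ
  | [] => p
  | a :: t => lastD a t

@[simp] lemma lastD_nil (p : ℕ) : lastD p [] = p := rfl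
@[simp] lemma lastD_cons (p a : ℕ) (t : List ℕ) : lastD p (a :: t) = lastD a t := rfl

lemma lastD_concat (p c : ℕ) : ∀ (u : List ℕ), lastD p (u ++ [c]) = c := by
  intro u
  induction u generalizing p with
  | nil => rfl
  | cons a t ih => simpa using ih a

lemma mem_ddF_decomp {x p : ℕ} {l : List ℕ} (hx : x ∈ ddF p l) :
    ∃ u v, l = u ++ x :: v ∧ nxt v < x ∧ x < lastD p u := by
  induction l generalizing p with
  | nil => simp [ddF_nil] at hx
  | cons a t ih =>
    rw [ddF_cons] at hx
    rcases Finset.mem_union.mp hx with h | h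
    · split at h
      · next hc =>
        simp at h; subst h
        exact ⟨[], t, rfl, hc.1, by simpa using hc.2⟩
      · simp at h
    · obtain ⟨u, v, rfl, h1, h2⟩ := ih h
      exact ⟨a :: u, v, rfl, h1, by simpa using h2⟩

lemma mem_daF_decomp {x p : ℕ} {l : List ℕ} (hx : x ∈ daF p l) :
    ∃ u v, l = u ++ x :: v ∧ lastD p u < x ∧ x < nxt v := by
  induction l generalizing p with
  | nil => simp [daF_nil] at hx
  | cons a t ih =>
    rw [daF_cons] at hx
    rcases Finset.mem_union.mp hx with h | h
    · split at h
      · next hc =>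
        simp at h; subst h
        exact ⟨[], t, rfl, by simpa using hc.1, hc.2⟩
      · simp at h
    · obtain ⟨u, v, rfl, h1, h2⟩ := ih h
      exact ⟨a :: u, v, rfl, by simpa using h1, h2⟩

lemma mem_daF_of_decomp {x : ℕ} : ∀ (u : List ℕ) (p : ℕ) (v : List ℕ),
    lastD p u < x → x < nxt v → x ∈ daF p (u ++ x :: v) := by
  intro u
  induction u with
  | nil =>
    intro p v h1 h2
    rw [List.nil_append, daF_cons, if_pos ⟨by simpa using h1, h2⟩]
    simp
  | cons a t ih =>
    intro p v h1 h2
    rw [List.cons_append, daF_cons]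
    exact Finset.mem_union_right _ (ih a v (by simpa using h1) h2)

lemma run_split {x : ℕ} (hx0 : 0 < x) : ∀ (Q : List ℕ), x ∉ Q →
    ∃ R S, Q = R ++ S ∧ (∀ a ∈ R, x < a) ∧ nxt S < x := by
  intro Q
  induction Q with
  | nil => intro _; exact ⟨[], [], rfl, by simp, by simpa using hx0⟩
  | cons a Q' ih =>
    intro hx
    have hax : a ≠ x := fun h => hx (by simp [h])
    by_cases ha : x < a
    · obtain ⟨R, S, hQ, hR, hS⟩ := ih (fun h => hx (by simp [h]))
      exact ⟨a :: R, S, by rw [hQ]; rfl, by simpa using ⟨ha, hR⟩, hS⟩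
    · exact ⟨[], a :: Q', rfl, by simp, by simp; omega⟩

lemma run_split_rev {x : ℕ} : ∀ (u : List ℕ), x ∉ u →
    (∀ a ∈ u, x < a) ∨
      ∃ u₁ c B, u = u₁ ++ c :: B ∧ c < x ∧ (∀ a ∈ B, x < a) := by
  intro u
  induction u using List.reverseRecOn with
  | nil => intro _; left; simp
  | append_singleton u a ih =>
    intro hx
    have hax : a ≠ x := fun h => hx (by simp [h])
    by_cases ha : x < a
    · rcases ih (fun h => hx (by simp [h])) with h | ⟨u₁, c, B, hu, hc, hB⟩
      · left; intro b hb
        rcases List.mem_append.mp hb with hb | hb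
        · exact h b hb
        · simp at hb; omega
      · right
        refine ⟨u₁, c, B ++ [a], by rw [hu]; simp, hc, ?_⟩
        intro b hb
        rcases List.mem_append.mp hb with hb | hb
        · exact hB b hb
        · simp at hb; omega
    · right
      exact ⟨u, a, [], rfl, by omega, by simp⟩

lemma leadx_iff {x : ℕ} : ∀ (u : List ℕ) (v : List ℕ), x ∉ u →
    (leadx x (u ++ x :: v) ↔ ∀ a ∈ u, x < a) := by
  intro u
  induction u with
  | nil => intro v _; simp [leadx]
  | cons a u' ih =>
    intro v hx
    have hax : a ≠ x := fun h => hx (by simp [h])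
    have hxu : x ∉ u' := fun h => hx (by simp [h])
    show (a = x ∨ (x < a ∧ leadx x (u' ++ x :: v))) ↔ _
    rw [ih v hxu]
    constructor
    · rintro (h | ⟨h1, h2⟩)
      · exact absurd h hax
      · intro b hb
        rcases List.mem_cons.mp hb with hb | hb
        · rw [hb]; exact h1
        · exact h2 b hb
    · intro h
      exact Or.inr ⟨h a (by simp), fun b hb => h b (by simp [hb])⟩

lemma erase_run {x : ℕ} : ∀ (B V : List ℕ), x ∉ B → (B ++ x :: V).erase x = B ++ V := by
  intro B V hB
  rw [List.erase_append_right _ hB, List.erase_cons_head]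

lemma hopR_append {x : ℕ} : ∀ (u l : List ℕ), x ∉ u → hopR x (u ++ l) = u ++ hopR x l := by
  intro u l
  induction u with
  | nil => intro _; rfl
  | cons a u' ih =>
    intro hx
    have hax : a ≠ x := fun h => hx (by simp [h])
    rw [List.cons_append, hopR_cons, if_neg hax, ih (fun h => hx (by simp [h]))]
    rfl

lemma ins_append_bigs {x : ℕ} : ∀ (R S : List ℕ), (∀ a ∈ R, x < a) →
    ins x (R ++ S) = R ++ ins x S := by
  intro R S
  induction R with
  | nil => intro _; rfl
  | cons a R' ih =>
    intro hR
    rw [List.cons_append, ins_cons, if_neg (by have := hR a (by simp); omega), ih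
      (fun b hb => hR b (by simp [hb]))]
    rfl

lemma ins_small {x : ℕ} (S : List ℕ) (hS : nxt S < x) : ins x S = x :: S := by
  cases S with
  | nil => rfl
  | cons c m => rw [ins_cons, if_pos (by simpa using hS)]

lemma go_spec {x c : ℕ} (hc : c < x) : ∀ (P₁ B V : List ℕ), (∀ a ∈ B, x < a) →
    x ∉ P₁ → x ∉ B →
    go x (P₁ ++ c :: (B ++ x :: V)) = P₁ ++ c :: x :: (B ++ V) := by
  intro P₁
  induction P₁ with
  | nil =>
    intro B V hB hP hxB
    rw [List.nil_append, List.nil_append]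
    show (if c < x ∧ leadx x (B ++ x :: V) then c :: x :: (B ++ x :: V).erase x
      else c :: go x (B ++ x :: V)) = _
    rw [if_pos ⟨hc, (leadx_iff B V hxB).mpr hB⟩, erase_run B V hxB]
  | cons a P₁' ih =>
    intro B V hB hP hxB
    have hax : a ≠ x := fun h => hP (by simp [h])
    have hxP : x ∉ P₁' := fun h => hP (by simp [h])
    rw [List.cons_append]
    show (if a < x ∧ leadx x (P₁' ++ c :: (B ++ x :: V)) then _ else a :: go x (P₁' ++ c :: (B ++ x :: V))) = _
    rw [if_neg ?_, ih B V hB hxP hxB]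
    · rfl
    · rintro ⟨_, hl⟩
      have hshape : P₁' ++ c :: (B ++ x :: V) = (P₁' ++ c :: B) ++ x :: V := by simp
      rw [hshape, leadx_iff _ V ?notin] at hl
      · have := hl c (by simp)
        omega
      · intro hmem
        rcases List.mem_append.mp hmem with h | h
        · exact hxP h
        · rcases List.mem_cons.mp h with h | h
          · omega
          · exact hxB h

lemma nodup_parts {x : ℕ} {P Q w : List ℕ} (hw : w = P ++ x :: Q) (hn : w.Nodup) :
    x ∉ P ∧ x ∉ Q ∧ P.Nodup ∧ Q.Nodup := by
  subst hw
  rw [List.nodup_append] at hn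
  obtain ⟨h1, h2, h3⟩ := hn
  rw [List.nodup_cons] at h2
  exact ⟨fun h => h3 x h x (by simp) rfl, h2.1, h1, h2.2⟩

lemma hopL_hopR {x : ℕ} {w : List ℕ} (hn : w.Nodup) (hx : x ∈ daF 0 w) :
    hopL x (hopR x w) = w := by
  obtain ⟨P, Q, hw, hP, hQ⟩ := mem_daF_decomp hx
  have hx0 : 0 < x := by
    cases P with
    | nil => simpa using hP
    | cons a t => have : lastD 0 (a :: t) ≥ 0 := Nat.zero_le _; omega
  obtain ⟨hxP, hxQ, hPn, hQn⟩ := nodup_parts hw hn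
  obtain ⟨R, S, hQRS, hR, hS⟩ := run_split hx0 Q hxQ
  have hxR : x ∉ R := fun h => hxQ (by rw [hQRS]; exact List.mem_append.mpr (Or.inl h))
  have hxS : x ∉ S := fun h => hxQ (by rw [hQRS]; exact List.mem_append.mpr (Or.inr h))
  have hRne : R ≠ [] := by
    intro h
    rw [h, List.nil_append] at hQRS
    rw [hQRS] at hQ
    omega
  have hhop : hopR x w = P ++ (R ++ x :: S) := by
    rw [hw, hopR_append P _ hxP, hopR_cons, if_pos rfl, hQRS,
      ins_append_bigs R S hR, ins_small S hS]
  rcases P.eq_nil_or_concat with hPnil | ⟨P₁, c, hPc⟩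
  · subst hPnil
    rw [List.nil_append] at hw hhop
    rw [hhop, hopL, if_pos ?lead, erase_run R S hxR, ← hQRS, hw]
    case lead =>
      have : R ++ x :: S = R ++ x :: S := rfl
      exact (leadx_iff R S hxR).mpr hR
  · rw [List.concat_eq_append] at hPc
    have hc : c < x := by rw [hPc, lastD_concat] at hP; exact hP
    have hxP₁ : x ∉ P₁ := fun h => hxP (by rw [hPc]; simp [h])
    have hshape : hopR x w = P₁ ++ c :: (R ++ x :: S) := by
      rw [hhop, hPc]; simp
    rw [hshape, hopL, if_neg ?nolead, go_spec hc P₁ R S hR hxP₁ hxR]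
    · rw [hw, hPc, hQRS]; simp
    case nolead =>
      intro hl
      have hshape2 : P₁ ++ c :: (R ++ x :: S) = (P₁ ++ c :: R) ++ x :: S := by simp
      rw [hshape2, leadx_iff _ S ?_] at hl
      · have := hl c (by simp); omega
      · intro hmem
        rcases List.mem_append.mp hmem with h | h
        · exact hxP₁ h
        · rcases List.mem_cons.mp h with h | h
          · omega
          · exact hxR h

lemma hopR_hopL {x : ℕ} {w : List ℕ} (hn : w.Nodup) (hx : x ∈ ddF 0 w) :
    x ∈ daF 0 (hopL x w) ∧ hopR x (hopL x w) = w ∧ List.Perm (hopL x w) w := by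
  obtain ⟨U, V, hw, hV, hU⟩ := mem_ddF_decomp hx
  have hx0 : 0 < x := by omega
  obtain ⟨hxU, hxV, hUn, hVn⟩ := nodup_parts hw hn
  have hUne : U ≠ [] := by
    intro h; rw [h] at hU; simp at hU
  rcases run_split_rev U hxU with hall | ⟨u₁, c, B, hUc, hc, hB⟩
  · -- U entirely > x : x hops to the front
    have hlead : leadx x w := by rw [hw]; exact (leadx_iff U V hxU).mpr hall
    have hhopL : hopL x w = x :: (U ++ V) := by
      rw [hopL, if_pos hlead, hw, erase_run U V hxU]
    obtain ⟨u0, U', hU0⟩ : ∃ u0 U', U = u0 :: U' := by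
      cases U with
      | nil => exact absurd rfl hUne
      | cons a t => exact ⟨a, t, rfl⟩
    have hu0 : x < u0 := hall u0 (by rw [hU0]; simp)
    refine ⟨?_, ?_, ?_⟩
    · rw [hhopL, daF_cons, if_pos ⟨by simpa using hx0, by rw [hU0]; simpa using hu0⟩]
      simp
    · rw [hhopL, hopR_cons, if_pos rfl, ins_append_bigs U V hall, ins_small V hV, hw]
    · rw [hhopL, hw]
      exact (List.perm_middle).symm
  · -- x hops to just after c
    have hxu₁ : x ∉ u₁ := fun h => hxU (by rw [hUc]; simp [h])
    have hxB : x ∉ B := fun h => hxU (by rw [hUc]; simp [h])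
    have hBne : B ≠ [] := by
      intro h
      rw [hUc, h] at hU
      rw [lastD_concat] at hU
      omega
    obtain ⟨b0, B', hB0⟩ : ∃ b0 B', B = b0 :: B' := by
      cases B with
      | nil => exact absurd rfl hBne
      | cons a t => exact ⟨a, t, rfl⟩
    have hb0 : x < b0 := hB b0 (by rw [hB0]; simp)
    have hshape : w = u₁ ++ c :: (B ++ x :: V) := by rw [hw, hUc]; simp
    have hgo : hopL x w = u₁ ++ c :: x :: (B ++ V) := by
      rw [hopL, if_neg ?_, hshape, go_spec hc u₁ B V hB hxu₁ hxB]
      intro hl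
      have hshape2 : w = (u₁ ++ c :: B) ++ x :: V := by rw [hshape]; simp
      rw [hshape2, leadx_iff _ V ?_] at hl
      · have := hl c (by simp); omega
      · intro hmem
        rcases List.mem_append.mp hmem with h | h
        · exact hxu₁ h
        · rcases List.mem_cons.mp h with h | h
          · omega
          · exact hxB h
    refine ⟨?_, ?_, ?_⟩
    · rw [hgo]
      have hshape3 : u₁ ++ c :: x :: (B ++ V) = (u₁ ++ [c]) ++ x :: (B ++ V) := by simp
      rw [hshape3]
      apply mem_daF_of_decomp
      · rw [lastD_concat]; exact hc
      · rw [hB0]; simpa using hb0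
    · rw [hgo]
      have hshape3 : u₁ ++ c :: x :: (B ++ V) = (u₁ ++ [c]) ++ x :: (B ++ V) := by simp
      have hxu₁c : x ∉ u₁ ++ [c] := by
        intro hmem
        rcases List.mem_append.mp hmem with h | h
        · exact hxu₁ h
        · simp at h; omega
      rw [hshape3, hopR_append _ _ hxu₁c, hopR_cons, if_pos rfl,
        ins_append_bigs B V hB, ins_small V hV, hshape]
      simp
    · rw [hgo, hshape]
      refine List.Perm.append_left u₁ ?_
      refine List.Perm.cons c ?_
      exact (List.perm_middle).symm

lemma card_ite_union {a : ℕ} {S : Finset ℕ} (h : a ∉ S) (c : Prop) [Decidable c] :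
    ((if c then ({a} : Finset ℕ) else ∅) ∪ S).card = (if c then 1 else 0) + S.card := by
  split
  · rw [← Finset.insert_eq, Finset.card_insert_of_notMem h]; omega
  · simp

lemma count_identity : ∀ (l : List ℕ) (p : ℕ), l ≠ [] → 0 ∉ l → (p :: l).Nodup →
    (daF p l).card + 2 * edes p l
      = l.length + 1 + (ddF p l).card + (if nxt l < p then 1 else 0) := by
  intro l
  induction l with
  | nil => intro p h; exact absurd rfl h
  | cons a t ih =>
    intro p _ h0 hn
    have ha0 : 0 < a := Nat.pos_of_ne_zero (fun h => h0 (by simp [← h]))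
    have hpa : p ≠ a := by
      have : p ∉ a :: t := (List.nodup_cons.mp hn).1
      intro h; exact this (by simp [h])
    have hat : a ∉ t := (List.nodup_cons.mp (List.nodup_cons.mp hn).2).1
    cases t with
    | nil =>
      rw [daF_cons, daF_nil, ddF_cons, ddF_nil, edes_cons, edes_nil]
      rw [card_ite_union (by simp) _, card_ite_union (by simp) _]
      rw [nxt_nil, nxt_cons]
      simp only [nxt_nil, nxt_cons, List.length_singleton, Finset.card_empty]
      split_ifs <;> omega
    | cons b t' =>
      have hab : a ≠ b := by
        intro h; rw [h] at hat; exact hat (by simp)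
      have h0' : (0:ℕ) ∉ b :: t' := fun h => h0 (by simp [h])
      have hn' : (a :: b :: t').Nodup := (List.nodup_cons.mp hn).2
      have IH := ih a (by simp) h0' hn'
      rw [daF_cons, ddF_cons, edes_cons]
      rw [card_ite_union (not_mem_daF hat) _, card_ite_union (not_mem_ddF hat) _]
      rw [nxt_cons, nxt_cons]
      rw [nxt_cons] at IH
      simp only [nxt_cons, List.length_cons] at *
      split_ifs at * <;> omega

lemma dd_card_lt : ∀ (l : List ℕ) (p : ℕ), l ≠ [] → 0 ∉ l → (p :: l).Nodup →
    (ddF p l).card + 1 ≤ edes p l := by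
  intro l
  induction l with
  | nil => intro p h; exact absurd rfl h
  | cons a t ih =>
    intro p _ h0 hn
    have ha0 : 0 < a := Nat.pos_of_ne_zero (fun h => h0 (by simp [← h]))
    have hat : a ∉ t := (List.nodup_cons.mp (List.nodup_cons.mp hn).2).1
    cases t with
    | nil =>
      rw [ddF_cons, ddF_nil, edes_cons, edes_nil]
      rw [card_ite_union (by simp) _]
      rw [nxt_nil]
      simp only [nxt_nil, Finset.card_empty]
      split_ifs <;> omega
    | cons b t' =>
      have h0' : (0:ℕ) ∉ b :: t' := fun h => h0 (by simp [h])
      have hn' : (a :: b :: t').Nodup := (List.nodup_cons.mp hn).2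
      have IH := ih a (by simp) h0' hn'
      rw [ddF_cons, edes_cons]
      rw [card_ite_union (not_mem_ddF hat) _]
      rw [nxt_cons]
      split_ifs at * <;> omega

/-! ### permutation words -/

def word (n : ℕ) (σ : Equiv.Perm (Fin n)) : List ℕ := List.ofFn (fun i => (σ i : ℕ) + 1)

@[simp] lemma word_length (n : ℕ) (σ : Equiv.Perm (Fin n)) : (word n σ).length = n := by
  simp [word]

lemma word_getD {n : ℕ} (σ : Equiv.Perm (Fin n)) {i : ℕ} (h : i < n) :
    (word n σ).getD i 0 = pv n σ i + 1 := by
  have h' : i < (word n σ).length := by simpa using h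
  rw [List.getD_eq_getElem _ _ h']
  simp only [word, List.getElem_ofFn]
  simp [pv, dif_pos h]

lemma word_getD_ge {n : ℕ} (σ : Equiv.Perm (Fin n)) {i : ℕ} (h : n ≤ i) :
    (word n σ).getD i 0 = 0 := by
  apply List.getD_eq_default
  simpa using h

lemma word_nodup (n : ℕ) (σ : Equiv.Perm (Fin n)) : (word n σ).Nodup := by
  rw [word, List.nodup_ofFn]
  intro i j hij
  simp only [add_left_inj] at hij
  exact σ.injective (Fin.ext (by exact_mod_cast hij))

lemma word_mem {n : ℕ} (σ : Equiv.Perm (Fin n)) {y : ℕ} :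
    y ∈ word n σ ↔ 1 ≤ y ∧ y ≤ n := by
  rw [word, List.mem_ofFn]
  constructor
  · rintro ⟨i, rfl⟩
    have := (σ i).isLt
    show 1 ≤ (σ i : ℕ) + 1 ∧ (σ i : ℕ) + 1 ≤ n
    omega
  · rintro ⟨h1, h2⟩
    refine ⟨σ.symm ⟨y - 1, by omega⟩, ?_⟩
    simp only [Equiv.apply_symm_apply]
    show y - 1 + 1 = y
    omega

lemma word_zero_not_mem (n : ℕ) (σ : Equiv.Perm (Fin n)) : 0 ∉ word n σ := by
  rw [word_mem]; omega

lemma word_ne_nil {n : ℕ} (hn : 1 ≤ n) (σ : Equiv.Perm (Fin n)) : word n σ ≠ [] := by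
  intro h
  have := word_length n σ
  rw [h] at this
  simp at this
  omega

lemma word_injective (n : ℕ) : Function.Injective (word n) := by
  intro σ τ h
  rw [word, word, List.ofFn_inj] at h
  ext i
  have := congrFun h i
  simpa using this

/-! ### index characterizations -/

lemma nxt_eq_getD (t : List ℕ) : nxt t = t.getD 0 0 := by
  cases t <;> rfl

lemma ite_set_empty {a : ℕ} {c : Prop} [Decidable c] :
    ((if c then ({a} : Finset ℕ) else ∅) = ∅) ↔ ¬ c := by
  split <;> simp_all

lemma edes_eq_card : ∀ (l : List ℕ) (p : ℕ),
    edes p l = ((Finset.range (l.length + 1)).filter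
      (fun i => l.getD i 0 < if i = 0 then p else l.getD (i-1) 0)).card := by
  intro l
  induction l with
  | nil =>
    intro p
    rw [edes_nil, List.length_nil, zero_add, Finset.range_one, Finset.filter_singleton]
    simp only [List.getD_nil, if_pos (rfl : (0:ℕ) = 0)]
    split_ifs <;> simp
  | cons a t ih =>
    intro p
    rw [edes_cons, ih a, Finset.card_filter, Finset.card_filter, List.length_cons]
    conv_rhs => rw [Finset.sum_range_succ']
    have hsum : ∀ i ∈ Finset.range (t.length + 1),
        (if (a :: t).getD (i+1) 0 < (if i+1 = 0 then p else (a :: t).getD (i+1-1) 0) then 1 else 0)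
        = (if t.getD i 0 < (if i = 0 then a else t.getD (i-1) 0) then 1 else 0) := by
      intro i _
      cases i with
      | zero => simp
      | succ j => simp
    rw [Finset.sum_congr rfl hsum]
    simp
    omega

lemma ddF_empty_iff : ∀ (l : List ℕ) (p : ℕ),
    ddF p l = ∅ ↔ ∀ i, ¬ (l.getD (i+1) 0 < l.getD i 0 ∧
      l.getD i 0 < (if i = 0 then p else l.getD (i-1) 0)) := by
  intro l
  induction l with
  | nil => intro p; simp [ddF_nil, List.getD_nil]
  | cons a t ih =>
    intro p
    rw [ddF_cons, Finset.union_eq_empty, ite_set_empty, ih a, nxt_eq_getD]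
    constructor
    · rintro ⟨h1, h2⟩ i
      cases i with
      | zero => simpa using h1
      | succ j =>
        have := h2 j
        cases j with
        | zero => simpa using this
        | succ m => simpa using this
    · intro h
      refine ⟨by simpa using h 0, fun j => ?_⟩
      have := h (j+1)
      cases j with
      | zero => simpa using this
      | succ m => simpa using this

/-! ### translations -/

lemma edes_word {n : ℕ} (hn : 1 ≤ n) (σ : Equiv.Perm (Fin n)) :
    edes 0 (word n σ) = desNum n σ + 1 := by
  rw [edes_eq_card, word_length]
  have hset : (Finset.range (n + 1)).filter
      (fun i => (word n σ).getD i 0 < if i = 0 then 0 else (word n σ).getD (i-1) 0)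
      = insert n ((desSet n σ).image (· + 1)) := by
    ext i
    simp only [Finset.mem_filter, Finset.mem_range, Finset.mem_insert, Finset.mem_image,
      desSet, Finset.mem_filter, Finset.mem_range]
    constructor
    · rintro ⟨hi, hc⟩
      rcases eq_or_ne i 0 with rfl | h0
      · rw [if_pos rfl] at hc; omega
      rcases eq_or_ne i n with rfl | hin
      · left; rfl
      · right
        refine ⟨i - 1, ⟨by omega, ?_⟩, by omega⟩
        rw [if_neg h0] at hc
        rw [word_getD σ (by omega : i < n), word_getD σ (by omega : i - 1 < n)] at hc
        have : i - 1 + 1 = i := by omega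
        rw [this]
        omega
    · rintro (h | ⟨j, ⟨hj, hd⟩, rfl⟩)
      · refine ⟨by omega, ?_⟩
        rw [h, if_neg (by omega), word_getD_ge σ (le_refl n), word_getD σ (by omega : n - 1 < n)]
        omega
      · refine ⟨by omega, ?_⟩
        rw [if_neg (by omega), word_getD σ (by omega : j + 1 < n)]
        have : j + 1 - 1 = j := by omega
        rw [this, word_getD σ (by omega : j < n)]
        omega
  rw [hset, Finset.card_insert_of_notMem, Finset.card_image_of_injective _
    (add_left_injective 1)]
  · rfl
  · intro hmem
    obtain ⟨j, hj, hjn⟩ := Finset.mem_image.mp hmem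
    have := Finset.mem_range.mp (Finset.mem_filter.mp (by exact hj : j ∈ desSet n σ) |>.1)
    omega

lemma ddF_word_empty {n : ℕ} (hn : 1 ≤ n) (σ : Equiv.Perm (Fin n)) :
    ddF 0 (word n σ) = ∅ ↔ (¬ HasDoubleDescent n σ ∧ ¬ HasFinalDescent n σ) := by
  rw [ddF_empty_iff]
  constructor
  · intro h
    constructor
    · rintro ⟨i, hi, h1, h2⟩
      apply h (i + 1)
      rw [if_neg (by omega)]
      have e1 : i + 1 + 1 = i + 2 := by omega
      have e2 : i + 1 - 1 = i := by omega
      rw [e1, e2]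
      rw [word_getD σ (by omega : i + 2 < n), word_getD σ (by omega : i + 1 < n),
        word_getD σ (by omega : i < n)]
      omega
    · rintro ⟨h2n, hf⟩
      apply h (n - 1)
      rw [if_neg (by omega)]
      have h1 : n - 1 + 1 = n := by omega
      rw [h1, word_getD_ge σ (le_refl n), word_getD σ (by omega : n - 1 < n)]
      have h2 : n - 1 - 1 = n - 2 := by omega
      rw [h2, word_getD σ (by omega : n - 2 < n)]
      omega
  · rintro ⟨hdd, hfd⟩ i ⟨h1, h2⟩
    rcases eq_or_ne i 0 with rfl | h0
    · rw [if_pos rfl] at h2; omega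
    rcases Nat.lt_or_ge i n with hin | hin
    · rcases eq_or_ne i (n - 1) with hieq | hn1
      · apply hfd
        rw [hieq] at h2
        constructor
        · omega
        · rw [if_neg (by omega), word_getD σ (by omega : n - 1 < n)] at h2
          have : n - 1 - 1 = n - 2 := by omega
          rw [this, word_getD σ (by omega : n - 2 < n)] at h2
          omega
      · apply hdd
        refine ⟨i - 1, by omega, ?_, ?_⟩
        · rw [word_getD σ (by omega : i + 1 < n), word_getD σ hin] at h1
          have e1 : i - 1 + 2 = i + 1 := by omega
          have e2 : i - 1 + 1 = i := by omega
          rw [e1, e2]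
          omega
        · rw [if_neg h0, word_getD σ hin, word_getD σ (by omega : i - 1 < n)] at h2
          have e2 : i - 1 + 1 = i := by omega
          rw [e2]
          omega
    · rw [word_getD_ge σ (by omega : n ≤ i)] at h1
      omega

/-! ### the set of permutation words and statistics classes -/

def Wn (n : ℕ) : Finset (List ℕ) := Finset.univ.image (word n)

lemma mem_Wn_iff {n : ℕ} {u : List ℕ} :
    u ∈ Wn n ↔ u.length = n ∧ u.Nodup ∧ ∀ y ∈ u, 1 ≤ y ∧ y ≤ n := by
  constructor
  · intro hu
    obtain ⟨σ, _, rfl⟩ := Finset.mem_image.mp hu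
    exact ⟨word_length n σ, word_nodup n σ, fun y hy => (word_mem σ).mp hy⟩
  · rintro ⟨hlen, hnd, hmem⟩
    have hlt : ∀ i : Fin n, (i : ℕ) < u.length := fun i => by omega
    have hval : ∀ i : Fin n, u[(i:ℕ)]'(hlt i) - 1 < n := by
      intro i
      have := hmem _ (List.getElem_mem (hlt i))
      omega
    set f : Fin n → Fin n := fun i => ⟨u[(i:ℕ)]'(hlt i) - 1, hval i⟩ with hf
    have hinj : Function.Injective f := by
      intro i j hij
      have h1 := hmem _ (List.getElem_mem (hlt i))
      have h2 := hmem _ (List.getElem_mem (hlt j))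
      have hval' := congrArg Fin.val hij
      simp only [hf] at hval'
      have heq : u[(i:ℕ)]'(hlt i) = u[(j:ℕ)]'(hlt j) := by omega
      exact Fin.ext ((List.Nodup.getElem_inj_iff hnd).mp heq)
    have hbij : Function.Bijective f := (Finite.injective_iff_bijective).mp hinj
    refine Finset.mem_image.mpr ⟨Equiv.ofBijective f hbij, Finset.mem_univ _, ?_⟩
    apply List.ext_getElem (by simpa using hlen.symm)
    intro i h1 h2
    have hilt : i < n := by simpa using h1
    have hw : (word n (Equiv.ofBijective f hbij))[i]'h1 = (f ⟨i, hilt⟩ : ℕ) + 1 := by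
      simp [word, List.getElem_ofFn]
    rw [hw]
    have hge := hmem _ (List.getElem_mem h2)
    simp only [hf]
    show u[(i:ℕ)]'(hlt ⟨i, hilt⟩) - 1 + 1 = u[i]'h2
    have : u[(i:ℕ)]'(hlt ⟨i, hilt⟩) = u[i]'h2 := rfl
    omega

lemma perm_mem_Wn {n : ℕ} {u v : List ℕ} (hu : u ∈ Wn n) (hp : List.Perm v u) : v ∈ Wn n := by
  rw [mem_Wn_iff] at *
  exact ⟨hp.length_eq.trans hu.1, hp.nodup_iff.mpr hu.2.1,
    fun y hy => hu.2.2 y (hp.mem_iff.mp hy)⟩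

lemma Wn_nodup {n : ℕ} {u : List ℕ} (hu : u ∈ Wn n) : u.Nodup := (mem_Wn_iff.mp hu).2.1

lemma Wn_zero_not_mem {n : ℕ} {u : List ℕ} (hu : u ∈ Wn n) : 0 ∉ u := by
  intro h
  have := (mem_Wn_iff.mp hu).2.2 0 h
  omega

lemma Wn_ne_nil {n : ℕ} (hn : 1 ≤ n) {u : List ℕ} (hu : u ∈ Wn n) : u ≠ [] := by
  intro h
  have := (mem_Wn_iff.mp hu).1
  rw [h] at this
  simp at this
  omega

lemma w_identity {n : ℕ} (hn : 1 ≤ n) {w : List ℕ} (hw : w ∈ Wn n) :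
    (daF 0 w).card + 2 * edes 0 w = n + 1 + (ddF 0 w).card := by
  have h0 := Wn_zero_not_mem hw
  have := count_identity w 0 (Wn_ne_nil hn hw) h0
    (List.nodup_cons.mpr ⟨h0, Wn_nodup hw⟩)
  rw [(mem_Wn_iff.mp hw).1] at this
  simpa using this

lemma w_dd_lt {n : ℕ} (hn : 1 ≤ n) {w : List ℕ} (hw : w ∈ Wn n) :
    (ddF 0 w).card + 1 ≤ edes 0 w := by
  have h0 := Wn_zero_not_mem hw
  exact dd_card_lt w 0 (Wn_ne_nil hn hw) h0 (List.nodup_cons.mpr ⟨h0, Wn_nodup hw⟩)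

def Tjk (n j k : ℕ) : Finset (List ℕ) :=
  (Wn n).filter (fun w => (ddF 0 w).card = j ∧ edes 0 w = k + 1)

/-! ### the hop pairing -/

lemma sigma_bij (n : ℕ) (hn : 1 ≤ n) (j k : ℕ) :
    ((Tjk n j k).sigma (fun w => daF 0 w)).card
      = ((Tjk n (j+1) (k+1)).sigma (fun w => ddF 0 w)).card := by
  apply Finset.card_bij' (fun p _ => (⟨hopR p.2 p.1, p.2⟩ : Σ _ : List ℕ, ℕ))
    (fun p _ => (⟨hopL p.2 p.1, p.2⟩ : Σ _ : List ℕ, ℕ))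
  · rintro ⟨w, x⟩ hp
    dsimp only at hp ⊢
    obtain ⟨hw, hx⟩ := Finset.mem_sigma.mp hp
    obtain ⟨hWn, hD, hE⟩ := Finset.mem_filter.mp hw
    have hnd := Wn_nodup hWn
    obtain ⟨P, Hdd, Hda, He⟩ := hopR_main x w 0 hnd hx
    rw [Finset.mem_sigma]
    dsimp only
    constructor
    · rw [Tjk, Finset.mem_filter]
      refine ⟨perm_mem_Wn hWn P, ?_, ?_⟩
      · rw [Hdd, Finset.card_insert_of_notMem (fun hc => disj_dd_da 0 w hnd x hc hx), hD]
      · rw [He, hE]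
    · rw [Hdd]
      exact Finset.mem_insert_self x _
  · rintro ⟨w, x⟩ hp
    dsimp only at hp ⊢
    obtain ⟨hw, hx⟩ := Finset.mem_sigma.mp hp
    obtain ⟨hWn, hD, hE⟩ := Finset.mem_filter.mp hw
    have hnd := Wn_nodup hWn
    obtain ⟨hda, hRL, hPerm⟩ := hopR_hopL hnd hx
    have hnd0 : (hopL x w).Nodup := hPerm.nodup_iff.mpr hnd
    obtain ⟨P, Hdd, Hda, He⟩ := hopR_main x (hopL x w) 0 hnd0 hda
    rw [hRL] at Hdd He
    rw [Finset.mem_sigma]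
    dsimp only
    constructor
    · rw [Tjk, Finset.mem_filter]
      refine ⟨perm_mem_Wn hWn hPerm, ?_, ?_⟩
      · have hxnot : x ∉ ddF 0 (hopL x w) :=
          fun hc => disj_dd_da 0 (hopL x w) hnd0 x hc hda
        have := congrArg Finset.card Hdd
        rw [Finset.card_insert_of_notMem hxnot, hD] at this
        omega
      · omega
    · exact hda
  · rintro ⟨w, x⟩ hp
    dsimp only at hp ⊢
    obtain ⟨hw, hx⟩ := Finset.mem_sigma.mp hp
    obtain ⟨hWn, _, _⟩ := Finset.mem_filter.mp hw
    have hnd := Wn_nodup hWn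
    show (⟨hopL x (hopR x w), x⟩ : Σ _ : List ℕ, ℕ) = ⟨w, x⟩
    rw [hopL_hopR hnd hx]
  · rintro ⟨w, x⟩ hp
    dsimp only at hp ⊢
    obtain ⟨hw, hx⟩ := Finset.mem_sigma.mp hp
    obtain ⟨hWn, _, _⟩ := Finset.mem_filter.mp hw
    have hnd := Wn_nodup hWn
    show (⟨hopR x (hopL x w), x⟩ : Σ _ : List ℕ, ℕ) = ⟨w, x⟩
    rw [(hopR_hopL hnd hx).2.1]

lemma pair_rec (n : ℕ) (hn : 1 ≤ n) (j k : ℕ) :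
    (Tjk n (j+1) (k+1)).card * (j+1) = (Tjk n j k).card * (n + j - (2*k+1)) := by
  have hb := sigma_bij n hn j k
  rw [Finset.card_sigma, Finset.card_sigma] at hb
  have hL : ∑ w ∈ Tjk n j k, (daF 0 w).card = (Tjk n j k).card * (n + j - (2*k+1)) := by
    have hc : ∀ w ∈ Tjk n j k, (daF 0 w).card = n + j - (2*k+1) := by
      intro w hw
      obtain ⟨hWn, hD, hE⟩ := Finset.mem_filter.mp hw
      have hid := w_identity hn hWn
      omega
    rw [Finset.sum_congr rfl hc, Finset.sum_const, smul_eq_mul]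
  have hR : ∑ w ∈ Tjk n (j+1) (k+1), (ddF 0 w).card = (Tjk n (j+1) (k+1)).card * (j+1) := by
    have hc : ∀ w ∈ Tjk n (j+1) (k+1), (ddF 0 w).card = j + 1 := by
      intro w hw
      exact (Finset.mem_filter.mp hw).2.1
    rw [Finset.sum_congr rfl hc, Finset.sum_const, smul_eq_mul]
  rw [hL, hR] at hb
  exact hb.symm

lemma closed_form (n : ℕ) (hn : 1 ≤ n) : ∀ j k0, (Tjk n j (k0 + j)).card
    = Nat.choose (n - 1 - 2*k0) j * (Tjk n 0 k0).card := by
  intro j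
  induction j with
  | zero => intro k0; simp
  | succ j ih =>
    intro k0
    have hrec := pair_rec n hn j (k0 + j)
    have e1 : k0 + (j+1) = (k0 + j) + 1 := by omega
    rw [e1]
    have e2 : n + j - (2*(k0+j)+1) = (n - 1 - 2*k0) - j := by omega
    rw [ih k0, e2] at hrec
    have hch : Nat.choose (n-1-2*k0) (j+1) * (j+1)
        = Nat.choose (n-1-2*k0) j * ((n-1-2*k0) - j) := Nat.choose_succ_right_eq _ _
    have : (Tjk n (j+1) ((k0+j)+1)).card * (j+1)
        = (Nat.choose (n-1-2*k0) (j+1) * (Tjk n 0 k0).card) * (j+1) := by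
      rw [hrec]
      have h2 : Nat.choose (n-1-2*k0) (j+1) * (Tjk n 0 k0).card * (j+1)
          = (Nat.choose (n-1-2*k0) (j+1) * (j+1)) * (Tjk n 0 k0).card := by ring
      rw [h2, hch]
      ring
    exact Nat.eq_of_mul_eq_mul_right (by omega) this

lemma T0_card (n : ℕ) (hn : 1 ≤ n) (k : ℕ) :
    (Tjk n 0 k).card = (Finset.univ.filter fun σ : Equiv.Perm (Fin n) =>
      ¬ HasDoubleDescent n σ ∧ ¬ HasFinalDescent n σ ∧ desNum n σ = k).card := by
  rw [Tjk, Wn, Finset.filter_image]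
  rw [Finset.card_image_of_injective _ (word_injective n)]
  congr 1
  apply Finset.filter_congr
  intro σ _
  rw [Finset.card_eq_zero, ddF_word_empty hn σ, edes_word hn σ]
  constructor
  · rintro ⟨⟨h1, h2⟩, h3⟩
    exact ⟨h1, h2, by omega⟩
  · rintro ⟨h1, h2, h3⟩
    exact ⟨⟨h1, h2⟩, by omega⟩

/-! ### final assembly -/

theorem euler_gamma_positivity' (n : ℕ) (hn : 1 ≤ n) :
    eulerPoly n = ∑ k ∈ Finset.range ((n - 1) / 2 + 1),
      ((Finset.univ.filter fun σ : Equiv.Perm (Fin n) =>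
          ¬ HasDoubleDescent n σ ∧ ¬ HasFinalDescent n σ ∧ desNum n σ = k).card :
            Polynomial ℤ) * X ^ k * (1 + X) ^ (n - 1 - 2 * k) := by
  have hstep1 : eulerPoly n = ∑ w ∈ Wn n, X ^ (edes 0 w - 1) := by
    rw [eulerPoly, Wn, Finset.sum_image (fun a _ b _ h => word_injective n h)]
    apply Finset.sum_congr rfl
    intro σ _
    rw [edes_word hn σ]
    simp
  rw [hstep1]
  have hmaps : ∀ w ∈ Wn n,
      (((edes 0 w - 1) - (ddF 0 w).card, (ddF 0 w).card) : ℕ × ℕ)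
        ∈ Finset.range ((n-1)/2 + 1) ×ˢ Finset.range n := by
    intro w hw
    have hid := w_identity hn hw
    have hlt := w_dd_lt hn hw
    rw [Finset.mem_product, Finset.mem_range, Finset.mem_range]
    constructor
    · have hA : (daF 0 w).card ≥ 0 := Nat.zero_le _
      omega
    · omega
  rw [← Finset.sum_fiberwise_of_maps_to hmaps (fun w => (X : Polynomial ℤ) ^ (edes 0 w - 1))]
  have hfib : ∀ k0 j : ℕ, ((Wn n).filter (fun w =>
      (((edes 0 w - 1) - (ddF 0 w).card, (ddF 0 w).card) : ℕ × ℕ) = (k0, j)))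
        = Tjk n j (k0 + j) := by
    intro k0 j
    apply Finset.filter_congr
    intro w hw
    have hlt := w_dd_lt hn hw
    rw [Prod.mk.injEq]
    constructor
    · rintro ⟨h1, h2⟩
      exact ⟨h2, by omega⟩
    · rintro ⟨h1, h2⟩
      exact ⟨by omega, h1⟩
  have hinner : ∀ k0 j : ℕ,
      (∑ w ∈ (Wn n).filter (fun w =>
        (((edes 0 w - 1) - (ddF 0 w).card, (ddF 0 w).card) : ℕ × ℕ) = (k0, j)),
        (X : Polynomial ℤ) ^ (edes 0 w - 1))
      = ((Nat.choose (n - 1 - 2*k0) j * (Tjk n 0 k0).card : ℕ) : Polynomial ℤ) * X ^ (k0 + j) := by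
    intro k0 j
    rw [hfib k0 j]
    have hc : ∀ w ∈ Tjk n j (k0 + j), (X : Polynomial ℤ) ^ (edes 0 w - 1)
        = (X : Polynomial ℤ) ^ (k0 + j) := by
      intro w hw
      obtain ⟨hmem, hfil⟩ := Finset.mem_filter.mp hw
      rw [hfil.2]
      simp
    rw [Finset.sum_congr rfl hc, Finset.sum_const, closed_form n hn j k0, nsmul_eq_mul]
  calc ∑ p ∈ Finset.range ((n-1)/2 + 1) ×ˢ Finset.range n,
        ∑ w ∈ (Wn n).filter (fun w =>
          (((edes 0 w - 1) - (ddF 0 w).card, (ddF 0 w).card) : ℕ × ℕ) = p),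
          (X : Polynomial ℤ) ^ (edes 0 w - 1)
      = ∑ p ∈ Finset.range ((n-1)/2 + 1) ×ˢ Finset.range n,
          ((Nat.choose (n - 1 - 2*p.1) p.2 * (Tjk n 0 p.1).card : ℕ) : Polynomial ℤ)
            * X ^ (p.1 + p.2) := by
        apply Finset.sum_congr rfl
        intro p _
        exact hinner p.1 p.2
    _ = ∑ k0 ∈ Finset.range ((n-1)/2 + 1), ∑ j ∈ Finset.range n,
          ((Nat.choose (n - 1 - 2*k0) j * (Tjk n 0 k0).card : ℕ) : Polynomial ℤ)
            * X ^ (k0 + j) := by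
        rw [Finset.sum_product]
    _ = ∑ k0 ∈ Finset.range ((n-1)/2 + 1),
          ((Tjk n 0 k0).card : Polynomial ℤ) * X ^ k0 *
            ∑ j ∈ Finset.range n, ((Nat.choose (n - 1 - 2*k0) j : ℕ) : Polynomial ℤ) * X ^ j := by
        apply Finset.sum_congr rfl
        intro k0 _
        rw [Finset.mul_sum]
        apply Finset.sum_congr rfl
        intro j _
        push_cast
        rw [pow_add]
        ring
    _ = ∑ k0 ∈ Finset.range ((n-1)/2 + 1),
          ((Tjk n 0 k0).card : Polynomial ℤ) * X ^ k0 * (1 + X) ^ (n - 1 - 2*k0) := by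
        apply Finset.sum_congr rfl
        intro k0 _
        congr 1
        have hm : n - 1 - 2*k0 + 1 ≤ n := by omega
        rw [show ((1:Polynomial ℤ) + X) = (X + 1) by ring, add_pow]
        simp only [one_pow, mul_one]
        rw [← Finset.sum_subset (Finset.range_subset_range.mpr hm)]
        · apply Finset.sum_congr rfl
          intro j _
          ring
        · intro j _ hj
          simp only [Finset.mem_range, not_lt] at hj
          rw [Nat.choose_eq_zero_of_lt (by omega)]
          simp
    _ = _ := by
        apply Finset.sum_congr rfl
        intro k0 _
        rw [T0_card n hn k0]

end EGP

theorem euler_gamma_positivity (n : ℕ) (hn : 1 ≤ n) :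
    eulerPoly n = ∑ k ∈ Finset.range ((n - 1) / 2 + 1),
      ((Finset.univ.filter fun σ : Equiv.Perm (Fin n) =>
          ¬ HasDoubleDescent n σ ∧ ¬ HasFinalDescent n σ ∧ desNum n σ = k).card :
            Polynomial ℤ) * X ^ k * (1 + X) ^ (n - 1 - 2 * k) := EGP.euler_gamma_positivity' n hn
end
end

section
/- The inversion number and the major index of the inverse are equidistributed on each descent class: for every subset J ⊆ [n-1], Σ_{σ ∈ S_n, Des(σ)=J} q^{inv(σ)} = Σ_{σ ∈ S_n, Des(σ)=J} q^{maj(σ^{-1})}. -/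
open Finset Polynomial

open scoped Classical

noncomputable section

namespace FSproof


/-- number of inversions of a word -/
def listInv : List ℕ → ℕ
  | [] => 0
  | a :: t => t.countP (fun b => decide (b < a)) + listInv t

def majAux : ℕ → List ℕ → ℕ
  | _, [] => 0
  | _, [_] => 0
  | k, a :: b :: t => (if b < a then k + 1 else 0) + majAux (k+1) (b :: t)

def listMaj (w : List ℕ) : ℕ := majAux 0 w

/-- cross inversions between u and v (u entirely before v) -/
def cross (u v : List ℕ) : ℕ := (u.map fun a => v.countP (fun b => decide (b < a))).sum

theorem listInv_append (u v : List ℕ) :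
    listInv (u ++ v) = listInv u + listInv v + cross u v := by
  induction u with
  | nil => simp [listInv, cross]
  | cons a t ih =>
    simp only [List.cons_append, listInv, ih, cross, List.map_cons, List.sum_cons,
      List.append_eq, List.countP_append]
    ring

theorem cross_singleton (u : List ℕ) (x : ℕ) :
    cross u [x] = u.countP (fun a => decide (x < a)) := by
  induction u with
  | nil => simp [cross]
  | cons a t ih =>
    simp only [cross, List.map_cons, List.sum_cons, List.countP_cons] at *
    rw [ih]
    simp [List.countP_singleton]
    omega

theorem cross_perm_left {u u' : List ℕ} (h : u.Perm u') (v : List ℕ) :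
    cross u v = cross u' v := (h.map _).sum_eq

theorem cross_perm_right (u : List ℕ) {v v' : List ℕ} (h : v.Perm v') :
    cross u v = cross u v' := by
  unfold cross
  congr 1
  exact List.map_congr_left fun a _ => h.countP_eq _

theorem cross_append_right (u v w : List ℕ) :
    cross u (v ++ w) = cross u v + cross u w := by
  unfold cross
  induction u with
  | nil => simp
  | cons a t ih => simp [List.countP_append, ih]; ring

theorem majAux_append (k : ℕ) (w : List ℕ) (x : ℕ) :
    majAux k (w ++ [x]) = majAux k w + (if x < w.getLastD 0 then k + w.length else 0) := by
  induction w generalizing k with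
  | nil => simp [majAux]
  | cons a w ih =>
    cases w with
    | nil =>
      simp only [List.nil_append, majAux, List.getLastD_cons, List.length]
      show majAux k [a, x] = _
      rw [majAux]
      simp [majAux]
    | cons b t =>
      have h1 : majAux k ((a :: b :: t) ++ [x]) = (if b < a then k + 1 else 0) + majAux (k+1) ((b :: t) ++ [x]) := rfl
      have h2 : majAux k (a :: b :: t) = (if b < a then k + 1 else 0) + majAux (k+1) (b :: t) := rfl
      rw [h1, ih (k+1), h2]
      simp only [List.getLastD_cons, List.length]
      clear h1 h2
      split_ifs <;> omega

theorem listMaj_append (w : List ℕ) (x : ℕ) :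
    listMaj (w ++ [x]) = listMaj w + (if x < w.getLastD 0 then w.length else 0) := by
  have := majAux_append 0 w x
  simpa [listMaj] using this

/-! ### blocks -/

/-- Split a list into blocks, each ending right after a letter satisfying `p`.
If the list does not end with a `p`-letter, the trailing non-`p` letters form a final block. -/
def blocks (p : ℕ → Bool) : List ℕ → List (List ℕ)
  | [] => []
  | a :: t =>
    if p a then [a] :: blocks p t
    else
      match blocks p t with
      | [] => [[a]]
      | B :: R => (a :: B) :: R

theorem blocks_cons_pos {p : ℕ → Bool} {a : ℕ} (t : List ℕ) (ha : p a = true) :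
    blocks p (a :: t) = [a] :: blocks p t := by
  rw [blocks, if_pos ha]

theorem blocks_cons_neg_nil {p : ℕ → Bool} {a : ℕ} {t : List ℕ} (ha : p a = false)
    (hb : blocks p t = []) : blocks p (a :: t) = [[a]] := by
  rw [blocks, if_neg (by simp [ha]), hb]

theorem blocks_cons_neg_cons {p : ℕ → Bool} {a : ℕ} {t : List ℕ} {B : List ℕ}
    {R : List (List ℕ)} (ha : p a = false) (hb : blocks p t = B :: R) :
    blocks p (a :: t) = (a :: B) :: R := by
  rw [blocks, if_neg (by simp [ha]), hb]

theorem join_blocks (p : ℕ → Bool) : ∀ u : List ℕ, (blocks p u).flatten = u := by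
  intro u
  induction u with
  | nil => rfl
  | cons a t ih =>
    cases hpa : p a with
    | true => rw [blocks_cons_pos t hpa]; simp [ih]
    | false =>
      cases hb : blocks p t with
      | nil =>
        rw [blocks_cons_neg_nil hpa hb]
        rw [hb] at ih
        simp at ih
        simp [← ih]
      | cons B R =>
        rw [blocks_cons_neg_cons hpa hb]
        rw [hb] at ih
        simp only [List.flatten_cons] at ih ⊢
        simp [ih]

theorem blocks_eq_nil_iff (p : ℕ → Bool) (u : List ℕ) : blocks p u = [] ↔ u = [] := by
  constructor
  · intro h
    have := join_blocks p u
    rw [h] at this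
    simpa using this.symm
  · rintro rfl; rfl

theorem getLastD_of_ne_nil {t : List ℕ} (h : t ≠ []) (d d' : ℕ) :
    t.getLastD d = t.getLastD d' := by
  rcases t.eq_nil_or_concat with rfl | ⟨s, e, rfl⟩
  · exact absurd rfl h
  · simp

/-- structure of blocks when the last letter satisfies p -/
theorem blocks_struct (p : ℕ → Bool) : ∀ u : List ℕ, p (u.getLastD 0) = true →
    ∀ B ∈ blocks p u, ∃ s e, B = s ++ [e] ∧ (∀ a ∈ s, p a = false) ∧ p e = true := by
  intro u
  induction u with
  | nil => simp [blocks]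
  | cons a t ih =>
    intro hlast B hB
    rcases eq_or_ne t [] with rfl | htne
    · simp only [List.getLastD_cons, List.getLastD_nil] at hlast
      rw [blocks_cons_pos _ hlast] at hB
      have hBa : B = [a] := by simpa [blocks] using hB
      subst hBa
      exact ⟨[], a, by simp, by simp, hlast⟩
    · have hlast' : p (t.getLastD 0) = true := by
        rw [List.getLastD_cons] at hlast
        rwa [getLastD_of_ne_nil htne 0 a]
      cases hpa : p a with
      | true =>
        rw [blocks_cons_pos t hpa, List.mem_cons] at hB
        rcases hB with rfl | h
        · exact ⟨[], a, by simp, by simp, hpa⟩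
        · exact ih hlast' B h
      | false =>
        obtain ⟨B', R, hb⟩ := List.exists_cons_of_ne_nil
          (fun hnil => htne ((blocks_eq_nil_iff p t).mp hnil))
        rw [blocks_cons_neg_cons hpa hb, List.mem_cons] at hB
        rcases hB with rfl | h
        · obtain ⟨s, e, hBe, hs, he⟩ := ih hlast' B' (by rw [hb]; exact List.mem_cons_self)
          refine ⟨a :: s, e, by simp [hBe], ?_, he⟩
          intro x hx
          rcases List.mem_cons.mp hx with rfl | hx
          · exact hpa
          · exact hs x hx
        · exact ih hlast' B (by rw [hb]; exact List.mem_cons_of_mem _ h)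

/-- uniqueness of the block decomposition -/
theorem blocks_prefix (p : ℕ → Bool) (s : List ℕ) (e : ℕ) (t : List ℕ)
    (hs : ∀ a ∈ s, p a = false) (he : p e = true) :
    blocks p (s ++ e :: t) = (s ++ [e]) :: blocks p t := by
  induction s with
  | nil => simpa using blocks_cons_pos t he
  | cons a s' ih =>
    have ha : p a = false := hs a (List.mem_cons_self)
    have ih' := ih (fun x hx => hs x (List.mem_cons_of_mem _ hx))
    rw [List.cons_append, blocks_cons_neg_cons ha ih']
    simp

theorem blocks_join_canonical (p : ℕ → Bool) : ∀ Ds : List (List ℕ),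
    (∀ D ∈ Ds, ∃ s e, D = s ++ [e] ∧ (∀ a ∈ s, p a = false) ∧ p e = true) →
    blocks p Ds.flatten = Ds := by
  intro Ds
  induction Ds with
  | nil => intro; rfl
  | cons D R ih =>
    intro h
    obtain ⟨s, e, rfl, hs, he⟩ := h D (List.mem_cons_self)
    have h2 : (s ++ [e]) ++ R.flatten = s ++ e :: R.flatten := by simp
    rw [List.flatten_cons, h2, blocks_prefix p s e R.flatten hs he,
      ih (fun D hD => h D (List.mem_cons_of_mem _ hD))]

/-- cycle: move the last letter of a list to the front -/
def cyc (B : List ℕ) : List ℕ :=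
  match B.reverse with
  | [] => []
  | e :: s => e :: s.reverse

theorem cyc_eq (s : List ℕ) (e : ℕ) : cyc (s ++ [e]) = e :: s := by
  unfold cyc
  rw [List.reverse_append]
  simp

theorem cyc_perm (B : List ℕ) : (cyc B).Perm B := by
  rcases B.eq_nil_or_concat with rfl | ⟨s, e, rfl⟩
  · simp [cyc]
  · rw [List.concat_eq_append, cyc_eq]
    exact (List.perm_append_singleton e s).symm

def uncyc : List ℕ → List ℕ
  | [] => []
  | e :: s => s ++ [e]

theorem uncyc_cyc (s : List ℕ) (e : ℕ) : uncyc (cyc (s ++ [e])) = s ++ [e] := by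
  rw [cyc_eq]; rfl

/-! ### gamma -/

def pOf (x L : ℕ) : ℕ → Bool := fun a => (decide (a ≤ x)) == (decide (L ≤ x))

theorem pOf_last (x L : ℕ) : pOf x L L = true := by simp [pOf]

def gamma (x : ℕ) (u : List ℕ) : List ℕ :=
  ((blocks (pOf x (u.getLastD 0)) u).map cyc).flatten

theorem flatten_map_cyc_perm (Bs : List (List ℕ)) :
    ((Bs.map cyc).flatten).Perm Bs.flatten := by
  induction Bs with
  | nil => simp
  | cons B R ih =>
    simp only [List.map_cons, List.flatten_cons]
    exact (cyc_perm B).append ih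

theorem gamma_perm (x : ℕ) (u : List ℕ) : (gamma x u).Perm u := by
  unfold gamma
  exact (flatten_map_cyc_perm _).trans (by rw [join_blocks])

def pairCross : List (List ℕ) → ℕ
  | [] => 0
  | B :: R => cross B R.flatten + pairCross R

theorem listInv_flatten (Bs : List (List ℕ)) :
    listInv Bs.flatten = (Bs.map listInv).sum + pairCross Bs := by
  induction Bs with
  | nil => simp [listInv, pairCross]
  | cons B R ih =>
    simp only [List.flatten_cons, List.map_cons, List.sum_cons, pairCross]
    rw [listInv_append, ih]
    ring

theorem pairCross_map_cyc (Bs : List (List ℕ)) :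
    pairCross (Bs.map cyc) = pairCross Bs := by
  induction Bs with
  | nil => rfl
  | cons B R ih =>
    simp only [List.map_cons, pairCross]
    rw [ih, cross_perm_left (cyc_perm B), cross_perm_right B (flatten_map_cyc_perm R)]

theorem countP_eq_length_of (P : ℕ → Bool) (s : List ℕ) (h : ∀ a ∈ s, P a = true) :
    s.countP P = s.length := by
  rw [List.countP_eq_length]
  exact h

theorem countP_eq_zero_of (P : ℕ → Bool) (s : List ℕ) (h : ∀ a ∈ s, P a = false) :
    s.countP P = 0 := by
  rw [List.countP_eq_zero]
  intro a ha
  simp [h a ha]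

theorem pOf_false_A {x L a : ℕ} (hL : L ≤ x) : pOf x L a = false ↔ x < a := by
  by_cases h : a ≤ x <;> simp [pOf, h, hL] <;> omega

theorem pOf_true_A {x L a : ℕ} (hL : L ≤ x) : pOf x L a = true ↔ a ≤ x := by
  by_cases h : a ≤ x <;> simp [pOf, h, hL] <;> omega

theorem pOf_false_B {x L a : ℕ} (hL : x < L) : pOf x L a = false ↔ a ≤ x := by
  by_cases h : a ≤ x <;> simp [pOf, h] <;> omega

theorem pOf_true_B {x L a : ℕ} (hL : x < L) : pOf x L a = true ↔ x < a := by
  by_cases h : a ≤ x <;> simp [pOf, h] <;> omega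

theorem block_inv_A {x : ℕ} {s : List ℕ} {e : ℕ} (hs : ∀ a ∈ s, x < a) (he : e ≤ x) :
    listInv (cyc (s ++ [e])) + (s ++ [e]).countP (fun a => decide (x < a)) =
      listInv (s ++ [e]) := by
  rw [cyc_eq, listInv_append, cross_singleton]
  have c1 : List.countP (fun b => decide (b < e)) s = 0 :=
    countP_eq_zero_of _ s (fun a ha => by
      have := hs a ha
      simp only [decide_eq_false_iff_not]
      omega)
  have c2 : List.countP (fun a => decide (e < a)) s = s.length :=
    countP_eq_length_of _ s (fun a ha => by
      have := hs a ha
      simp only [decide_eq_true_eq]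
      omega)
  have c3 : (s ++ [e]).countP (fun a => decide (x < a)) = s.length := by
    rw [List.countP_append, countP_eq_length_of _ s (fun a ha => by
      have := hs a ha
      simp only [decide_eq_true_eq]
      omega)]
    simp
    omega
  show List.countP (fun b => decide (b < e)) s + listInv s + _ = _
  rw [c1, c2, c3]
  simp [listInv] <;> omega

theorem block_inv_B {x : ℕ} {s : List ℕ} {e : ℕ} (hs : ∀ a ∈ s, a ≤ x) (he : x < e) :
    listInv (cyc (s ++ [e])) =
      listInv (s ++ [e]) + (s ++ [e]).countP (fun a => decide (a ≤ x)) := by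
  rw [cyc_eq, listInv_append, cross_singleton]
  have c1 : List.countP (fun b => decide (b < e)) s = s.length :=
    countP_eq_length_of _ s (fun a ha => by
      have := hs a ha
      simp only [decide_eq_true_eq]
      omega)
  have c2 : List.countP (fun a => decide (e < a)) s = 0 :=
    countP_eq_zero_of _ s (fun a ha => by
      have := hs a ha
      simp only [decide_eq_false_iff_not]
      omega)
  have c3 : (s ++ [e]).countP (fun a => decide (a ≤ x)) = s.length := by
    rw [List.countP_append, countP_eq_length_of _ s (fun a ha => by
      have := hs a ha
      simp only [decide_eq_true_eq]
      omega)]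
    simp
    omega
  show List.countP (fun b => decide (b < e)) s + listInv s = _
  rw [c1, c2, c3]
  simp [listInv] <;> omega

theorem sum_inv_A (x : ℕ) : ∀ Bs : List (List ℕ),
    (∀ B ∈ Bs, ∃ s e, B = s ++ [e] ∧ (∀ a ∈ s, x < a) ∧ e ≤ x) →
    listInv ((Bs.map cyc).flatten) + (Bs.flatten).countP (fun a => decide (x < a)) =
      listInv Bs.flatten := by
  intro Bs
  induction Bs with
  | nil => simp [listInv]
  | cons B R ih =>
    intro h
    obtain ⟨s, e, rfl, hs, he⟩ := h B (List.mem_cons_self)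
    have ihR := ih (fun B hB => h B (List.mem_cons_of_mem _ hB))
    simp only [List.map_cons, List.flatten_cons]
    rw [listInv_append, listInv_append, List.countP_append,
      cross_perm_left (cyc_perm (s ++ [e])) _,
      cross_perm_right _ (flatten_map_cyc_perm R)]
    have hblock := block_inv_A hs he
    omega

theorem sum_inv_B (x : ℕ) : ∀ Bs : List (List ℕ),
    (∀ B ∈ Bs, ∃ s e, B = s ++ [e] ∧ (∀ a ∈ s, a ≤ x) ∧ x < e) →
    listInv ((Bs.map cyc).flatten) =
      listInv Bs.flatten + (Bs.flatten).countP (fun a => decide (a ≤ x)) := by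
  intro Bs
  induction Bs with
  | nil => simp [listInv]
  | cons B R ih =>
    intro h
    obtain ⟨s, e, rfl, hs, he⟩ := h B (List.mem_cons_self)
    have ihR := ih (fun B hB => h B (List.mem_cons_of_mem _ hB))
    simp only [List.map_cons, List.flatten_cons]
    rw [listInv_append, listInv_append, List.countP_append,
      cross_perm_left (cyc_perm (s ++ [e])) _,
      cross_perm_right _ (flatten_map_cyc_perm R)]
    have hblock := block_inv_B hs he
    omega

theorem gamma_inv_A {x : ℕ} {u : List ℕ} (hL : u.getLastD 0 ≤ x) :
    listInv (gamma x u) + u.countP (fun a => decide (x < a)) = listInv u := by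
  unfold gamma
  have h : ∀ B ∈ blocks (pOf x (u.getLastD 0)) u,
      ∃ s e, B = s ++ [e] ∧ (∀ a ∈ s, x < a) ∧ e ≤ x := by
    intro B hB
    obtain ⟨s, e, rfl, hs, he⟩ := blocks_struct _ u (pOf_last x _) B hB
    exact ⟨s, e, rfl, fun a ha => (pOf_false_A hL).mp (hs a ha), (pOf_true_A hL).mp he⟩
  have := sum_inv_A x (blocks (pOf x (u.getLastD 0)) u) h
  rwa [join_blocks] at this

theorem gamma_inv_B {x : ℕ} {u : List ℕ} (hL : x < u.getLastD 0) :
    listInv (gamma x u) = listInv u + u.countP (fun a => decide (a ≤ x)) := by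
  unfold gamma
  have h : ∀ B ∈ blocks (pOf x (u.getLastD 0)) u,
      ∃ s e, B = s ++ [e] ∧ (∀ a ∈ s, a ≤ x) ∧ x < e := by
    intro B hB
    obtain ⟨s, e, rfl, hs, he⟩ := blocks_struct _ u (pOf_last x _) B hB
    exact ⟨s, e, rfl, fun a ha => (pOf_false_B hL).mp (hs a ha), (pOf_true_B hL).mp he⟩
  have := sum_inv_B x (blocks (pOf x (u.getLastD 0)) u) h
  rwa [join_blocks] at this

theorem block_sub_same_side {p : ℕ → Bool} {s : List ℕ} {e a b : ℕ}
    (hs : ∀ c ∈ s, p c = false) (he : p e = true) (hside : p a = p b)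
    (hab : [a, b].Sublist (s ++ [e])) : [a, b].Sublist (cyc (s ++ [e])) := by
  rw [cyc_eq]
  rw [List.sublist_append_iff] at hab
  obtain ⟨l₁, l₂, hsplit, h1, h2⟩ := hab
  rcases l₁ with _ | ⟨c, l₁'⟩
  · simp only [List.nil_append] at hsplit
    subst hsplit
    have := h2.length_le
    simp at this
  · rcases l₁' with _ | ⟨d, l₁''⟩
    · simp only [List.cons_append, List.nil_append, List.cons.injEq] at hsplit
      obtain ⟨rfl, hsplit2⟩ := hsplit
      have hb : b = e := by
        have hl2 : l₂ = [b] := hsplit2.symm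
        subst hl2
        simpa using h2
      subst hb
      have ha : a ∈ s := by simpa using h1
      rw [hs a ha, he] at hside
      exact absurd hside (by simp)
    · injection hsplit with e1 rest
      injection rest with e2 e3
      obtain ⟨rfl, rfl⟩ := List.append_eq_nil_iff.mp e3.symm
      cases e1
      cases e2
      exact h1.cons e

theorem sublist_pair_cyc_flatten {p : ℕ → Bool} {a b : ℕ} (hside : p a = p b) :
    ∀ Bs : List (List ℕ),
    (∀ B ∈ Bs, ∃ s e, B = s ++ [e] ∧ (∀ c ∈ s, p c = false) ∧ p e = true) →
    [a, b].Sublist Bs.flatten → [a, b].Sublist (Bs.map cyc).flatten := by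
  intro Bs
  induction Bs with
  | nil => simp
  | cons B R ih =>
    intro h hab
    obtain ⟨s, e, rfl, hs, he⟩ := h _ (List.mem_cons_self)
    have ihR := ih (fun B hB => h B (List.mem_cons_of_mem _ hB))
    simp only [List.flatten_cons] at hab
    rw [List.sublist_append_iff] at hab
    obtain ⟨l₁, l₂, hsplit, h1, h2⟩ := hab
    simp only [List.map_cons, List.flatten_cons]
    rcases l₁ with _ | ⟨c, l₁'⟩
    · simp only [List.nil_append] at hsplit
      subst hsplit
      exact (ihR h2).trans (List.sublist_append_right _ _)
    · rcases l₁' with _ | ⟨d, l₁''⟩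
      · simp only [List.cons_append, List.nil_append, List.cons.injEq] at hsplit
        obtain ⟨rfl, hsplit2⟩ := hsplit
        have hbmem : b ∈ R.flatten := by
          have hl2 : l₂ = [b] := hsplit2.symm
          subst hl2
          simpa using h2
        have hamem : a ∈ cyc (s ++ [e]) := (cyc_perm _).mem_iff.mpr (h1.subset (by simp))
        have hbmem' : b ∈ (R.map cyc).flatten :=
          (flatten_map_cyc_perm R).mem_iff.mpr hbmem
        have := List.Sublist.append (List.singleton_sublist.mpr hamem)
          (List.singleton_sublist.mpr hbmem')
        simpa using this
      · injection hsplit with e1 rest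
        injection rest with e2 e3
        obtain ⟨rfl, rfl⟩ := List.append_eq_nil_iff.mp e3.symm
        cases e1
        cases e2
        exact (block_sub_same_side hs he hside h1).trans (List.sublist_append_left _ _)

theorem gamma_before {x a b : ℕ} {u : List ℕ}
    (hside : pOf x (u.getLastD 0) a = pOf x (u.getLastD 0) b)
    (hab : [a, b].Sublist u) : [a, b].Sublist (gamma x u) := by
  unfold gamma
  apply sublist_pair_cyc_flatten hside
  · exact blocks_struct _ u (pOf_last x _)
  · rw [join_blocks]
    exact hab

/-! ### phi (Foata's bijection) -/

def phiAux : List ℕ → List ℕ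
  | [] => []
  | x :: r => gamma x (phiAux r) ++ [x]

def phi (w : List ℕ) : List ℕ := phiAux w.reverse

theorem phiAux_perm : ∀ r : List ℕ, (phiAux r).Perm r.reverse := by
  intro r
  induction r with
  | nil => simp [phiAux]
  | cons x r' ih =>
    show (gamma x (phiAux r') ++ [x]).Perm (x :: r').reverse
    rw [List.reverse_cons]
    exact ((gamma_perm x (phiAux r')).trans ih).append (List.Perm.refl [x])

theorem phiAux_getLastD (x : ℕ) (r' : List ℕ) : (phiAux (x :: r')).getLastD 0 = x :=
  List.getLastD_concat

theorem countP_le_add_countP_gt (u : List ℕ) (x : ℕ) :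
    u.countP (fun a => decide (a ≤ x)) + u.countP (fun a => decide (x < a)) = u.length := by
  induction u with
  | nil => simp
  | cons a t ih =>
    simp only [List.countP_cons, List.length_cons]
    by_cases h : a ≤ x
    · simp [h, show ¬ x < a by omega]; omega
    · simp [h, show x < a by omega]; omega

theorem inv_phiAux : ∀ r : List ℕ, listInv (phiAux r) = listMaj r.reverse := by
  intro r
  induction r with
  | nil => simp [phiAux, listInv, listMaj, majAux]
  | cons x r' ih =>
    show listInv (gamma x (phiAux r') ++ [x]) = listMaj (x :: r').reverse
    rw [List.reverse_cons, listMaj_append, ← ih]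
    set u := phiAux r' with hu
    rw [listInv_append, cross_singleton]
    have hcount : ∀ P : ℕ → Bool, (gamma x u).countP P = u.countP P :=
      fun P => (gamma_perm x u).countP_eq P
    rcases r' with _ | ⟨y, r''⟩
    · simp [hu, phiAux, listInv, gamma, blocks]
    · have hL : u.getLastD 0 = y := phiAux_getLastD y r''
      have hL' : (r''.reverse ++ [y]).getLastD 0 = y := List.getLastD_concat
      show listInv (gamma x u) + listInv [x] + _ = _
      have hlen : u.length = (r''.reverse ++ [y]).length := (phiAux_perm _).length_eq.trans (by simp)
      rw [List.reverse_cons] at *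
      simp only [List.length_append, List.length_reverse, List.length_cons,
        List.length_nil] at hlen
      by_cases hxy : x < y
      · have hg := gamma_inv_B (u := u) (x := x) (by rw [hL]; exact hxy)
        rw [hg, hcount, hL']
        simp only [if_pos hxy]
        have hc := countP_le_add_countP_gt u x
        simp only [List.length_append, List.length_reverse, List.length_cons, List.length_nil]
        simp [listInv]
        omega
      · have hg := gamma_inv_A (u := u) (x := x) (by rw [hL]; omega)
        rw [hcount, hL']
        simp only [if_neg hxy]
        simp [listInv]
        omega

theorem inv_phi (w : List ℕ) : listInv (phi w) = listMaj w := by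
  have := inv_phiAux w.reverse
  rwa [List.reverse_reverse] at this

theorem phi_perm (w : List ℕ) : (phi w).Perm w := by
  have := phiAux_perm w.reverse
  rwa [List.reverse_reverse] at this

/-! ### the inverse of gamma, injectivity of phi -/

def delta (x : ℕ) (v : List ℕ) : List ℕ :=
  ((((blocks (pOf x (v.headD 0)) v.reverse).map List.reverse).reverse).map uncyc).flatten

theorem delta_gamma (x : ℕ) (u : List ℕ) : delta x (gamma x u) = u := by
  rcases eq_or_ne u [] with rfl | hne
  · simp [delta, gamma, blocks]
  · set L := u.getLastD 0 with hLdef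
    set p := pOf x L with hp
    obtain ⟨B₁, R, hB⟩ := List.exists_cons_of_ne_nil
      (fun hnil => hne ((blocks_eq_nil_iff p u).mp hnil))
    have hstruct := blocks_struct p u (pOf_last x L)
    obtain ⟨s₁, e₁, hB₁, hs₁, he₁⟩ := hstruct B₁ (by rw [hB]; exact List.mem_cons_self)
    have hgamma : gamma x u = ((blocks p u).map cyc).flatten := rfl
    have hhead : (gamma x u).headD 0 = e₁ := by
      rw [hgamma, hB, hB₁]
      simp [cyc_eq]
    have hq : pOf x ((gamma x u).headD 0) = p := by
      rw [hhead]
      funext a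
      simp only [hp, pOf]
      have : decide (e₁ ≤ x) = decide (L ≤ x) := by
        have := he₁
        simp only [hp, pOf, beq_iff_eq] at this
        exact this
      rw [this]
    unfold delta
    rw [hq, hgamma]
    rw [List.reverse_flatten]
    have hcanon : blocks p (((blocks p u).map cyc).map List.reverse).reverse.flatten
        = (((blocks p u).map cyc).map List.reverse).reverse := by
      apply blocks_join_canonical
      intro D hD
      rw [List.mem_reverse, List.mem_map] at hD
      obtain ⟨C, hC, rfl⟩ := hD
      rw [List.mem_map] at hC
      obtain ⟨B, hBmem, rfl⟩ := hC
      obtain ⟨s, e, rfl, hs, he⟩ := hstruct B hBmem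
      refine ⟨s.reverse, e, ?_, ?_, he⟩
      · rw [cyc_eq]
        simp
      · intro a ha
        rw [List.mem_reverse] at ha
        exact hs a ha
    rw [hcanon]
    simp only [List.map_reverse, List.reverse_reverse, List.map_map]
    conv_rhs => rw [← join_blocks p u]
    congr 1
    conv_rhs => rw [← List.map_id (blocks p u)]
    apply List.map_congr_left
    intro B hB
    obtain ⟨s, e, rfl, hs, he⟩ := hstruct B hB
    simp [Function.comp, cyc_eq, uncyc]

theorem phiAux_inj : ∀ r₁ r₂ : List ℕ, phiAux r₁ = phiAux r₂ → r₁ = r₂ := by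
  intro r₁
  induction r₁ with
  | nil =>
    intro r₂ h
    have : r₂.reverse.length = 0 := by
      rw [← (phiAux_perm r₂).length_eq, ← h]
      rfl
    simpa using (List.eq_nil_of_length_eq_zero (by simpa using this))
  | cons x r' ih =>
    intro r₂ h
    rcases r₂ with _ | ⟨y, r₂'⟩
    · exfalso
      have : (phiAux (x :: r')).length = 0 := by rw [h]; rfl
      rw [(phiAux_perm _).length_eq] at this
      simp at this
    · have h' : gamma x (phiAux r') ++ [x] = gamma y (phiAux r₂') ++ [y] := h
      obtain ⟨h1, h2⟩ := List.append_inj' h' rfl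
      have hxy : x = y := by injection h2
      subst hxy
      have := congrArg (delta x) h1
      rw [delta_gamma, delta_gamma] at this
      rw [ih _ this]

/-! ### order preservation -/

theorem sublist_pair_strip {a b x : ℕ} {w : List ℕ} (h : [a, b].Sublist (w ++ [x]))
    (hb : b ≠ x) : [a, b].Sublist w := by
  rw [List.sublist_append_iff] at h
  obtain ⟨l₁, l₂, hsplit, h1, h2⟩ := h
  rcases l₂ with _ | ⟨c, l₂'⟩
  · rw [List.append_nil] at hsplit
    rwa [← hsplit] at h1
  · exfalso
    have hc : c = x := by
      have := h2.subset (List.mem_cons_self)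
      simpa using this
    have hl2 : l₂' = [] := by
      have := h2.length_le
      simp only [List.length_cons, List.length_nil] at this
      exact List.eq_nil_of_length_eq_zero (by omega)
    subst hc; subst hl2
    apply hb
    have h3 := congrArg (fun l => List.getLastD l 0) hsplit
    rw [List.getLastD_concat] at h3
    simpa using h3

theorem sublist_pair_head_ne {a b x : ℕ} {w : List ℕ} (h : [a, b].Sublist (w ++ [x]))
    (hx : x ∉ w) (hab : a ≠ b) : a ≠ x := by
  rintro rfl
  rw [List.sublist_append_iff] at h
  obtain ⟨l₁, l₂, hsplit, h1, h2⟩ := h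
  rcases l₁ with _ | ⟨c, l₁'⟩
  · rw [List.nil_append] at hsplit
    subst hsplit
    have := h2.length_le
    simp at this
  · have hc : c = a := by injection hsplit with h' _; exact h'.symm
    subst hc
    exact hx (h1.subset (List.mem_cons_self))

theorem phiAux_before : ∀ r : List ℕ, r.Nodup → ∀ a b : ℕ, (b = a + 1 ∨ a = b + 1) →
    [a, b].Sublist r.reverse → [a, b].Sublist (phiAux r) := by
  intro r
  induction r with
  | nil => intro _ a b _ h; simp at h
  | cons x r' ih =>
    intro hn a b hadj hsub
    have hab : a ≠ b := by omega
    have hxr : x ∉ r' := (List.nodup_cons.mp hn).1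
    have hn' : r'.Nodup := (List.nodup_cons.mp hn).2
    rw [List.reverse_cons] at hsub
    show [a, b].Sublist (gamma x (phiAux r') ++ [x])
    by_cases hbx : b = x
    · have hamem : a ∈ r'.reverse := by
        rw [List.sublist_append_iff] at hsub
        obtain ⟨l₁, l₂, hsplit, h1, h2⟩ := hsub
        rcases l₁ with _ | ⟨c, l₁'⟩
        · rw [List.nil_append] at hsplit
          subst hsplit
          have := h2.length_le
          simp at this
        · rcases l₁' with _ | ⟨d, l₁''⟩
          · have hc : c = a := by injection hsplit with h' _; exact h'.symm
            subst hc
            exact h1.subset (List.mem_cons_self)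
          · exfalso
            injection hsplit with e1 rest
            injection rest with e2 e3
            apply hxr
            rw [← List.mem_reverse]
            have hd : d ∈ r'.reverse := h1.subset (by simp)
            rwa [← e2, hbx] at hd
      have hamem' : a ∈ gamma x (phiAux r') :=
        (gamma_perm _ _).mem_iff.mpr ((phiAux_perm r').mem_iff.mpr hamem)
      have hfin := List.Sublist.append (List.singleton_sublist.mpr hamem')
        (List.Sublist.refl [x])
      rw [hbx]
      simpa using hfin
    · have hax : a ≠ x := sublist_pair_head_ne hsub (by simpa using hxr) hab
      have hsub' : [a, b].Sublist r'.reverse := sublist_pair_strip hsub hbx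
      have hih : [a, b].Sublist (phiAux r') := ih hn' a b hadj hsub'
      have hside : pOf x ((phiAux r').getLastD 0) a = pOf x ((phiAux r').getLastD 0) b := by
        unfold pOf
        have : decide (a ≤ x) = decide (b ≤ x) := by
          rw [decide_eq_decide]
          omega
        rw [this]
      exact (gamma_before hside hih).trans (List.sublist_append_left _ _)

theorem phi_before {w : List ℕ} (hn : w.Nodup) {a b : ℕ} (hadj : b = a + 1 ∨ a = b + 1)
    (h : [a, b].Sublist w) : [a, b].Sublist (phi w) := by
  apply phiAux_before w.reverse (by simpa using hn)
  · exact hadj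
  · rwa [List.reverse_reverse]

/-! ### idxOf bridge -/

theorem sublist_pair_iff_indexOf : ∀ {l : List ℕ}, l.Nodup → ∀ {a b : ℕ}, a ∈ l → b ∈ l →
    a ≠ b → ([a, b].Sublist l ↔ l.idxOf a < l.idxOf b) := by
  intro l
  induction l with
  | nil => intro _ a b ha; simp at ha
  | cons c t ih =>
    intro hn a b ha hb hab
    have hct : c ∉ t := (List.nodup_cons.mp hn).1
    have hnt : t.Nodup := (List.nodup_cons.mp hn).2
    by_cases hac : a = c
    · subst hac
      have hbt : b ∈ t := by
        rcases List.mem_cons.mp hb with rfl | h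
        · exact absurd rfl hab
        · exact h
      constructor
      · intro _
        rw [List.idxOf_cons_self]
        rw [List.idxOf_cons_ne _ hab]
        omega
      · intro _
        exact (List.singleton_sublist.mpr hbt).cons₂ a
    · by_cases hbc : b = c
      · subst hbc
        constructor
        · intro h
          exfalso
          cases h with
          | cons _ h' => exact hct (h'.subset (by simp))
          | cons_cons _ h' => exact hac rfl
        · intro h
          rw [List.idxOf_cons_self, List.idxOf_cons_ne _ (fun h' => hac h'.symm)] at h
          omega
      · have hat : a ∈ t := by
          rcases List.mem_cons.mp ha with rfl | h
          · exact absurd rfl hac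
          · exact h
        have hbt : b ∈ t := by
          rcases List.mem_cons.mp hb with rfl | h
          · exact absurd rfl hbc
          · exact h
        rw [List.idxOf_cons_ne _ (fun h' => hac h'.symm),
          List.idxOf_cons_ne _ (fun h' => hbc h'.symm)]
        constructor
        · intro h
          have h' : [a, b].Sublist t := by
            cases h with
            | cons _ h' => exact h'
            | cons_cons _ h' => exact absurd rfl hac
          rw [← Nat.add_lt_add_iff_right (k := 1)] at *
          have := (ih hnt hat hbt hab).mp h'
          omega
        · intro h
          exact ((ih hnt hat hbt hab).mpr (by omega)).cons c

theorem indexOf_ne_of_ne {l : List ℕ} (hn : l.Nodup) {a b : ℕ} (ha : a ∈ l) (hb : b ∈ l)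
    (hab : a ≠ b) : l.idxOf a ≠ l.idxOf b := by
  intro h
  apply hab
  have h1 := List.idxOf_get (List.idxOf_lt_length_iff.mpr ha)
  have h2 := List.idxOf_get (List.idxOf_lt_length_iff.mpr hb)
  rw [← h1, ← h2]
  congr 1
  exact Fin.ext h

theorem sublist_pair_total {l : List ℕ} (hn : l.Nodup) {a b : ℕ} (ha : a ∈ l) (hb : b ∈ l)
    (hab : a ≠ b) : [a, b].Sublist l ∨ [b, a].Sublist l := by
  rcases Nat.lt_or_ge (l.idxOf a) (l.idxOf b) with h | h
  · exact Or.inl ((sublist_pair_iff_indexOf hn ha hb hab).mpr h)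
  · refine Or.inr ((sublist_pair_iff_indexOf hn hb ha (Ne.symm hab)).mpr ?_)
    have := indexOf_ne_of_ne hn ha hb hab
    omega

theorem phi_before_iff {w : List ℕ} (hn : w.Nodup) {a b : ℕ} (hadj : b = a + 1 ∨ a = b + 1)
    (ha : a ∈ w) (hb : b ∈ w) :
    ([a, b].Sublist w ↔ [a, b].Sublist (phi w)) := by
  have hab : a ≠ b := by omega
  have hnphi : (phi w).Nodup := (phi_perm w).nodup_iff.mpr hn
  have haphi : a ∈ phi w := (phi_perm w).mem_iff.mpr ha
  have hbphi : b ∈ phi w := (phi_perm w).mem_iff.mpr hb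
  constructor
  · exact phi_before hn hadj
  · intro h
    rcases sublist_pair_total hn ha hb hab with h' | h'
    · exact h'
    · exfalso
      have h2 : [b, a].Sublist (phi w) := phi_before hn (by omega) h'
      have i1 := (sublist_pair_iff_indexOf hnphi haphi hbphi hab).mp h
      have i2 := (sublist_pair_iff_indexOf hnphi hbphi haphi (Ne.symm hab)).mp h2
      omega


theorem phi_injective : Function.Injective phi := by
  intro w₁ w₂ h
  have h1 := phiAux_inj _ _ h
  have h2 := congrArg List.reverse h1
  simpa using h2

/-! ### dictionary -/

variable {n : ℕ}

def word (n : ℕ) (σ : Equiv.Perm (Fin n)) : List ℕ := List.ofFn fun i => (σ i : ℕ)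

theorem word_length (σ : Equiv.Perm (Fin n)) : (word n σ).length = n := by simp [word]

theorem pv_def (σ : Equiv.Perm (Fin n)) {i : ℕ} (h : i < n) :
    pv n σ i = (σ ⟨i, h⟩ : ℕ) := dif_pos h

theorem word_getElem (σ : Equiv.Perm (Fin n)) {i : ℕ} (h : i < n)
    (h' : i < (word n σ).length) : (word n σ)[i] = (σ ⟨i, h⟩ : ℕ) := by
  simp [word]

theorem word_get (σ : Equiv.Perm (Fin n)) (i : ℕ) (h : i < n) (h' : i < (word n σ).length) :
    (word n σ).get ⟨i, h'⟩ = (σ ⟨i, h⟩ : ℕ) := by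
  rw [List.get_eq_getElem]
  exact word_getElem σ h h'

theorem word_getD (σ : Equiv.Perm (Fin n)) {i : ℕ} (h : i < n) :
    (word n σ).getD i 0 = pv n σ i := by
  have h' : i < (word n σ).length := by rw [word_length]; exact h
  rw [List.getD_eq_getElem _ _ h', pv_def σ h]
  exact word_getElem σ h h' 

theorem word_nodup (σ : Equiv.Perm (Fin n)) : (word n σ).Nodup := by
  rw [word, List.nodup_ofFn]
  intro i j h
  exact σ.injective (Fin.ext h)

theorem word_mem (σ : Equiv.Perm (Fin n)) {a : ℕ} : a ∈ word n σ ↔ a < n := by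
  rw [word, List.mem_ofFn]
  constructor
  · rintro ⟨i, rfl⟩; exact (σ i).isLt
  · intro h; exact ⟨σ⁻¹ ⟨a, h⟩, by simp⟩

theorem word_inj (σ τ : Equiv.Perm (Fin n)) (h : word n σ = word n τ) : σ = τ := by
  apply Equiv.ext
  intro i
  have h2 := congrArg (fun l => l.getD (i : ℕ) 0) h
  simp only [word_getD _ i.isLt] at h2
  rw [pv_def σ i.isLt, pv_def τ i.isLt] at h2
  simp only [Fin.eta] at h2
  exact Fin.ext h2

theorem countP_eq_sum_range (P : ℕ → Bool) : ∀ t : List ℕ,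
    t.countP P = ∑ j ∈ Finset.range t.length, if P (t.getD j 0) then 1 else 0 := by
  intro t
  induction t with
  | nil => simp
  | cons a t ih =>
    rw [List.countP_cons, List.length_cons, Finset.sum_range_succ']
    simp only [List.getD_cons_succ, List.getD_cons_zero]
    rw [ih]

theorem listInv_eq_sum (w : List ℕ) : listInv w =
    ∑ i ∈ Finset.range w.length, ∑ j ∈ Finset.range w.length,
      if i < j ∧ w.getD j 0 < w.getD i 0 then 1 else 0 := by
  induction w with
  | nil => simp [listInv]
  | cons a t ih =>
    rw [listInv, List.length_cons, Finset.sum_range_succ']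
    have h0 : (∑ j ∈ Finset.range (t.length + 1),
        if 0 < j ∧ (a :: t).getD j 0 < (a :: t).getD 0 0 then 1 else 0)
        = t.countP (fun b => decide (b < a)) := by
      rw [Finset.sum_range_succ', countP_eq_sum_range]
      simp only [List.getD_cons_succ, List.getD_cons_zero]
      have : ∀ j, (if 0 < j + 1 ∧ t.getD j 0 < a then 1 else 0)
          = (if (decide (t.getD j 0 < a)) = true then 1 else 0) := by
        intro j
        split_ifs <;> simp_all <;> omega
      rw [Finset.sum_congr rfl (fun j _ => this j)]
      simp
    have h1 : ∀ i, (∑ j ∈ Finset.range (t.length + 1),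
        if i + 1 < j ∧ (a :: t).getD j 0 < (a :: t).getD (i+1) 0 then 1 else 0)
        = ∑ j ∈ Finset.range t.length,
          if i < j ∧ t.getD j 0 < t.getD i 0 then 1 else 0 := by
      intro i
      rw [Finset.sum_range_succ']
      simp only [List.getD_cons_succ]
      have : (if i + 1 < 0 ∧ (a :: t).getD 0 0 < t.getD i 0 then 1 else 0) = 0 := by
        split_ifs <;> omega
      rw [this, add_zero]
      apply Finset.sum_congr rfl
      intro j _
      split_ifs <;> simp_all <;> omega
    rw [h0, Finset.sum_congr rfl (fun i _ => h1 i), ih]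
    omega

theorem invNum_eq (σ : Equiv.Perm (Fin n)) : invNum n σ = listInv (word n σ) := by
  rw [invNum, Finset.card_filter, Finset.sum_product, listInv_eq_sum, word_length]
  apply Finset.sum_congr rfl
  intro i hi
  apply Finset.sum_congr rfl
  intro j hj
  rw [Finset.mem_range] at hi hj
  rw [word_getD σ hi, word_getD σ hj]

theorem majAux_eq_sum : ∀ (w : List ℕ) (k : ℕ), majAux k w =
    ∑ i ∈ Finset.range (w.length - 1), if w.getD (i+1) 0 < w.getD i 0 then k + i + 1 else 0 := by
  intro w
  induction w with
  | nil => intro k; simp [majAux]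
  | cons a w ih =>
    intro k
    rcases w with _ | ⟨b, t⟩
    · simp [majAux]
    · have hL : (a :: b :: t).length - 1 = t.length + 1 := by simp
      rw [hL, Finset.sum_range_succ']
      show (if b < a then k + 1 else 0) + majAux (k+1) (b :: t) = _
      rw [ih (k+1)]
      have hl2 : (b :: t).length - 1 = t.length := by simp
      rw [hl2]
      simp only [List.getD_cons_succ, List.getD_cons_zero]
      have hc : ∀ x ∈ Finset.range t.length,
          (if t.getD x 0 < (b :: t).getD x 0 then k + 1 + x + 1 else 0)
          = (if t.getD x 0 < (b :: t).getD x 0 then k + (x+1) + 1 else 0) := by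
        intro x _
        split_ifs <;> omega
      rw [Finset.sum_congr rfl hc]
      split_ifs <;> omega

theorem majNum_eq (σ : Equiv.Perm (Fin n)) : majNum n σ = listMaj (word n σ) := by
  rw [majNum, desSet, Finset.sum_filter, listMaj, majAux_eq_sum, word_length]
  apply Finset.sum_congr rfl
  intro i hi
  rw [Finset.mem_range] at hi
  rw [word_getD σ (by omega), word_getD σ (by omega)]
  split_ifs <;> omega

theorem pv_lt (σ : Equiv.Perm (Fin n)) {i : ℕ} (h : i < n) : pv n σ i < n := by
  rw [pv, dif_pos h]
  exact (σ _).isLt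

theorem pv_pv_inv (σ : Equiv.Perm (Fin n)) {i : ℕ} (h : i < n) :
    pv n σ⁻¹ (pv n σ i) = i := by
  rw [pv_def σ h, pv_def σ⁻¹ (σ ⟨i, h⟩).isLt]
  simp

theorem pv_inv_pv (σ : Equiv.Perm (Fin n)) {i : ℕ} (h : i < n) :
    pv n σ (pv n σ⁻¹ i) = i := by
  rw [pv_def σ⁻¹ h, pv_def σ (σ⁻¹ ⟨i, h⟩).isLt]
  simp

theorem invNum_inv (σ : Equiv.Perm (Fin n)) : invNum n σ = invNum n σ⁻¹ := by
  unfold invNum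
  apply Finset.card_bij' (i := fun p _ => ((pv n σ p.2), (pv n σ p.1)))
    (j := fun q _ => ((pv n σ⁻¹ q.2), (pv n σ⁻¹ q.1)))
  · intro p hp
    rw [Finset.mem_filter, Finset.mem_product, Finset.mem_range, Finset.mem_range] at hp ⊢
    obtain ⟨⟨h1, h2⟩, h3, h4⟩ := hp
    refine ⟨⟨pv_lt σ h2, pv_lt σ h1⟩, h4, ?_⟩
    rw [pv_pv_inv σ h1, pv_pv_inv σ h2]
    exact h3
  · intro q hq
    rw [Finset.mem_filter, Finset.mem_product, Finset.mem_range, Finset.mem_range] at hq ⊢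
    obtain ⟨⟨h1, h2⟩, h3, h4⟩ := hq
    refine ⟨⟨pv_lt σ⁻¹ h2, pv_lt σ⁻¹ h1⟩, h4, ?_⟩
    rw [pv_inv_pv σ h1, pv_inv_pv σ h2]
    exact h3
  · intro p hp
    rw [Finset.mem_filter, Finset.mem_product, Finset.mem_range, Finset.mem_range] at hp
    obtain ⟨⟨h1, h2⟩, _, _⟩ := hp
    simp only
    rw [pv_pv_inv σ h1, pv_pv_inv σ h2]
  · intro q hq
    rw [Finset.mem_filter, Finset.mem_product, Finset.mem_range, Finset.mem_range] at hq
    obtain ⟨⟨h1, h2⟩, _, _⟩ := hq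
    simp only
    rw [pv_inv_pv σ h1, pv_inv_pv σ h2]

theorem indexOf_word (τ : Equiv.Perm (Fin n)) {v : ℕ} (h : v < n) :
    (word n τ).idxOf v = (τ⁻¹ ⟨v, h⟩ : ℕ) := by
  set k : Fin n := τ⁻¹ ⟨v, h⟩ with hk
  have hkl : (k : ℕ) < (word n τ).length := by rw [word_length]; exact k.isLt
  have hget : (word n τ).get ⟨k, hkl⟩ = v := by
    rw [word_get τ k k.isLt]
    simp [hk]
  rw [← hget]
  exact List.get_idxOf (word_nodup τ) ⟨k, hkl⟩

theorem pv_inv_eq_indexOf (τ : Equiv.Perm (Fin n)) {j : ℕ} (h : j < n) :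
    pv n τ⁻¹ j = (word n τ).idxOf j := by
  rw [pv, dif_pos h, indexOf_word τ h]

theorem mem_desSet_inv (τ : Equiv.Perm (Fin n)) (i : ℕ) :
    i ∈ desSet n τ⁻¹ ↔ i < n - 1 ∧ [i+1, i].Sublist (word n τ) := by
  rw [desSet, Finset.mem_filter, Finset.mem_range]
  constructor
  · rintro ⟨h1, h2⟩
    refine ⟨h1, ?_⟩
    rw [pv_inv_eq_indexOf τ (by omega), pv_inv_eq_indexOf τ (by omega)] at h2
    exact (sublist_pair_iff_indexOf (word_nodup τ) ((word_mem τ).mpr (by omega))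
      ((word_mem τ).mpr (by omega)) (by omega)).mpr h2
  · rintro ⟨h1, h2⟩
    refine ⟨h1, ?_⟩
    rw [pv_inv_eq_indexOf τ (by omega), pv_inv_eq_indexOf τ (by omega)]
    exact (sublist_pair_iff_indexOf (word_nodup τ) ((word_mem τ).mpr (by omega))
      ((word_mem τ).mpr (by omega)) (by omega)).mp h2

/-! ### the permutation-level Foata bijection -/

theorem phi_word_length (τ : Equiv.Perm (Fin n)) : (phi (word n τ)).length = n :=
  (phi_perm _).length_eq.trans (word_length τ)

theorem phi_word_mem (τ : Equiv.Perm (Fin n)) {a : ℕ} : a ∈ phi (word n τ) ↔ a < n :=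
  ((phi_perm _).mem_iff).trans (word_mem τ)

theorem phi_word_nodup (τ : Equiv.Perm (Fin n)) : (phi (word n τ)).Nodup :=
  ((phi_perm _).nodup_iff).mpr (word_nodup τ)

def PhiFun (τ : Equiv.Perm (Fin n)) : Fin n → Fin n := fun i =>
  ⟨(phi (word n τ)).getD i 0, by
    rw [← phi_word_mem τ]
    have h : (i : ℕ) < (phi (word n τ)).length := by rw [phi_word_length]; exact i.isLt
    rw [List.getD_eq_getElem _ _ h]
    exact List.getElem_mem h⟩

theorem PhiFun_injective (τ : Equiv.Perm (Fin n)) : Function.Injective (PhiFun τ) := by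
  intro i j h
  have h2 : (phi (word n τ)).getD i 0 = (phi (word n τ)).getD j 0 := congrArg Fin.val h
  have hi : (i : ℕ) < (phi (word n τ)).length := by rw [phi_word_length]; exact i.isLt
  have hj : (j : ℕ) < (phi (word n τ)).length := by rw [phi_word_length]; exact j.isLt
  rw [List.getD_eq_getElem _ _ hi, List.getD_eq_getElem _ _ hj] at h2
  have h4 := List.nodup_iff_injective_get.mp (phi_word_nodup τ)
    (a₁ := ⟨i, hi⟩) (a₂ := ⟨j, hj⟩) (by simpa [List.get_eq_getElem] using h2)
  have h5 := congrArg Fin.val h4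
  simp only at h5
  exact Fin.ext h5

def PhiPerm (τ : Equiv.Perm (Fin n)) : Equiv.Perm (Fin n) :=
  Equiv.ofBijective (PhiFun τ) (Finite.injective_iff_bijective.mp (PhiFun_injective τ))

theorem word_PhiPerm (τ : Equiv.Perm (Fin n)) : word n (PhiPerm τ) = phi (word n τ) := by
  apply List.ext_get
  · rw [word_length, phi_word_length]
  · intro i h1 h2
    rw [word_get _ i (by rwa [word_length] at h1)]
    show ((PhiFun τ) _ : ℕ) = _
    rw [PhiFun]
    simp only
    rw [List.getD_eq_getElem _ _ h2, List.get_eq_getElem]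

theorem invNum_PhiPerm (τ : Equiv.Perm (Fin n)) : invNum n (PhiPerm τ) = majNum n τ := by
  rw [invNum_eq, word_PhiPerm, inv_phi, ← majNum_eq]

theorem desSet_PhiPerm (τ : Equiv.Perm (Fin n)) :
    desSet n (PhiPerm τ)⁻¹ = desSet n τ⁻¹ := by
  ext i
  rw [mem_desSet_inv, mem_desSet_inv, word_PhiPerm]
  constructor
  · rintro ⟨h1, h2⟩
    exact ⟨h1, (phi_before_iff (word_nodup τ) (Or.inr rfl) ((word_mem τ).mpr (by omega))
      ((word_mem τ).mpr (by omega))).mpr h2⟩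
  · rintro ⟨h1, h2⟩
    exact ⟨h1, (phi_before_iff (word_nodup τ) (Or.inr rfl) ((word_mem τ).mpr (by omega))
      ((word_mem τ).mpr (by omega))).mp h2⟩

theorem PhiPerm_injective : Function.Injective (PhiPerm (n := n)) := by
  intro τ₁ τ₂ h
  apply word_inj
  apply phi_injective
  rw [← word_PhiPerm, ← word_PhiPerm, h]

end FSproof

open FSproof in
theorem inv_maj_inverse_equidistributed_on_descent_classes (n : ℕ) (J : Finset ℕ) :
    (∑ σ ∈ Finset.univ.filter (fun σ : Equiv.Perm (Fin n) => desSet n σ = J),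
      (Polynomial.X : Polynomial ℤ) ^ invNum n σ) =
    ∑ σ ∈ Finset.univ.filter (fun σ : Equiv.Perm (Fin n) => desSet n σ = J),
      (Polynomial.X : Polynomial ℤ) ^ majNum n σ⁻¹ := by
  have reindex : ∀ F : Equiv.Perm (Fin n) → Polynomial ℤ,
      ∑ σ ∈ Finset.univ.filter (fun σ : Equiv.Perm (Fin n) => desSet n σ = J), F σ
        = ∑ τ ∈ Finset.univ.filter (fun τ : Equiv.Perm (Fin n) => desSet n τ⁻¹ = J), F τ⁻¹ := by
    intro F
    apply Finset.sum_bij (i := fun σ _ => σ⁻¹)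
    · intro a ha
      rw [Finset.mem_filter] at ha ⊢
      exact ⟨Finset.mem_univ _, by rw [inv_inv]; exact ha.2⟩
    · intro a₁ _ a₂ _ h
      exact inv_injective h
    · intro b hb
      rw [Finset.mem_filter] at hb
      exact ⟨b⁻¹, Finset.mem_filter.mpr ⟨Finset.mem_univ _, hb.2⟩, rfl⟩
    · intro a _
      rw [inv_inv]
  rw [reindex (fun σ => (Polynomial.X : Polynomial ℤ) ^ invNum n σ),
    reindex (fun σ => (Polynomial.X : Polynomial ℤ) ^ majNum n σ⁻¹)]
  have lhs_eq : ∀ τ : Equiv.Perm (Fin n),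
      (Polynomial.X : Polynomial ℤ) ^ invNum n τ⁻¹ = (Polynomial.X : Polynomial ℤ) ^ invNum n τ := by
    intro τ; rw [← invNum_inv]
  have rhs_eq : ∀ τ : Equiv.Perm (Fin n),
      (Polynomial.X : Polynomial ℤ) ^ majNum n (τ⁻¹)⁻¹ = (Polynomial.X : Polynomial ℤ) ^ majNum n τ := by
    intro τ; rw [inv_inv]
  rw [Finset.sum_congr rfl (fun τ _ => lhs_eq τ), Finset.sum_congr rfl (fun τ _ => rhs_eq τ)]
  -- now : Σ_{desSet τ⁻¹ = J} X^{inv τ} = Σ_{desSet τ⁻¹ = J} X^{maj τ}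
  symm
  apply Finset.sum_bij (i := fun τ _ => PhiPerm τ)
  · intro a ha
    rw [Finset.mem_filter] at ha ⊢
    exact ⟨Finset.mem_univ _, by rw [desSet_PhiPerm]; exact ha.2⟩
  · intro a₁ _ a₂ _ h
    exact PhiPerm_injective h
  · intro b hb
    obtain ⟨a, ha, hab⟩ := Finset.surj_on_of_inj_on_of_card_le (fun τ _ => PhiPerm τ)
      (fun a ha => by
        rw [Finset.mem_filter] at ha ⊢
        exact ⟨Finset.mem_univ _, by rw [desSet_PhiPerm]; exact ha.2⟩)
      (fun a₁ a₂ _ _ h => PhiPerm_injective h) (le_refl _) b hb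
    exact ⟨a, ha, hab.symm⟩
  · intro a _
    rw [invNum_PhiPerm]
end
end

section
/- The derangement polynomial D_n(t) = Σ_{σ ∈ D_n} t^{exc(σ)} is palindromic of degree n (with center of symmetry n/2) and unimodal for every n ≥ 2. -/
open Finset Polynomial

open scoped Classical

noncomputable section

/-- The derangement polynomial `D_n(t) = ∑ t^{exc σ}` over fixed-point-free `σ ∈ S_n`. -/
def derangePoly (n : ℕ) : Polynomial ℤ :=
  ∑ σ ∈ Finset.univ.filter (fun σ : Equiv.Perm (Fin n) => ∀ i, σ i ≠ i),
    X ^ excNum n σ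

section Aux
open Equiv

def Ex {m : ℕ} (τ : Perm (Fin m)) : ℕ :=
  (Finset.univ.filter fun i : Fin m => (i : ℕ) < (τ i : ℕ)).card

def Nd (m k : ℕ) : ℕ :=
  (Finset.univ.filter fun σ : Perm (Fin m) => (∀ i, σ i ≠ i) ∧ Ex σ = k).card

lemma excNum_eq (m : ℕ) (σ : Perm (Fin m)) : excNum m σ = Ex σ := by
  unfold excNum Ex
  apply Finset.card_bij (fun i hi => (⟨i, (Finset.mem_filter.1 hi).1 |> Finset.mem_range.1⟩ : Fin m))
  · intro a ha
    simp only [Finset.mem_filter, Finset.mem_range] at ha ⊢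
    refine ⟨Finset.mem_univ _, ?_⟩
    have := ha.2
    simpa [pv, ha.1] using this
  · intro a ha b hb h
    simpa using congrArg Fin.val h
  · intro b hb
    simp only [Finset.mem_filter] at hb
    exact ⟨(b : ℕ), Finset.mem_filter.2 ⟨Finset.mem_range.2 b.isLt, by simpa [pv, b.isLt] using hb.2⟩, by simp⟩

lemma coeff_derangePoly (m k : ℕ) : (derangePoly m).coeff k = (Nd m k : ℤ) := by
  unfold derangePoly Nd
  rw [Polynomial.finset_sum_coeff]
  simp only [Polynomial.coeff_X_pow, excNum_eq]
  rw [Finset.sum_ite, Finset.sum_const_zero, add_zero, Finset.sum_const, nsmul_eq_mul, mul_one,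
    Finset.filter_filter]
  norm_cast
  congr 1
  apply Finset.filter_congr
  intro x _
  simp [eq_comm, and_comm]

lemma ex_inv {m : ℕ} (σ : Perm (Fin m)) (hσ : ∀ i, σ i ≠ i) : Ex σ + Ex σ⁻¹ = m := by
  have h1 : Ex σ⁻¹ = (Finset.univ.filter fun i : Fin m => (σ i : ℕ) < (i : ℕ)).card := by
    unfold Ex
    apply Finset.card_bij (fun i _ => σ⁻¹ i)
    · intro a ha
      simp only [Finset.mem_filter, Finset.mem_univ, true_and] at ha ⊢
      simpa using ha
    · intro a _ b _ h; simpa using h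
    · intro b hb
      simp only [Finset.mem_filter, Finset.mem_univ, true_and] at hb
      exact ⟨σ b, Finset.mem_filter.2 ⟨Finset.mem_univ _, by simpa using hb⟩, by simp⟩
  rw [h1]
  unfold Ex
  rw [← Finset.card_union_of_disjoint (by
    simp only [Finset.disjoint_filter]
    intro x _ h1 h2
    omega)]
  rw [← Finset.filter_or]
  rw [Finset.filter_true_of_mem (fun x _ => by
    have := hσ x
    have : (σ x : ℕ) ≠ (x : ℕ) := fun h => (hσ x) (Fin.ext h)
    omega)]
  simp

lemma Nd_symm (m k : ℕ) (hk : k ≤ m) : Nd m k = Nd m (m - k) := by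
  unfold Nd
  apply Finset.card_bij (fun σ _ => σ⁻¹)
  · intro σ hσ
    simp only [Finset.mem_filter, Finset.mem_univ, true_and] at hσ ⊢
    obtain ⟨hd, he⟩ := hσ
    have hd' : ∀ i, σ⁻¹ i ≠ i := by
      intro i h
      exact hd i (by conv_lhs => rw [← h]; simp)
    refine ⟨hd', ?_⟩
    have := ex_inv σ hd
    omega
  · intro a _ b _ h; simpa using congrArg Inv.inv h
  · intro σ hσ
    simp only [Finset.mem_filter, Finset.mem_univ, true_and] at hσ
    obtain ⟨hd, he⟩ := hσ
    have hd' : ∀ i, σ⁻¹ i ≠ i := by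
      intro i h
      exact hd i (by conv_lhs => rw [← h]; simp)
    refine ⟨σ⁻¹, Finset.mem_filter.2 ⟨Finset.mem_univ _, hd', ?_⟩, by simp⟩
    have := ex_inv σ⁻¹ hd'
    simp only [inv_inv] at this
    omega

-- helper: value of swap 0 q at a nonzero point
lemma swap_succ_eval {n : ℕ} (q : Fin (n + 2)) (x : Fin (n + 1)) (hq : q ≠ 0) :
    Equiv.swap 0 q x.succ = if x.succ = q then 0 else x.succ := by
  split_ifs with h
  · rw [h]; exact Equiv.swap_apply_right 0 q
  · exact Equiv.swap_apply_of_ne_of_ne (Fin.succ_ne_zero x) h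

lemma derang_decomp {n : ℕ} (q : Fin (n + 2)) (τ : Perm (Fin (n + 1))) :
    (∀ i, Equiv.Perm.decomposeFin.symm (q, τ) i ≠ i) ↔
      (q ≠ 0 ∧ ∀ i, τ i = i → i.succ = q) := by
  constructor
  · intro h
    have hq : q ≠ 0 := by
      have := h 0
      rwa [Equiv.Perm.decomposeFin_symm_apply_zero] at this
    refine ⟨hq, fun i hi => ?_⟩
    by_contra hne
    have := h i.succ
    rw [Equiv.Perm.decomposeFin_symm_apply_succ, hi, swap_succ_eval _ _ hq, if_neg hne] at this
    exact this rfl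
  · rintro ⟨hq, hfix⟩ i
    refine Fin.cases ?_ ?_ i
    · rw [Equiv.Perm.decomposeFin_symm_apply_zero]; exact hq
    · intro x
      rw [Equiv.Perm.decomposeFin_symm_apply_succ, swap_succ_eval _ _ hq]
      split_ifs with h
      · exact (Fin.succ_ne_zero x).symm
      · intro hc
        have hx : τ x = x := Fin.succ_injective _ hc
        exact h (hc.trans (hfix x hx))

lemma ex_decomp {n : ℕ} (q : Fin (n + 2)) (τ : Perm (Fin (n + 1))) (hq : q ≠ 0) :
    Ex (Equiv.Perm.decomposeFin.symm (q, τ)) =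
      (if ((τ⁻¹ (q.pred hq) : ℕ) < ((q.pred hq) : ℕ)) then Ex τ else Ex τ + 1) := by
  set σ := Equiv.Perm.decomposeFin.symm (q, τ) with hσ
  set p : Fin (n + 1) := τ⁻¹ (q.pred hq) with hp
  have hτp : τ p = q.pred hq := by simp [hp]
  have hqkey : ∀ i : Fin (n + 1), ((τ i).succ = q ↔ i = p) := by
    intro i
    constructor
    · intro h
      have h2 : (τ i).succ = (q.pred hq).succ := by rw [h, Fin.succ_pred]
      have : τ i = q.pred hq := Fin.succ_injective _ h2
      apply τ.injective; rw [this, hτp]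
    · rintro rfl; rw [hτp, Fin.succ_pred]
  have hstep : Ex σ = 1 + (Finset.univ.filter fun i : Fin (n + 1) =>
      ((i : ℕ) < (τ i : ℕ)) ∧ (τ i).succ ≠ q).card := by
    unfold Ex
    rw [Finset.card_filter, Fin.sum_univ_succ, Finset.card_filter]
    congr 1
    · rw [if_pos]
      show (0 : ℕ) < ((σ 0 : Fin (n+2)) : ℕ)
      rw [hσ, Equiv.Perm.decomposeFin_symm_apply_zero]
      exact Nat.pos_of_ne_zero (fun h => hq (Fin.ext h))
    · apply Finset.sum_congr rfl
      intro x _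
      rw [hσ, Equiv.Perm.decomposeFin_symm_apply_succ, swap_succ_eval _ _ hq]
      by_cases h : (τ x).succ = q
      · rw [if_pos h, if_neg (by simp), if_neg (by simp [h])]
      · rw [if_neg h]
        simp only [Fin.val_succ, h, ne_eq, not_false_iff, and_true]
        congr 1
        simp [Nat.succ_lt_succ_iff]
  have hfilt : (Finset.univ.filter fun i : Fin (n + 1) =>
      ((i : ℕ) < (τ i : ℕ)) ∧ (τ i).succ ≠ q) =
      (Finset.univ.filter fun i : Fin (n + 1) => (i : ℕ) < (τ i : ℕ)).erase p := by
    ext i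
    simp only [Finset.mem_filter, Finset.mem_univ, true_and, Finset.mem_erase]
    have h := hqkey i
    tauto
  rw [hstep, hfilt]
  by_cases hpe : (p : ℕ) < ((q.pred hq) : ℕ)
  · rw [if_pos hpe]
    have hmem : p ∈ (Finset.univ.filter fun i : Fin (n + 1) => (i : ℕ) < (τ i : ℕ)) := by
      simp only [Finset.mem_filter, Finset.mem_univ, true_and, hτp]
      exact hpe
    rw [Finset.card_erase_of_mem hmem]
    unfold Ex
    have : 1 ≤ (Finset.univ.filter fun i : Fin (n + 1) => (i : ℕ) < (τ i : ℕ)).card :=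
      Finset.card_pos.2 ⟨p, hmem⟩
    omega
  · rw [if_neg hpe, Finset.erase_eq_of_notMem (by simp only [Finset.mem_filter, Finset.mem_univ, true_and, hτp]; exact hpe), Nat.add_comm]
    rfl

def Qc (n k : ℕ) (τ : Perm (Fin (n + 1))) : ℕ :=
  (Finset.univ.filter fun q : Fin (n + 2) =>
    (∀ i, Equiv.Perm.decomposeFin.symm (q, τ) i ≠ i) ∧
      Ex (Equiv.Perm.decomposeFin.symm (q, τ)) = k + 1).card

lemma Qc_derangement (n k : ℕ) (τ : Perm (Fin (n + 1))) (hd : ∀ i, τ i ≠ i) :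
    Qc n k τ = if Ex τ = k + 1 then k + 1 else if Ex τ = k then (n + 1) - k else 0 := by
  have step : Qc n k τ = (Finset.univ.filter fun p : Fin (n + 1) =>
      (if (p : ℕ) < (τ p : ℕ) then Ex τ else Ex τ + 1) = k + 1).card := by
    unfold Qc
    refine (Finset.card_bij (fun p _ => (τ p).succ) ?_ ?_ ?_).symm
    · intro p hp
      simp only [Finset.mem_filter, Finset.mem_univ, true_and] at hp ⊢
      have hq : ((τ p).succ : Fin (n + 2)) ≠ 0 := Fin.succ_ne_zero _
      rw [derang_decomp, ex_decomp _ _ hq]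
      refine ⟨⟨hq, fun i hi => absurd hi (hd i)⟩, ?_⟩
      have hpred : ((τ p).succ : Fin (n+2)).pred hq = τ p := Fin.pred_succ _
      rw [hpred]
      simpa using hp
    · intro a _ b _ h
      exact τ.injective (Fin.succ_injective _ h)
    · intro q hq'
      simp only [Finset.mem_filter, Finset.mem_univ, true_and] at hq'
      rw [derang_decomp] at hq'
      obtain ⟨⟨hq, _⟩, he⟩ := hq'
      refine ⟨τ⁻¹ (q.pred hq), Finset.mem_filter.2 ⟨Finset.mem_univ _, ?_⟩, ?_⟩
      · rw [ex_decomp _ _ hq] at he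
        simpa using he
      · simp [Fin.succ_pred]
  rw [step]
  by_cases h1 : Ex τ = k + 1
  · rw [if_pos h1]
    have heq : (Finset.univ.filter fun p : Fin (n + 1) =>
        (if (p : ℕ) < (τ p : ℕ) then Ex τ else Ex τ + 1) = k + 1)
        = (Finset.univ.filter fun p : Fin (n + 1) => (p : ℕ) < (τ p : ℕ)) := by
      apply Finset.filter_congr
      intro p _
      by_cases hp : (p : ℕ) < (τ p : ℕ)
      · rw [if_pos hp, h1]; simp [hp]
      · rw [if_neg hp, h1]
        constructor
        · intro h; omega
        · intro h; exact absurd h hp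
    rw [heq]; exact h1
  · rw [if_neg h1]
    by_cases h2 : Ex τ = k
    · rw [if_pos h2]
      have heq : (Finset.univ.filter fun p : Fin (n + 1) =>
          (if (p : ℕ) < (τ p : ℕ) then Ex τ else Ex τ + 1) = k + 1) =
          (Finset.univ.filter fun p : Fin (n + 1) => ¬ ((p : ℕ) < (τ p : ℕ))) := by
        apply Finset.filter_congr
        intro p _
        by_cases hp : (p : ℕ) < (τ p : ℕ)
        · rw [if_pos hp, h2]
          constructor
          · intro h; omega
          · intro h; exact absurd hp h
        · rw [if_neg hp, h2]
          constructor
          · intro _; exact hp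
          · intro _; rfl
      rw [heq]
      have htot := Finset.card_filter_add_card_filter_not
        (s := (Finset.univ : Finset (Fin (n+1)))) (p := fun p : Fin (n+1) => (p : ℕ) < (τ p : ℕ))
      have hEx : (Finset.univ.filter fun p : Fin (n+1) => (p : ℕ) < (τ p : ℕ)).card = k := h2
      simp only [Finset.card_univ, Fintype.card_fin] at htot
      omega
    · rw [if_neg h2]
      rw [Finset.card_eq_zero, Finset.filter_eq_empty_iff]
      intro p _
      by_cases hp : (p : ℕ) < (τ p : ℕ)
      · rw [if_pos hp]; exact h1
      · rw [if_neg hp]; omega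

lemma Qc_fixed (n k : ℕ) (τ : Perm (Fin (n + 1))) (i₀ : Fin (n + 1)) (h0 : τ i₀ = i₀) :
    Qc n k τ = if ((∀ i, τ i = i → i = i₀) ∧ Ex τ = k) then 1 else 0 := by
  have hex : ∀ (hq : (i₀.succ : Fin (n+2)) ≠ 0),
      Ex (Equiv.Perm.decomposeFin.symm (i₀.succ, τ)) = Ex τ + 1 := by
    intro hq
    rw [ex_decomp _ _ hq]
    have hpred : ((i₀.succ : Fin (n+2)).pred hq) = i₀ := Fin.pred_succ _
    rw [hpred]
    have : τ⁻¹ i₀ = i₀ := Equiv.Perm.inv_eq_iff_eq.2 h0.symm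
    rw [this, if_neg (lt_irrefl _)]
  have hsub : ∀ q ∈ (Finset.univ.filter fun q : Fin (n + 2) =>
      (∀ i, Equiv.Perm.decomposeFin.symm (q, τ) i ≠ i) ∧
        Ex (Equiv.Perm.decomposeFin.symm (q, τ)) = k + 1), q = i₀.succ := by
    intro q hq
    simp only [Finset.mem_filter, Finset.mem_univ, true_and] at hq
    rw [derang_decomp] at hq
    exact (hq.1.2 i₀ h0).symm
  split_ifs with hcond
  · obtain ⟨huniq, hek⟩ := hcond
    unfold Qc
    rw [Finset.card_eq_one]
    refine ⟨i₀.succ, ?_⟩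
    apply Finset.eq_singleton_iff_unique_mem.2
    constructor
    · simp only [Finset.mem_filter, Finset.mem_univ, true_and]
      rw [derang_decomp]
      have hq : (i₀.succ : Fin (n+2)) ≠ 0 := Fin.succ_ne_zero _
      refine ⟨⟨hq, fun i hi => by rw [huniq i hi]⟩, ?_⟩
      rw [hex hq, hek]
    · exact hsub
  · unfold Qc
    rw [Finset.card_eq_zero, Finset.filter_eq_empty_iff]
    intro q _
    by_contra hc
    have hq' : q = i₀.succ := by
      apply hsub
      simp only [Finset.mem_filter, Finset.mem_univ, true_and]
      exact hc
    subst hq'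
    obtain ⟨hder, he⟩ := hc
    rw [derang_decomp] at hder
    apply hcond
    constructor
    · intro i hi
      have := hder.2 i hi
      exact Fin.succ_injective _ this
    · have := hex hder.1
      rw [this] at he
      omega

/-- extension of a perm of `Fin n` to `Fin (n+1)` fixing `i₀`. -/
def extAt {n : ℕ} (i₀ : Fin (n + 1)) (ρ : Perm (Fin n)) : Perm (Fin (n + 1)) :=
  ((finSuccEquiv' i₀).symm.permCongr ρ.optionCongr)

lemma extAt_pivot {n : ℕ} (i₀ : Fin (n + 1)) (ρ : Perm (Fin n)) : extAt i₀ ρ i₀ = i₀ := by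
  simp [extAt, Equiv.permCongr_apply, finSuccEquiv'_at]

lemma extAt_succAbove {n : ℕ} (i₀ : Fin (n + 1)) (ρ : Perm (Fin n)) (j : Fin n) :
    extAt i₀ ρ (i₀.succAbove j) = i₀.succAbove (ρ j) := by
  simp [extAt, Equiv.permCongr_apply, finSuccEquiv'_succAbove, finSuccEquiv'_symm_some]

lemma ex_extAt {n : ℕ} (i₀ : Fin (n + 1)) (ρ : Perm (Fin n)) : Ex (extAt i₀ ρ) = Ex ρ := by
  unfold Ex
  refine (Finset.card_bij (fun x _ => i₀.succAbove x) ?_ ?_ ?_).symm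
  · intro j hj
    simp only [Finset.mem_filter, Finset.mem_univ, true_and] at hj ⊢
    rw [extAt_succAbove]
    exact_mod_cast Fin.succAbove_lt_succAbove_iff.2 (by exact_mod_cast hj)
  · intro a _ b _ h; exact Fin.succAbove_right_injective h
  · intro x hx
    simp only [Finset.mem_filter, Finset.mem_univ, true_and] at hx
    have hne : x ≠ i₀ := by
      rintro rfl
      rw [extAt_pivot] at hx; omega
    obtain ⟨j, rfl⟩ := Fin.exists_succAbove_eq hne
    refine ⟨j, Finset.mem_filter.2 ⟨Finset.mem_univ _, ?_⟩, rfl⟩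
    rw [extAt_succAbove] at hx
    exact_mod_cast Fin.succAbove_lt_succAbove_iff.1 (by exact_mod_cast hx)

lemma card_fix_single (n k : ℕ) (i₀ : Fin (n + 1)) :
    (Finset.univ.filter fun τ : Perm (Fin (n + 1)) =>
      (∀ i, τ i = i ↔ i = i₀) ∧ Ex τ = k).card = Nd n k := by
  unfold Nd
  refine (Finset.card_bij (fun ρ _ => extAt i₀ ρ) ?_ ?_ ?_).symm
  · intro ρ hρ
    simp only [Finset.mem_filter, Finset.mem_univ, true_and] at hρ ⊢
    obtain ⟨hd, he⟩ := hρ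
    constructor
    · intro i
      constructor
      · intro hfix
        by_contra hne
        obtain ⟨j, rfl⟩ := Fin.exists_succAbove_eq hne
        rw [extAt_succAbove] at hfix
        exact hd j (Fin.succAbove_right_injective hfix)
      · rintro rfl; exact extAt_pivot _ _
    · rw [ex_extAt]; exact he
  · intro a _ b _ h
    apply Equiv.ext
    intro j
    have := congrArg (fun (e : Perm (Fin (n+1))) => e (i₀.succAbove j)) h
    simp only [extAt_succAbove] at this
    exact Fin.succAbove_right_injective this
  · intro τ hτ
    simp only [Finset.mem_filter, Finset.mem_univ, true_and] at hτ
    obtain ⟨hfix, he⟩ := hτ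
    -- build ρ via removeNone
    set π : Perm (Option (Fin n)) := (finSuccEquiv' i₀).permCongr τ with hπ
    have hπn : π none = none := by
      simp [hπ, Equiv.permCongr_apply, (hfix i₀).2 rfl, finSuccEquiv'_at]
    set ρ := Equiv.removeNone π with hρ
    have hback : ρ.optionCongr = π := by
      have := map_equiv_removeNone π
      rw [hπn, Equiv.swap_self, ← Equiv.Perm.one_def, one_mul] at this
      exact this
    have hext : extAt i₀ ρ = τ := by
      unfold extAt
      rw [hback, hπ]
      ext x
      simp [Equiv.permCongr_apply]
    refine ⟨ρ, Finset.mem_filter.2 ⟨Finset.mem_univ _, ?_, ?_⟩, hext⟩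
    · intro j hj
      have : extAt i₀ ρ (i₀.succAbove j) = i₀.succAbove j := by
        rw [extAt_succAbove, hj]
      rw [hext] at this
      exact Fin.succAbove_ne i₀ j ((hfix _).1 this)
    · rw [← he, ← hext, ex_extAt]

lemma Nd_rec (n k : ℕ) :
    Nd (n + 2) (k + 1) =
      (k + 1) * Nd (n + 1) (k + 1) + ((n + 1) - k) * Nd (n + 1) k + (n + 1) * Nd n k := by
  classical
  set P : Fin (n + 2) × Perm (Fin (n + 1)) → Prop := fun x =>
    (∀ i, Equiv.Perm.decomposeFin.symm x i ≠ i) ∧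
      Ex (Equiv.Perm.decomposeFin.symm x) = k + 1 with hP
  have h1 : Nd (n + 2) (k + 1) = (Finset.univ.filter P).card := by
    unfold Nd
    apply Finset.card_bij (fun σ _ => Equiv.Perm.decomposeFin σ)
    · intro σ hσ
      simp only [Finset.mem_filter, Finset.mem_univ, true_and] at hσ ⊢
      rw [hP]
      simp only [Equiv.symm_apply_apply]
      exact hσ
    · intro a _ b _ h
      exact Equiv.Perm.decomposeFin.injective h
    · intro x hx
      simp only [Finset.mem_filter, Finset.mem_univ, true_and, hP] at hx
      exact ⟨Equiv.Perm.decomposeFin.symm x, Finset.mem_filter.2 ⟨Finset.mem_univ _, hx⟩,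
        Equiv.apply_symm_apply _ _⟩
  have h2 : (Finset.univ.filter P).card =
      ∑ τ : Perm (Fin (n + 1)), ((Finset.univ.filter P).filter fun x => x.2 = τ).card :=
    Finset.card_eq_sum_card_fiberwise (fun x _ => Finset.mem_univ _)
  have h3 : ∀ τ : Perm (Fin (n + 1)),
      ((Finset.univ.filter P).filter fun x => x.2 = τ).card = Qc n k τ := by
    intro τ
    unfold Qc
    apply Finset.card_bij (fun x _ => x.1)
    · rintro ⟨q, τ'⟩ hx
      simp only [Finset.mem_filter, Finset.mem_univ, true_and] at hx ⊢
      obtain ⟨hp, rfl⟩ := hx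
      exact hp
    · rintro ⟨a1, a2⟩ ha ⟨b1, b2⟩ hb h
      simp only [Finset.mem_filter] at ha hb
      simp only at h
      rw [Prod.ext_iff]
      exact ⟨h, ha.2.trans hb.2.symm⟩
    · intro q hq
      simp only [Finset.mem_filter, Finset.mem_univ, true_and] at hq
      exact ⟨(q, τ), Finset.mem_filter.2 ⟨Finset.mem_filter.2 ⟨Finset.mem_univ _, hq⟩, rfl⟩, rfl⟩
  rw [h1, h2]
  simp only [h3]
  rw [← Finset.sum_filter_add_sum_filter_not Finset.univ (fun τ : Perm (Fin (n+1)) => ∀ i, τ i ≠ i)]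
  have hA : ∑ τ ∈ Finset.univ.filter (fun τ : Perm (Fin (n+1)) => ∀ i, τ i ≠ i), Qc n k τ =
      (k + 1) * Nd (n + 1) (k + 1) + ((n + 1) - k) * Nd (n + 1) k := by
    rw [Finset.sum_congr rfl (fun τ hτ => Qc_derangement n k τ (Finset.mem_filter.1 hτ).2)]
    have hsplit : ∀ τ : Perm (Fin (n+1)),
        (if Ex τ = k + 1 then k + 1 else if Ex τ = k then (n + 1) - k else 0) =
          (if Ex τ = k + 1 then k + 1 else 0) + (if Ex τ = k then (n + 1) - k else 0) := by
      intro τ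
      by_cases e1 : Ex τ = k + 1
      · rw [if_pos e1, if_pos e1, if_neg (by omega), add_zero]
      · rw [if_neg e1, if_neg e1, zero_add]
    rw [Finset.sum_congr rfl (fun τ _ => hsplit τ), Finset.sum_add_distrib]
    congr 1
    · rw [← Finset.sum_filter, Finset.filter_filter, Finset.sum_const, smul_eq_mul]
      rw [mul_comm]
      rfl
    · rw [← Finset.sum_filter, Finset.filter_filter, Finset.sum_const, smul_eq_mul]
      rw [mul_comm]
      rfl
  have hB : ∑ τ ∈ Finset.univ.filter (fun τ : Perm (Fin (n+1)) => ¬ ∀ i, τ i ≠ i), Qc n k τ =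
      (n + 1) * Nd n k := by
    have hQ : ∀ τ ∈ Finset.univ.filter (fun τ : Perm (Fin (n+1)) => ¬ ∀ i, τ i ≠ i),
        Qc n k τ = if (∃ j, (∀ i, τ i = i ↔ i = j) ∧ Ex τ = k) then 1 else 0 := by
      intro τ hτ
      simp only [Finset.mem_filter, Finset.mem_univ, true_and, not_forall, not_not] at hτ
      obtain ⟨i₀, h0⟩ := hτ
      rw [Qc_fixed n k τ i₀ h0]
      congr 1
      apply propext
      constructor
      · rintro ⟨huniq, he⟩
        exact ⟨i₀, fun i => ⟨huniq i, fun h => h ▸ h0⟩, he⟩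
      · rintro ⟨j, hj, he⟩
        have hji : i₀ = j := (hj i₀).1 h0
        exact ⟨fun i hi => ((hj i).1 hi).trans hji.symm, he⟩
    rw [Finset.sum_congr rfl hQ, ← Finset.card_filter, Finset.filter_filter]
    have hcf : (Finset.univ.filter fun τ : Perm (Fin (n+1)) =>
        (¬ ∀ i, τ i ≠ i) ∧ ∃ j, (∀ i, τ i = i ↔ i = j) ∧ Ex τ = k) =
        Finset.univ.filter fun τ : Perm (Fin (n+1)) =>
          ∃ j, (∀ i, τ i = i ↔ i = j) ∧ Ex τ = k := by
      apply Finset.filter_congr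
      intro τ _
      constructor
      · exact fun h => h.2
      · rintro ⟨j, hj, he⟩
        exact ⟨fun h => h j ((hj j).2 rfl), j, hj, he⟩
    rw [hcf]
    have hbi : (Finset.univ.filter fun τ : Perm (Fin (n+1)) =>
        ∃ j, (∀ i, τ i = i ↔ i = j) ∧ Ex τ = k) =
        Finset.univ.biUnion (fun j : Fin (n+1) =>
          Finset.univ.filter fun τ : Perm (Fin (n+1)) =>
            (∀ i, τ i = i ↔ i = j) ∧ Ex τ = k) := by
      ext τ
      simp [Finset.mem_biUnion]
    rw [hbi, Finset.card_biUnion]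
    · rw [Finset.sum_congr rfl (fun j _ => card_fix_single n k j), Finset.sum_const,
        Finset.card_univ, Fintype.card_fin, smul_eq_mul]
    · intro a _ b _ hab
      apply Finset.disjoint_left.2
      intro τ hτa hτb
      simp only [Finset.mem_filter, Finset.mem_univ, true_and] at hτa hτb
      exact hab (((hτa.1 a).2 rfl) |> (hτb.1 a).1)
  rw [hA, hB]

lemma Nd_zero (m : ℕ) (hm : 1 ≤ m) : Nd m 0 = 0 := by
  unfold Nd
  rw [Finset.card_eq_zero, Finset.filter_eq_empty_iff]
  rintro σ _ ⟨hd, he⟩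
  unfold Ex at he
  rw [Finset.card_eq_zero, Finset.filter_eq_empty_iff] at he
  have h0 := he (Finset.mem_univ (⟨0, hm⟩ : Fin m))
  simp only [not_lt, Nat.le_zero] at h0
  exact hd ⟨0, hm⟩ (Fin.ext h0)

lemma Nd_gt (m k : ℕ) (hk : m < k) : Nd m k = 0 := by
  unfold Nd
  rw [Finset.card_eq_zero, Finset.filter_eq_empty_iff]
  rintro σ _ ⟨hd, he⟩
  have : Ex σ ≤ m := by
    unfold Ex
    calc _ ≤ (Finset.univ : Finset (Fin m)).card := Finset.card_filter_le _ _
    _ = m := by simp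
  omega

lemma Nd_mono : ∀ m k, 2 * (k + 1) ≤ m → Nd m k ≤ Nd m (k + 1) := by
  intro m
  induction m using Nat.strong_induction_on with
  | _ m ih =>
    intro k hk
    have key : ∀ m' k', m' < m → 2 * (k' + 1) ≤ m' + 1 → Nd m' k' ≤ Nd m' (k' + 1) := by
      intro m' k' hlt h
      by_cases hc : 2 * (k' + 1) ≤ m'
      · exact ih m' hlt k' hc
      · have hm' : 2 * (k' + 1) = m' + 1 := by omega
        have : Nd m' (k' + 1) = Nd m' (m' - (k' + 1)) := Nd_symm m' (k' + 1) (by omega)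
        rw [this]
        have : m' - (k' + 1) = k' := by omega
        rw [this]
    match k with
    | 0 =>
      rw [Nd_zero m (by omega)]
      exact Nat.zero_le _
    | (k' + 1) =>
      obtain ⟨n, rfl⟩ : ∃ n, m = n + 2 := ⟨m - 2, by omega⟩
      have ha1 : Nd (n + 1) (k' + 1) ≤ Nd (n + 1) (k' + 2) :=
        key (n + 1) (k' + 1) (by omega) (by omega)
      have ha0 : Nd (n + 1) k' ≤ Nd (n + 1) (k' + 1) :=
        key (n + 1) k' (by omega) (by omega)
      have hb0 : Nd n k' ≤ Nd n (k' + 1) := key n k' (by omega) (by omega)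
      rw [Nd_rec n k', Nd_rec n (k' + 1)]
      have hs : (n + 1) - k' = (n - k') + 1 := by omega
      have hs2 : (n + 1) - (k' + 1) = n - k' := by omega
      rw [hs, hs2]
      calc (k' + 1) * Nd (n+1) (k'+1) + (n - k' + 1) * Nd (n+1) k' + (n+1) * Nd n k'
          ≤ (k' + 1) * Nd (n+1) (k'+1) + (n - k' + 1) * Nd (n+1) (k'+1) + (n+1) * Nd n (k'+1) := by
            gcongr
        _ = (k' + 1 + 1) * Nd (n+1) (k'+1) + (n - k') * Nd (n+1) (k'+1) + (n+1) * Nd n (k'+1) := by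
            ring
        _ ≤ (k' + 1 + 1) * Nd (n+1) (k'+2) + (n - k') * Nd (n+1) (k'+1) + (n+1) * Nd n (k'+1) := by
            gcongr

lemma Nd_mono' (n : ℕ) : ∀ i j, i ≤ j → 2 * j ≤ n + 1 → Nd n i ≤ Nd n j := by
  intro i j
  induction j with
  | zero =>
    intro hij _
    have : i = 0 := by omega
    rw [this]
  | succ j ihj =>
    intro hij hj
    rcases Nat.eq_or_lt_of_le hij with rfl | hlt
    · exact le_refl _
    · have h1 : Nd n i ≤ Nd n j := ihj (by omega) (by omega)
      refine h1.trans ?_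
      by_cases hc : 2 * (j + 1) ≤ n
      · exact Nd_mono n j hc
      · have hm' : 2 * (j + 1) = n + 1 := by omega
        have hsym : Nd n (j + 1) = Nd n (n - (j + 1)) := Nd_symm n (j + 1) (by omega)
        rw [hsym]
        have : n - (j + 1) = j := by omega
        rw [this]

end Aux

theorem derangement_palindromic_unimodal (n : ℕ) (hn : 2 ≤ n) :
    (∀ j ≤ n, (derangePoly n).coeff j = (derangePoly n).coeff (n - j)) ∧
    (∀ j, 0 ≤ (derangePoly n).coeff j) ∧
    ∃ c, (∀ i j, i ≤ j → j ≤ c → (derangePoly n).coeff i ≤ (derangePoly n).coeff j) ∧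
         (∀ i j, c ≤ i → i ≤ j → (derangePoly n).coeff j ≤ (derangePoly n).coeff i) := by
  refine ⟨?_, ?_, n / 2, ?_, ?_⟩
  · intro j hj
    rw [coeff_derangePoly, coeff_derangePoly]
    exact_mod_cast congrArg (Nat.cast : ℕ → ℤ) (Nd_symm n j hj)
  · intro j
    rw [coeff_derangePoly]
    exact_mod_cast Nat.zero_le _
  · intro i j hij hjc
    rw [coeff_derangePoly, coeff_derangePoly]
    exact_mod_cast Nd_mono' n i j hij (by omega)
  · intro i j hci hij
    rw [coeff_derangePoly, coeff_derangePoly]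
    by_cases hj : j ≤ n
    · rw [Nd_symm n j hj, Nd_symm n i (by omega)]
      exact_mod_cast Nd_mono' n (n - j) (n - i) (by omega) (by omega)
    · rw [Nd_gt n j (by omega)]
      exact_mod_cast Nat.zero_le _
end
end
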